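/- arXiv:2503.12639 — 10 statements merged into one kernel-verified Lean document; each statement's English description precedes it below -/
import Mathlib

section
/- Fix a ∈ ℝ, ε > 0, N ∈ ℕ, and B > b where b := √((|a| + ε²)/3). Let θ : ℝ → ℂ be Lebesgue integrable and bounded, and suppose there exist a function ψ defined on {λ ∈ ℝ : |λ| ≥ B} and a function φ holomorphic on an open subset of ℂ containing the closed set R := {z − iy : z ∈ ℝ, |z| ≥ B, 0 ≤ y ≤ ε}, such that: θ(λ) = φ(λ) + ψ(λ) for all real λ with |λ| ≥ B; there is K > 0 with |ψ(λ)| ≤ K·|λ|^(−N) for all real λ with |λ| ≥ B; and max_{y∈[0,ε]} |φ(C − iy)| → 0 as C → +∞ and as C → −∞. Then for every x ∈ ℝ and every t ≥ 0, the difference D(C) := ∫_{−C}^{C} E(λ;x,t)θ(λ) dλ − [ ∫_{−B}^{B} E(λ;x,t)θ(λ) dλ + ∫_{B}^{C} ( E(λ;x,t)ψ(λ) + E(−λ;x,t)ψ(−λ) ) dλ + ∫_{B}^{C} ( E(z−iε;x,t)φ(z−iε) + E(−z−iε;x,t)φ(−z−iε) ) dz + i∫_{0}^{ε} E(−B−iy;x,t)φ(−B−iy)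 dy − i∫_{0}^{ε} E(B−iy;x,t)φ(B−iy) dy ] tends to 0 as C → ∞. In particular, the principal-value integral lim_{C→∞} ∫_{−C}^{C} E(λ;x,t)θ(λ) dλ exists if and only if the bracketed expression has a limit as C → ∞, and then the two limits are equal. -/
open Complex Filter Set MeasureTheory intervalIntegral

noncomputable def E (a : ℝ) (lam : ℂ) (x t : ℝ) : ℂ :=
  Complex.exp (Complex.I * lam * x - Complex.I * (lam ^ 3 - (a : ℂ) * lam) * t)

lemma Ediff (a x t : ℝ) : Differentiable ℂ (fun w => E a w x t) := by
  unfold E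
  apply Differentiable.cexp
  fun_prop

lemma Enorm_real (a x t : ℝ) (lam : ℝ) : ‖E a lam x t‖ = 1 := by
  unfold E
  rw [Complex.norm_exp]
  have : (Complex.I * (lam:ℂ) * x - Complex.I * ((lam:ℂ) ^ 3 - (a : ℂ) * lam) * t).re = 0 := by
    simp [Complex.mul_re, Complex.mul_im, ← Complex.ofReal_pow]
  rw [this, Real.exp_zero]

lemma Ere (a x t c y : ℝ) :
    (Complex.I * ((c:ℂ) - Complex.I * y) * x -
      Complex.I * (((c:ℂ) - Complex.I * y) ^ 3 - (a : ℂ) * ((c:ℂ) - Complex.I * y)) * t).re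
      = y * x + t * (y^3 - 3*c^2*y + a*y) := by
  simp [Complex.mul_re, Complex.mul_im, pow_succ]
  ring

lemma Enorm_bound (a x t : ℝ) (ht : 0 ≤ t) (ε c y : ℝ) (hy0 : 0 ≤ y) (hyε : y ≤ ε)
    (h3 : |a| + ε^2 ≤ 3*c^2) :
    ‖E a ((c:ℂ) - Complex.I * y) x t‖ ≤ Real.exp (ε * |x|) := by
  unfold E
  rw [Complex.norm_exp, Ere]
  apply Real.exp_le_exp.2
  have h1 : y * x ≤ ε * |x| := by
    calc y * x ≤ |y * x| := le_abs_self _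
    _ = y * |x| := by rw [abs_mul, _root_.abs_of_nonneg hy0]
    _ ≤ ε * |x| := by nlinarith [abs_nonneg x]
  have h2 : t * (y^3 - 3*c^2*y + a*y) ≤ 0 := by
    apply mul_nonpos_of_nonneg_of_nonpos ht
    have he : y^3 - 3*c^2*y + a*y = y * (y^2 + a - 3*c^2) := by ring
    rw [he]
    apply mul_nonpos_of_nonneg_of_nonpos hy0
    nlinarith [le_abs_self a, neg_abs_le a]
  linarith

lemma rect_key (F : ℂ → ℂ) (U : Set ℂ) (hFd : DifferentiableOn ℂ F U)
    (p q ε : ℝ) (hε : 0 ≤ ε)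
    (hsub : ∀ u y : ℝ, u ∈ Set.uIcc p q → 0 ≤ y → y ≤ ε → ((u:ℂ) - Complex.I * y) ∈ U) :
    ∫ u in p..q, F u = (∫ u in p..q, F ((u:ℂ) - Complex.I * ε))
      + Complex.I * (∫ y in (0:ℝ)..ε, F ((q:ℂ) - Complex.I * y))
      - Complex.I * (∫ y in (0:ℝ)..ε, F ((p:ℂ) - Complex.I * y)) := by
  have hrect := Complex.integral_boundary_rect_eq_zero_of_differentiableOn F ⟨p, -ε⟩ ⟨q, 0⟩ (by
    apply hFd.mono
    intro w hw
    rw [Complex.mem_reProdIm] at hw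
    have hre : w.re ∈ Set.uIcc p q := hw.1
    have him : w.im ∈ Set.uIcc (-ε) 0 := hw.2
    rw [Set.uIcc_of_le (by linarith : -ε ≤ (0:ℝ))] at him
    have hw2 : w = ((w.re : ℂ) - Complex.I * ((-w.im : ℝ):ℂ)) := by
      apply Complex.ext <;> simp
    rw [hw2]
    exact hsub w.re (-w.im) hre (by linarith [him.2]) (by linarith [him.1]))
  have hrect' :
      (∫ u in p..q, F (↑u + ↑(-ε:ℝ) * Complex.I)) - (∫ u in p..q, F (↑u + ↑(0:ℝ) * Complex.I))
        + Complex.I • (∫ y in (-ε)..(0:ℝ), F (↑q + ↑y * Complex.I))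
        - Complex.I • (∫ y in (-ε)..(0:ℝ), F (↑p + ↑y * Complex.I)) = 0 := hrect
  have e1 : (∫ u in p..q, F (↑u + ↑(-ε:ℝ) * Complex.I)) = ∫ u in p..q, F ((u:ℂ) - Complex.I * ε) :=
    integral_congr fun u _ => by congr 1; push_cast; ring
  have e2 : (∫ u in p..q, F (↑u + ↑(0:ℝ) * Complex.I)) = ∫ u in p..q, F (u:ℂ) :=
    integral_congr fun u _ => by congr 1; push_cast; ring
  have e3 : ∀ c : ℝ, (∫ y in (-ε)..(0:ℝ), F (↑c + ↑y * Complex.I))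
      = ∫ y in (0:ℝ)..ε, F ((c:ℂ) - Complex.I * y) := by
    intro c
    have h := intervalIntegral.integral_comp_neg (a := (0:ℝ)) (b := ε)
      (fun y : ℝ => F ((c:ℂ) + ↑y * Complex.I))
    rw [neg_zero] at h
    rw [← h]
    exact integral_congr fun y _ => by congr 1; push_cast; ring
  rw [e1, e2, e3 p, e3 q, smul_eq_mul, smul_eq_mul] at hrect'
  linear_combination -hrect'
set_option maxHeartbeats 1000000 in
/-- contour-shifting identity for the principal-value integral
`PV ∫_ℝ E(λ; x, t) θ(λ) dλ`.  Under the stated decomposition `θ = φ + ψ` for `|λ| ≥ B`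
(with `ψ = O(λ^{−N})` on the real line, `φ` holomorphic on a neighbourhood of the closed
region `{z − iy : |z| ≥ B, 0 ≤ y ≤ ε}` and `max_{y∈[0,ε]}|φ(C − iy)| → 0` as `C → ±∞`),
for every `x ∈ ℝ` and `t ≥ 0` the difference `D(C)` between `∫_{−C}^{C} E θ` and the
bracketed deformed-contour expression tends to `0` as `C → ∞`. -/
theorem stmt_0 (a ε : ℝ) (hε : 0 < ε) (N : ℕ) (B : ℝ)
    (hB : B > Real.sqrt ((|a| + ε ^ 2) / 3))
    (θ : ℝ → ℂ) (hθint : Integrable θ) (hθbdd : ∃ Mθ : ℝ, ∀ lam : ℝ, ‖θ lam‖ ≤ Mθ)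
    (ψ : ℝ → ℂ) (φ : ℂ → ℂ) (U : Set ℂ) (hUopen : IsOpen U)
    (hRU : {w : ℂ | ∃ z y : ℝ, B ≤ |z| ∧ 0 ≤ y ∧ y ≤ ε ∧ w = (z : ℂ) - Complex.I * y} ⊆ U)
    (hφhol : DifferentiableOn ℂ φ U)
    (hsum : ∀ lam : ℝ, B ≤ |lam| → θ lam = φ lam + ψ lam)
    (K : ℝ) (hK : 0 < K)
    (hψ : ∀ lam : ℝ, B ≤ |lam| → ‖ψ lam‖ ≤ K / |lam| ^ N)
    (hφtop : Tendsto (fun C : ℝ =>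
        sSup ((fun y : ℝ => ‖φ ((C : ℂ) - Complex.I * y)‖) '' Icc 0 ε))
      atTop (nhds 0))
    (hφbot : Tendsto (fun C : ℝ =>
        sSup ((fun y : ℝ => ‖φ ((C : ℂ) - Complex.I * y)‖) '' Icc 0 ε))
      atBot (nhds 0))
    (x t : ℝ) (ht : 0 ≤ t) :
    Tendsto (fun C : ℝ =>
        (∫ lam in (-C)..C, E a lam x t * θ lam)
        - ((∫ lam in (-B)..B, E a lam x t * θ lam)
          + (∫ lam in B..C,
              (E a lam x t * ψ lam + E a (-(lam : ℂ)) x t * ψ (-lam)))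
          + (∫ z in B..C,
              (E a ((z : ℂ) - Complex.I * ε) x t * φ ((z : ℂ) - Complex.I * ε)
                + E a (-(z : ℂ) - Complex.I * ε) x t * φ (-(z : ℂ) - Complex.I * ε)))
          + Complex.I * (∫ y in (0:ℝ)..ε,
              E a (-(B : ℂ) - Complex.I * y) x t * φ (-(B : ℂ) - Complex.I * y))
          - Complex.I * (∫ y in (0:ℝ)..ε,
              E a ((B : ℂ) - Complex.I * y) x t * φ ((B : ℂ) - Complex.I * y))))
      atTop (nhds 0) := by
  have hB0 : 0 < B := lt_of_le_of_lt (Real.sqrt_nonneg _) hB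
  have h3B : |a| + ε ^ 2 ≤ 3 * B ^ 2 := by
    have h := (Real.sqrt_lt' hB0).1 hB
    linarith
  have h3c : ∀ c : ℝ, B ≤ |c| → |a| + ε ^ 2 ≤ 3 * c ^ 2 := by
    intro c hc
    nlinarith [_root_.sq_abs c, abs_nonneg c]
  have hFd : DifferentiableOn ℂ (fun w => E a w x t * φ w) U :=
    ((Ediff a x t).differentiableOn).mul hφhol
  have hFcont : ContinuousOn (fun w => E a w x t * φ w) U := hFd.continuousOn
  have hmem : ∀ c y : ℝ, B ≤ |c| → 0 ≤ y → y ≤ ε → ((c:ℂ) - Complex.I * y) ∈ U :=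
    fun c y h1 h2 h3 => hRU ⟨c, y, h1, h2, h3, rfl⟩
  have hmemr : ∀ c : ℝ, B ≤ |c| → ((c:ℝ):ℂ) ∈ U := by
    intro c hc
    have h0 : ((c:ℝ):ℂ) = (c:ℂ) - Complex.I * ((0:ℝ):ℂ) := by push_cast; ring
    rw [h0]
    exact hmem c 0 hc le_rfl hε.le
  have hgint : Integrable (fun lam : ℝ => E a (lam:ℂ) x t * θ lam) := by
    apply hθint.bdd_mul (c := 1)
    · exact ((Ediff a x t).continuous.comp Complex.continuous_ofReal).aestronglyMeasurable
    · exact Filter.Eventually.of_forall (fun lam => le_of_eq (Enorm_real a x t lam))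
  have hgII : ∀ u v : ℝ, IntervalIntegrable (fun lam : ℝ => E a (lam:ℂ) x t * θ lam) volume u v :=
    fun u v => hgint.intervalIntegrable
  have hgnegint : Integrable (fun lam : ℝ => E a (-(lam:ℂ)) x t * θ (-lam)) := by
    have h := hgint.comp_neg
    simpa [Complex.ofReal_neg] using h
  have hFII : ∀ (p q : ℝ) (γ : ℝ → ℂ), Continuous γ →
      (∀ u ∈ Set.uIcc p q, γ u ∈ U) →
      IntervalIntegrable (fun u => E a (γ u) x t * φ (γ u)) volume p q := by
    intro p q γ hγ hmemγ
    exact (hFcont.comp hγ.continuousOn hmemγ).intervalIntegrable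
  -- the key contour identity
  have key : ∀ C : ℝ, B ≤ C →
      (∫ lam in (-C)..C, E a lam x t * θ lam)
        - ((∫ lam in (-B)..B, E a lam x t * θ lam)
          + (∫ lam in B..C,
              (E a lam x t * ψ lam + E a (-(lam : ℂ)) x t * ψ (-lam)))
          + (∫ z in B..C,
              (E a ((z : ℂ) - Complex.I * ε) x t * φ ((z : ℂ) - Complex.I * ε)
                + E a (-(z : ℂ) - Complex.I * ε) x t * φ (-(z : ℂ) - Complex.I * ε)))
          + Complex.I * (∫ y in (0:ℝ)..ε,
              E a (-(B : ℂ) - Complex.I * y) x t * φ (-(B : ℂ) - Complex.I * y))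
          - Complex.I * (∫ y in (0:ℝ)..ε,
              E a ((B : ℂ) - Complex.I * y) x t * φ ((B : ℂ) - Complex.I * y)))
      = Complex.I * (∫ y in (0:ℝ)..ε,
            E a ((C : ℂ) - Complex.I * y) x t * φ ((C : ℂ) - Complex.I * y))
        - Complex.I * (∫ y in (0:ℝ)..ε,
            E a (-(C : ℂ) - Complex.I * y) x t * φ (-(C : ℂ) - Complex.I * y)) := by
    intro C hC
    -- interval integrability facts
    have hF1II : IntervalIntegrable (fun u : ℝ => E a (u:ℂ) x t * φ (u:ℂ)) volume B C := by
      apply hFII B C (fun u => (u:ℂ)) Complex.continuous_ofReal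
      intro u hu
      rw [Set.uIcc_of_le hC] at hu
      exact hmemr u (le_trans hu.1 (le_abs_self u))
    have hF2II : IntervalIntegrable (fun u : ℝ => E a (-(u:ℂ)) x t * φ (-(u:ℂ))) volume B C := by
      apply hFII B C (fun u => -(u:ℂ)) Complex.continuous_ofReal.neg
      intro u hu
      rw [Set.uIcc_of_le hC] at hu
      have h0 : -((u:ℝ):ℂ) = ((-u:ℝ):ℂ) := by push_cast; ring
      rw [h0]
      exact hmemr (-u) (by rw [abs_neg]; exact le_trans hu.1 (le_abs_self u))
    have hI1 : IntervalIntegrable (fun lam : ℝ =>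
        E a (lam:ℂ) x t * θ lam + E a (-(lam:ℂ)) x t * θ (-lam)) volume B C :=
      (hgII B C).add hgnegint.intervalIntegrable
    have hI2 : IntervalIntegrable (fun lam : ℝ =>
        E a (lam:ℂ) x t * φ (lam:ℂ) + E a (-(lam:ℂ)) x t * φ (-(lam:ℂ))) volume B C :=
      hF1II.add hF2II
    have hI3 : IntervalIntegrable (fun u : ℝ =>
        E a ((u:ℂ) - Complex.I * ε) x t * φ ((u:ℂ) - Complex.I * ε)) volume B C := by
      apply hFII B C (fun u => (u:ℂ) - Complex.I * ε) (Complex.continuous_ofReal.sub continuous_const)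
      intro u hu
      rw [Set.uIcc_of_le hC] at hu
      exact hmem u ε (le_trans hu.1 (le_abs_self u)) hε.le le_rfl
    have hI4 : IntervalIntegrable (fun u : ℝ =>
        E a (-(u:ℂ) - Complex.I * ε) x t * φ (-(u:ℂ) - Complex.I * ε)) volume B C := by
      apply hFII B C (fun u => -(u:ℂ) - Complex.I * ε) (Complex.continuous_ofReal.neg.sub continuous_const)
      intro u hu
      rw [Set.uIcc_of_le hC] at hu
      have h0 : -((u:ℝ):ℂ) - Complex.I * ε = ((-u:ℝ):ℂ) - Complex.I * ε := by push_cast; ring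
      rw [h0]
      exact hmem (-u) ε (by rw [abs_neg]; exact le_trans hu.1 (le_abs_self u)) hε.le le_rfl
    -- splitting the symmetric integral
    have s1a : (∫ lam in (-C)..(-B), E a (lam:ℂ) x t * θ lam)
        + (∫ lam in (-B)..B, E a (lam:ℂ) x t * θ lam)
        = ∫ lam in (-C)..B, E a (lam:ℂ) x t * θ lam :=
      integral_add_adjacent_intervals (hgII (-C) (-B)) (hgII (-B) B)
    have s1b : (∫ lam in (-C)..B, E a (lam:ℂ) x t * θ lam)
        + (∫ lam in B..C, E a (lam:ℂ) x t * θ lam)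
        = ∫ lam in (-C)..C, E a (lam:ℂ) x t * θ lam :=
      integral_add_adjacent_intervals (hgII (-C) B) (hgII B C)
    have s2 : (∫ lam in B..C, E a (-(lam:ℂ)) x t * θ (-lam))
        = ∫ lam in (-C)..(-B), E a (lam:ℂ) x t * θ lam := by
      rw [← intervalIntegral.integral_comp_neg (a := B) (b := C)
        (fun lam : ℝ => E a (lam:ℂ) x t * θ lam)]
      exact integral_congr fun lam _ => by push_cast; ring_nf
    have s3 : (∫ lam in B..C, E a (lam:ℂ) x t * θ lam)
        + (∫ lam in B..C, E a (-(lam:ℂ)) x t * θ (-lam))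
        = ∫ lam in B..C, (E a (lam:ℂ) x t * θ lam + E a (-(lam:ℂ)) x t * θ (-lam)) :=
      (integral_add (hgII B C) hgnegint.intervalIntegrable).symm
    have s4 : (∫ lam in B..C, (E a (lam:ℂ) x t * θ lam + E a (-(lam:ℂ)) x t * θ (-lam)))
        - (∫ lam in B..C, (E a (lam:ℂ) x t * φ (lam:ℂ) + E a (-(lam:ℂ)) x t * φ (-(lam:ℂ))))
        = ∫ lam in B..C, (E a (lam:ℂ) x t * ψ lam + E a (-(lam:ℂ)) x t * ψ (-lam)) := by
      rw [← integral_sub hI1 hI2]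
      apply integral_congr
      intro lam hlam
      rw [Set.uIcc_of_le hC] at hlam
      have hl : B ≤ |lam| := le_trans hlam.1 (le_abs_self lam)
      have hl' : B ≤ |(-lam)| := by rwa [abs_neg]
      have e2 := hsum (-lam) hl'
      push_cast at e2
      simp only
      rw [hsum lam hl, e2]
      ring
    have sFS : (∫ lam in B..C, (E a (lam:ℂ) x t * φ (lam:ℂ) + E a (-(lam:ℂ)) x t * φ (-(lam:ℂ))))
        = (∫ lam in B..C, E a (lam:ℂ) x t * φ (lam:ℂ))
          + (∫ lam in B..C, E a (-(lam:ℂ)) x t * φ (-(lam:ℂ))) :=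
      integral_add hF1II hF2II
    -- Cauchy rectangles
    have s5 : (∫ u in B..C, E a (u:ℂ) x t * φ (u:ℂ))
        = (∫ u in B..C, E a ((u:ℂ) - Complex.I * ε) x t * φ ((u:ℂ) - Complex.I * ε))
          + Complex.I * (∫ y in (0:ℝ)..ε,
              E a ((C:ℂ) - Complex.I * y) x t * φ ((C:ℂ) - Complex.I * y))
          - Complex.I * (∫ y in (0:ℝ)..ε,
              E a ((B:ℂ) - Complex.I * y) x t * φ ((B:ℂ) - Complex.I * y)) :=
      rect_key (fun w => E a w x t * φ w) U hFd B C ε hε.le (by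
        intro u y hu hy0 hyε
        rw [Set.uIcc_of_le hC] at hu
        exact hmem u y (le_trans hu.1 (le_abs_self u)) hy0 hyε)
    have s6 : (∫ u in (-C)..(-B), E a (u:ℂ) x t * φ (u:ℂ))
        = (∫ u in (-C)..(-B), E a ((u:ℂ) - Complex.I * ε) x t * φ ((u:ℂ) - Complex.I * ε))
          + Complex.I * (∫ y in (0:ℝ)..ε,
              E a (((-B:ℝ):ℂ) - Complex.I * y) x t * φ (((-B:ℝ):ℂ) - Complex.I * y))
          - Complex.I * (∫ y in (0:ℝ)..ε,
              E a (((-C:ℝ):ℂ) - Complex.I * y) x t * φ (((-C:ℝ):ℂ) - Complex.I * y)) :=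
      rect_key (fun w => E a w x t * φ w) U hFd (-C) (-B) ε hε.le (by
        intro u y hu hy0 hyε
        rw [Set.uIcc_of_le (by linarith : (-C:ℝ) ≤ -B)] at hu
        have habs : B ≤ |u| := by
          rw [abs_of_nonpos (by linarith [hu.2] : u ≤ 0)]
          linarith [hu.2]
        exact hmem u y habs hy0 hyε)
    have c1 : (∫ u in B..C, E a (-(u:ℂ)) x t * φ (-(u:ℂ)))
        = ∫ u in (-C)..(-B), E a (u:ℂ) x t * φ (u:ℂ) := by
      rw [← intervalIntegral.integral_comp_neg (a := B) (b := C)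
        (fun u : ℝ => E a (u:ℂ) x t * φ (u:ℂ))]
      exact integral_congr fun u _ => by push_cast; ring_nf
    have c2 : (∫ u in B..C, E a (-(u:ℂ) - Complex.I * ε) x t * φ (-(u:ℂ) - Complex.I * ε))
        = ∫ u in (-C)..(-B), E a ((u:ℂ) - Complex.I * ε) x t * φ ((u:ℂ) - Complex.I * ε) := by
      rw [← intervalIntegral.integral_comp_neg (a := B) (b := C)
        (fun u : ℝ => E a ((u:ℂ) - Complex.I * ε) x t * φ ((u:ℂ) - Complex.I * ε))]
      exact integral_congr fun u _ => by push_cast; ring_nf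
    have c3B : (∫ y in (0:ℝ)..ε, E a (((-B:ℝ):ℂ) - Complex.I * y) x t
          * φ (((-B:ℝ):ℂ) - Complex.I * y))
        = ∫ y in (0:ℝ)..ε, E a (-(B:ℂ) - Complex.I * y) x t * φ (-(B:ℂ) - Complex.I * y) :=
      integral_congr fun y _ => by push_cast; ring_nf
    have c3C : (∫ y in (0:ℝ)..ε, E a (((-C:ℝ):ℂ) - Complex.I * y) x t
          * φ (((-C:ℝ):ℂ) - Complex.I * y))
        = ∫ y in (0:ℝ)..ε, E a (-(C:ℂ) - Complex.I * y) x t * φ (-(C:ℂ) - Complex.I * y) :=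
      integral_congr fun y _ => by push_cast; ring_nf
    have s7 : (∫ z in B..C,
          (E a ((z : ℂ) - Complex.I * ε) x t * φ ((z : ℂ) - Complex.I * ε)
            + E a (-(z : ℂ) - Complex.I * ε) x t * φ (-(z : ℂ) - Complex.I * ε)))
        = (∫ u in B..C, E a ((u:ℂ) - Complex.I * ε) x t * φ ((u:ℂ) - Complex.I * ε))
          + (∫ u in B..C, E a (-(u:ℂ) - Complex.I * ε) x t * φ (-(u:ℂ) - Complex.I * ε)) :=
      integral_add hI3 hI4
    linear_combination (-1 : ℂ) * s1a - s1b - s2 + s3 + s4 + sFS + s5 + s6 + c1 - c2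
      + Complex.I * c3B - Complex.I * c3C - s7
  -- bounds on the vertical integrals at ±C
  have hφcont : ContinuousOn φ U := hφhol.continuousOn
  have hbddA : ∀ c : ℝ, B ≤ |c| →
      BddAbove ((fun y : ℝ => ‖φ ((c:ℂ) - Complex.I * y)‖) '' Icc 0 ε) := by
    intro c hc
    apply IsCompact.bddAbove_image isCompact_Icc
    apply continuous_norm.comp_continuousOn
    apply hφcont.comp (Continuous.continuousOn (continuous_const.sub (continuous_const.mul Complex.continuous_ofReal)))
    intro y hy
    exact hmem c y hc hy.1 hy.2
  have hvert : ∀ c : ℝ, B ≤ |c| →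
      ‖∫ y in (0:ℝ)..ε, E a ((c:ℂ) - Complex.I * y) x t * φ ((c:ℂ) - Complex.I * y)‖
        ≤ Real.exp (ε * |x|)
          * sSup ((fun y : ℝ => ‖φ ((c:ℂ) - Complex.I * y)‖) '' Icc 0 ε) * ε := by
    intro c hc
    have hb := intervalIntegral.norm_integral_le_of_norm_le_const (a := (0:ℝ)) (b := ε)
      (C := Real.exp (ε * |x|)
        * sSup ((fun y : ℝ => ‖φ ((c:ℂ) - Complex.I * y)‖) '' Icc 0 ε))
      (f := fun y : ℝ => E a ((c:ℂ) - Complex.I * y) x t * φ ((c:ℂ) - Complex.I * y)) ?_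
    · calc ‖∫ y in (0:ℝ)..ε, E a ((c:ℂ) - Complex.I * y) x t * φ ((c:ℂ) - Complex.I * y)‖
          ≤ _ * |ε - 0| := hb
        _ = _ := by rw [sub_zero, _root_.abs_of_nonneg hε.le]
    · intro y hy
      rw [Set.uIoc_of_le hε.le] at hy
      rw [norm_mul]
      have h1 : ‖E a ((c:ℂ) - Complex.I * y) x t‖ ≤ Real.exp (ε * |x|) :=
        Enorm_bound a x t ht ε c y hy.1.le hy.2 (h3c c hc)
      have h2 : ‖φ ((c:ℂ) - Complex.I * y)‖
          ≤ sSup ((fun y : ℝ => ‖φ ((c:ℂ) - Complex.I * y)‖) '' Icc 0 ε) := by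
        exact le_csSup (hbddA c hc) ⟨y, ⟨hy.1.le, hy.2⟩, rfl⟩
      exact mul_le_mul h1 h2 (norm_nonneg _) (Real.exp_pos _).le
  -- the squeezing bound and limit
  have hSneg : Tendsto (fun C : ℝ =>
      sSup ((fun y : ℝ => ‖φ ((((-C:ℝ)):ℂ) - Complex.I * y)‖) '' Icc 0 ε))
      atTop (nhds 0) := hφbot.comp tendsto_neg_atTop_atBot
  have hbnd : Tendsto (fun C : ℝ =>
      Real.exp (ε * |x|)
          * sSup ((fun y : ℝ => ‖φ ((C:ℂ) - Complex.I * y)‖) '' Icc 0 ε) * ε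
        + Real.exp (ε * |x|)
          * sSup ((fun y : ℝ => ‖φ ((((-C:ℝ)):ℂ) - Complex.I * y)‖) '' Icc 0 ε) * ε)
      atTop (nhds 0) := by
    have h := (((hφtop.const_mul (Real.exp (ε * |x|))).mul_const ε).add
      ((hSneg.const_mul (Real.exp (ε * |x|))).mul_const ε))
    simpa using h
  apply squeeze_zero_norm' ?_ hbnd
  filter_upwards [eventually_ge_atTop B] with C hC
  rw [key C hC]
  have hCabs : B ≤ |C| := le_trans hC (le_abs_self C)
  have hCabs' : B ≤ |(-C)| := by rwa [abs_neg]
  have hv1 := hvert C hCabs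
  have hv2 := hvert (-C) hCabs'
  have hconv : (∫ y in (0:ℝ)..ε, E a (((-C:ℝ):ℂ) - Complex.I * y) x t
        * φ (((-C:ℝ):ℂ) - Complex.I * y))
      = ∫ y in (0:ℝ)..ε, E a (-(C:ℂ) - Complex.I * y) x t * φ (-(C:ℂ) - Complex.I * y) :=
    integral_congr fun y _ => by push_cast; ring_nf
  rw [hconv] at hv2
  calc ‖Complex.I * (∫ y in (0:ℝ)..ε,
          E a ((C : ℂ) - Complex.I * y) x t * φ ((C : ℂ) - Complex.I * y))
        - Complex.I * (∫ y in (0:ℝ)..ε,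
          E a (-(C : ℂ) - Complex.I * y) x t * φ (-(C : ℂ) - Complex.I * y))‖
      ≤ ‖Complex.I * (∫ y in (0:ℝ)..ε,
          E a ((C : ℂ) - Complex.I * y) x t * φ ((C : ℂ) - Complex.I * y))‖
        + ‖Complex.I * (∫ y in (0:ℝ)..ε,
          E a (-(C : ℂ) - Complex.I * y) x t * φ (-(C : ℂ) - Complex.I * y))‖ :=
      norm_sub_le _ _
    _ = ‖(∫ y in (0:ℝ)..ε, E a ((C : ℂ) - Complex.I * y) x t * φ ((C : ℂ) - Complex.I * y))‖
        + ‖(∫ y in (0:ℝ)..ε,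
            E a (-(C : ℂ) - Complex.I * y) x t * φ (-(C : ℂ) - Complex.I * y))‖ := by
      rw [norm_mul, norm_mul, Complex.norm_I, one_mul, one_mul]
    _ ≤ _ := add_le_add hv1 hv2
end

section
/- Fix a ∈ ℝ, ε > 0, N ∈ ℕ with N ≥ 2, and B > b where b := √((|a| + ε²)/3). Let θ : ℝ → ℂ be Lebesgue integrable and bounded, and suppose there exist a function ψ defined on {λ ∈ ℝ : |λ| ≥ B} and a function φ holomorphic on an open subset of ℂ containing the closed set R := {z − iy : z ∈ ℝ, |z| ≥ B, 0 ≤ y ≤ ε}, such that: θ(λ) = φ(λ) + ψ(λ) for all real λ with |λ| ≥ B; there is K > 0 with |ψ(λ)| ≤ K·|λ|^(−N) for all real λ with |λ| ≥ B; and max_{y∈[0,ε]} |φ(C − iy)| → 0 as C → ±∞. Fix M ∈ {0, 1, …, N−2}, τ > 0, and ξ ∈ ℝ. For C > B and (x,t) ∈ ℝ², define F_C(x,t) := ∫_{−B}^{B} E(λ;x,t)λ^M θ(λ) dλ + ∫_{B}^{C} ( E(λ;x,t)λ^M ψ(λ) + E(−λ;x,t)(−λ)^M ψ(−λ) ) dλ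 + ∫_{B}^{C} ( E(z−iε;x,t)(z−iε)^M φ(z−iε) + E(−z−iε;x,t)(−z−iε)^M φ(−z−iε) ) dz + i∫_{0}^{ε} E(−B−iy;x,t)(−B−iy)^M φ(−B−iy) dy − i∫_{0}^{ε} E(B−iy;x,t)(B−iy)^M φ(B−iy) dy. Then there exists a function F : ℝ² → ℂ such that F_C → F as C → ∞, uniformly on the set (−∞, ξ] × [τ, ∞) of pairs (x,t). -/
open Complex Filter Set MeasureTheory intervalIntegral

lemma split_integral {u : ℝ → ℂ} {B C : ℝ} (hBC : B ≤ C) (hu : IntegrableOn u (Ioi B)) :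
    ∫ x in Ioi B, u x = (∫ x in B..C, u x) + ∫ x in Ioi C, u x := by
  rw [intervalIntegral.integral_of_le hBC, ← setIntegral_union (Ioc_disjoint_Ioi le_rfl)
    measurableSet_Ioi (hu.mono_set Ioc_subset_Ioi_self) (hu.mono_set (Ioi_subset_Ioi hBC)),
    Ioc_union_Ioi_eq_Ioi hBC]

lemma split_integralR {u : ℝ → ℝ} {B C : ℝ} (hBC : B ≤ C) (hu : IntegrableOn u (Ioi B)) :
    ∫ x in Ioi B, u x = (∫ x in B..C, u x) + ∫ x in Ioi C, u x := by
  rw [intervalIntegral.integral_of_le hBC, ← setIntegral_union (Ioc_disjoint_Ioi le_rfl)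
    measurableSet_Ioi (hu.mono_set Ioc_subset_Ioi_self) (hu.mono_set (Ioi_subset_Ioi hBC)),
    Ioc_union_Ioi_eq_Ioi hBC]

lemma tuo_const {α : Type*} {ι : Type*} {l : Filter ι} {s : Set α} (h : α → ℂ) :
    TendstoUniformlyOn (fun _ x => h x) h l s := by
  intro u hu
  exact Filter.Eventually.of_forall fun n x _ => refl_mem_uniformity hu

lemma uniformTail {S : Set (ℝ × ℝ)} {B : ℝ} (f : ℝ × ℝ → ℝ → ℂ) (g : ℝ → ℝ)
    (hg : IntegrableOn g (Ioi B))
    (hfm : ∀ p ∈ S, AEStronglyMeasurable (f p) (volume.restrict (Ioi B)))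
    (hb : ∀ p ∈ S, ∀ z ∈ Ioi B, ‖f p z‖ ≤ g z) :
    TendstoUniformlyOn (fun C p => ∫ z in B..C, f p z)
      (fun p => ∫ z in Ioi B, f p z) atTop S := by
  have hint : ∀ p ∈ S, IntegrableOn (f p) (Ioi B) := fun p hp =>
    Integrable.mono' hg (hfm p hp)
      ((ae_restrict_iff' measurableSet_Ioi).2 (ae_of_all _ (hb p hp)))
  rw [Metric.tendstoUniformlyOn_iff]
  intro δ hδ
  have h1 : Tendsto (fun C => ∫ z in B..C, g z) atTop (nhds (∫ z in Ioi B, g z)) :=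
    intervalIntegral_tendsto_integral_Ioi B hg tendsto_id
  have tail : Tendsto (fun C => ∫ z in Ioi C, g z) atTop (nhds 0) := by
    have h2 := (tendsto_const_nhds (x := ∫ z in Ioi B, g z)).sub h1
    rw [sub_self] at h2
    refine h2.congr' ?_
    filter_upwards [eventually_ge_atTop B] with C hC
    rw [split_integralR hC hg]; ring
  filter_upwards [tail.eventually_lt_const hδ, eventually_ge_atTop B] with C h1' h2' p hp
  rw [dist_eq_norm, split_integral h2' (hint p hp)]
  simp only [add_sub_cancel_left]
  calc ‖∫ z in Ioi C, f p z‖ ≤ ∫ z in Ioi C, g z := by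
        refine norm_integral_le_of_norm_le (hg.mono_set (Ioi_subset_Ioi h2'))
          ((ae_restrict_iff' measurableSet_Ioi).2 (ae_of_all _ ?_))
        exact fun z hz => hb p hp z (Ioi_subset_Ioi h2' hz)
    _ < δ := h1'

lemma abs_exp_I_mul (c : ℝ) : ‖Complex.exp (Complex.I * (c:ℂ))‖ = 1 := by
  rw [Complex.norm_exp]; simp

lemma abs_exp_add_I_mul (u v : ℝ) :
    ‖Complex.exp ((u:ℂ) + Complex.I * (v:ℂ))‖ = Real.exp u := by
  rw [Complex.norm_exp]; simp

lemma E_abs_real (a lam x t : ℝ) : ‖E a (lam : ℂ) x t‖ = 1 := by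
  have h : Complex.I * (lam:ℂ) * x - Complex.I * ((lam:ℂ) ^ 3 - (a : ℂ) * lam) * t
      = Complex.I * ((lam * x - (lam ^ 3 - a * lam) * t : ℝ) : ℂ) := by push_cast; ring
  rw [E, h, abs_exp_I_mul]

lemma E_abs_contour (a ε x t z : ℝ) :
    ‖E a ((z:ℂ) - Complex.I * ε) x t‖
      = Real.exp (ε * x - t * ε * (3 * z ^ 2 - ε ^ 2 - a)) := by
  have h : Complex.I * ((z:ℂ) - Complex.I * ε) * x
      - Complex.I * (((z:ℂ) - Complex.I * ε) ^ 3 - (a : ℂ) * ((z:ℂ) - Complex.I * ε)) * t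
      = ((ε * x - t * ε * (3 * z ^ 2 - ε ^ 2 - a) : ℝ) : ℂ)
        + Complex.I * ((z * x - t * (z ^ 3 - 3 * ε ^ 2 * z - a * z) : ℝ) : ℂ) := by
    push_cast
    linear_combination ((t:ℂ) * ε^3 * Complex.I^2 - 3 * t * z * ε^2 * Complex.I
      + (- ε * x + 3 * t * ε * z^2 - t * ε^3 - a * t * ε)) * Complex.I_sq
  rw [E, h, abs_exp_add_I_mul]

/-- under the decomposition hypotheses on `θ = φ + ψ` (with `N ≥ 2`,
`ψ = O(λ^{−N})`, `φ` holomorphic on a neighbourhood of `{z − iy : |z| ≥ B, 0 ≤ y ≤ ε}` and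
`max_{y∈[0,ε]}|φ(C − iy)| → 0` as `C → ±∞`), for `M ≤ N − 2`, `τ > 0` and `ξ ∈ ℝ`, the
family of deformed-contour partial expressions `F_C(x, t)` converges, as `C → ∞`,
uniformly on `(−∞, ξ] × [τ, ∞)`, to some function `F`. -/
theorem stmt_1 (a ε : ℝ) (hε : 0 < ε) (N : ℕ) (hN : 2 ≤ N) (B : ℝ)
    (hB : B > Real.sqrt ((|a| + ε ^ 2) / 3))
    (θ : ℝ → ℂ) (hθint : Integrable θ) (hθbdd : ∃ Mθ : ℝ, ∀ lam : ℝ, ‖θ lam‖ ≤ Mθ)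
    (ψ : ℝ → ℂ) (φ : ℂ → ℂ) (U : Set ℂ) (hUopen : IsOpen U)
    (hRU : {w : ℂ | ∃ z y : ℝ, B ≤ |z| ∧ 0 ≤ y ∧ y ≤ ε ∧ w = (z : ℂ) - Complex.I * y} ⊆ U)
    (hφhol : DifferentiableOn ℂ φ U)
    (hsum : ∀ lam : ℝ, B ≤ |lam| → θ lam = φ lam + ψ lam)
    (K : ℝ) (hK : 0 < K)
    (hψ : ∀ lam : ℝ, B ≤ |lam| → ‖ψ lam‖ ≤ K / |lam| ^ N)
    (hφtop : Tendsto (fun C : ℝ =>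
        sSup ((fun y : ℝ => ‖φ ((C : ℂ) - Complex.I * y)‖) '' Icc 0 ε))
      atTop (nhds 0))
    (hφbot : Tendsto (fun C : ℝ =>
        sSup ((fun y : ℝ => ‖φ ((C : ℂ) - Complex.I * y)‖) '' Icc 0 ε))
      atBot (nhds 0))
    (M : ℕ) (hM : M ≤ N - 2) (τ : ℝ) (hτ : 0 < τ) (ξ : ℝ) :
    ∃ F : ℝ × ℝ → ℂ,
      TendstoUniformlyOn
        (fun (C : ℝ) (p : ℝ × ℝ) =>
          (∫ lam in (-B)..B, E a lam p.1 p.2 * (lam : ℂ) ^ M * θ lam)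
          + (∫ lam in B..C,
              (E a lam p.1 p.2 * (lam : ℂ) ^ M * ψ lam
                + E a (-(lam : ℂ)) p.1 p.2 * (-(lam : ℂ)) ^ M * ψ (-lam)))
          + (∫ z in B..C,
              (E a ((z : ℂ) - Complex.I * ε) p.1 p.2 * ((z : ℂ) - Complex.I * ε) ^ M
                  * φ ((z : ℂ) - Complex.I * ε)
                + E a (-(z : ℂ) - Complex.I * ε) p.1 p.2 * (-(z : ℂ) - Complex.I * ε) ^ M
                  * φ (-(z : ℂ) - Complex.I * ε)))
          + Complex.I * (∫ y in (0:ℝ)..ε,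
              E a (-(B : ℂ) - Complex.I * y) p.1 p.2 * (-(B : ℂ) - Complex.I * y) ^ M
                * φ (-(B : ℂ) - Complex.I * y))
          - Complex.I * (∫ y in (0:ℝ)..ε,
              E a ((B : ℂ) - Complex.I * y) p.1 p.2 * ((B : ℂ) - Complex.I * y) ^ M
                * φ ((B : ℂ) - Complex.I * y)))
        F atTop (Iic ξ ×ˢ Ici τ) := by
  have hargpos : 0 < (|a| + ε ^ 2) / 3 := by positivity
  have hBpos : 0 < B := (Real.sqrt_pos.2 hargpos).trans hB
  have hB2 : |a| + ε ^ 2 < 3 * B ^ 2 := by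
    have h1 : Real.sqrt ((|a| + ε ^ 2) / 3) ^ 2 = (|a| + ε ^ 2) / 3 :=
      Real.sq_sqrt hargpos.le
    nlinarith [Real.sqrt_nonneg ((|a| + ε ^ 2) / 3)]
  have hφcont : ContinuousOn φ U := hφhol.continuousOn
  have hmem : ∀ z y : ℝ, B ≤ |z| → 0 ≤ y → y ≤ ε → ((z:ℂ) - Complex.I * y) ∈ U :=
    fun z y h1 h2 h3 => hRU ⟨z, y, h1, h2, h3, rfl⟩
  have hmem0 : ∀ z : ℝ, B ≤ |z| → ((z:ℂ)) ∈ U := by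
    intro z hz
    have := hmem z 0 hz le_rfl hε.le
    simpa using this
  -- a uniform bound for φ on the horizontal contour
  obtain ⟨Φ, hΦ0, hΦ⟩ : ∃ Φ : ℝ, 0 ≤ Φ ∧ ∀ z : ℝ, B ≤ |z| →
      ‖φ ((z:ℂ) - Complex.I * ε)‖ ≤ Φ := by
    have habs_cont : ContinuousOn (fun z : ℝ => ‖φ ((z:ℂ) - Complex.I * ε)‖)
        {z : ℝ | B ≤ |z|} := by
      apply continuous_norm.comp_continuousOn
      exact hφcont.comp (by fun_prop) (fun z hz => hmem z ε hz hε.le le_rfl)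
    have hle : ∀ C : ℝ, B ≤ |C| → ‖φ ((C:ℂ) - Complex.I * ε)‖ ≤
        sSup ((fun y : ℝ => ‖φ ((C : ℂ) - Complex.I * y)‖) '' Icc 0 ε) := by
      intro C hC
      apply le_csSup
      · apply IsCompact.bddAbove_image isCompact_Icc
        apply continuous_norm.comp_continuousOn
        exact hφcont.comp (by fun_prop) (fun y hy => hmem C y hC hy.1 hy.2)
      · exact ⟨ε, ⟨hε.le, le_rfl⟩, rfl⟩
    obtain ⟨C₀, hC₀⟩ := eventually_atTop.1 (hφtop.eventually_lt_const one_pos)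
    obtain ⟨C₁, hC₁⟩ := eventually_atBot.1 (hφbot.eventually_lt_const one_pos)
    set D₀ : ℝ := max C₀ B with hD₀
    set D₁ : ℝ := min C₁ (-B) with hD₁
    have hKc : IsCompact (Icc B D₀ ∪ Icc D₁ (-B)) := (isCompact_Icc).union isCompact_Icc
    have hsub : (Icc B D₀ ∪ Icc D₁ (-B)) ⊆ {z : ℝ | B ≤ |z|} := by
      rintro z (⟨h1, _⟩ | ⟨_, h2⟩)
      · exact le_abs.2 (Or.inl h1)
      · exact le_abs.2 (Or.inr (show B ≤ -z by linarith))
    obtain ⟨Φ₁, hΦ₁⟩ := hKc.exists_bound_of_continuousOn (habs_cont.mono hsub)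
    refine ⟨max Φ₁ 1, le_trans zero_le_one (le_max_right _ _), ?_⟩
    intro z hz
    rcases le_or_gt z D₀ with h | h
    · rcases le_or_gt D₁ z with h' | h'
      · -- z in the compact region (need B ≤ |z| to decide side)
        rcases abs_cases z with ⟨he, h0⟩ | ⟨he, h0⟩
        · have : z ∈ Icc B D₀ ∪ Icc D₁ (-B) := Or.inl ⟨by rw [he] at hz; exact hz, h⟩
          exact le_trans (le_trans (le_abs_self _) (hΦ₁ z this)) (le_max_left _ _)
        · have : z ∈ Icc B D₀ ∪ Icc D₁ (-B) := Or.inr ⟨h', by rw [he] at hz; linarith⟩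
          exact le_trans (le_trans (le_abs_self _) (hΦ₁ z this)) (le_max_left _ _)
      · -- z < D₁ ≤ C₁ : far negative
        have := hC₁ z (le_trans h'.le (min_le_left _ _))
        exact le_trans (le_trans (hle z hz) this.le) (le_max_right _ _)
    · -- z > D₀ ≥ C₀ : far positive
      have := hC₀ z (le_trans (le_max_left _ _) h.le)
      exact le_trans (le_trans (hle z hz) this.le) (le_max_right _ _)
  
  set S : Set (ℝ × ℝ) := Iic ξ ×ˢ Ici τ with hS
  -- the ψ tail integral
  have hMN : (M:ℝ) - N < -1 := by
    have : M + 2 ≤ N := by omega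
    have : (M:ℝ) + 2 ≤ N := by exact_mod_cast this
    linarith
  have hg1int : IntegrableOn (fun lam : ℝ => 2 * K * lam ^ ((M:ℝ) - N)) (Ioi B) :=
    (integrableOn_Ioi_rpow_of_lt hMN hBpos).const_mul _
  have h1 : TendstoUniformlyOn
      (fun (C : ℝ) (p : ℝ × ℝ) => ∫ lam in B..C,
        (E a lam p.1 p.2 * (lam : ℂ) ^ M * ψ lam
          + E a (-(lam : ℂ)) p.1 p.2 * (-(lam : ℂ)) ^ M * ψ (-lam)))
      (fun p => ∫ lam in Ioi B,
        (E a lam p.1 p.2 * (lam : ℂ) ^ M * ψ lam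
          + E a (-(lam : ℂ)) p.1 p.2 * (-(lam : ℂ)) ^ M * ψ (-lam))) atTop S := by
    apply uniformTail _ (fun lam => 2 * K * lam ^ ((M:ℝ) - N)) hg1int
    · intro p _
      have cE1 : Continuous fun lam : ℝ => E a (lam:ℂ) p.1 p.2 := by unfold E; fun_prop
      have cE2 : Continuous fun lam : ℝ => E a (-(lam:ℂ)) p.1 p.2 := by unfold E; fun_prop
      have cφ1 : ContinuousOn (fun lam : ℝ => φ ((lam:ℂ))) (Ioi B) :=
        hφcont.comp Complex.continuous_ofReal.continuousOn
          (fun lam hl => hmem0 lam (le_abs.2 (Or.inl (le_of_lt hl))))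
      have cφ2 : ContinuousOn (fun lam : ℝ => φ (-(lam:ℂ))) (Ioi B) := by
        refine hφcont.comp (Complex.continuous_ofReal.neg).continuousOn (fun lam hl => ?_)
        have hl' : B ≤ |(-lam)| := by rw [abs_neg]; exact le_abs.2 (Or.inl (le_of_lt hl))
        simpa using hmem0 (-lam) hl'
      have hθm := hθint.aestronglyMeasurable
      have hθn : AEStronglyMeasurable (fun lam : ℝ => θ (-lam)) volume :=
        hθm.comp_quasiMeasurePreserving
          (Measure.measurePreserving_neg _).quasiMeasurePreserving
      have hg : AEStronglyMeasurable (fun lam : ℝ =>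
          E a lam p.1 p.2 * (lam:ℂ)^M * (θ lam - φ lam)
          + E a (-(lam:ℂ)) p.1 p.2 * (-(lam:ℂ))^M * (θ (-lam) - φ (-(lam:ℂ))))
          (volume.restrict (Ioi B)) := by
        apply AEStronglyMeasurable.add
        · exact ((cE1.mul (by fun_prop : Continuous fun lam : ℝ =>
            ((lam:ℂ))^M)).aestronglyMeasurable.restrict).mul
            (hθm.restrict.sub (cφ1.aestronglyMeasurable measurableSet_Ioi))
        · exact ((cE2.mul (by fun_prop : Continuous fun lam : ℝ =>
            (-(lam:ℂ))^M)).aestronglyMeasurable.restrict).mul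
            (hθn.restrict.sub (cφ2.aestronglyMeasurable measurableSet_Ioi))
      refine hg.congr ?_
      filter_upwards [self_mem_ae_restrict measurableSet_Ioi] with lam hl
      have hl1 : B ≤ |lam| := le_abs.2 (Or.inl (le_of_lt hl))
      have hl2 : B ≤ |(-lam)| := by rw [abs_neg]; exact hl1
      rw [hsum lam hl1, hsum (-lam) hl2]
      push_cast
      ring
    · rintro p _ lam hl
      have hlp : 0 < lam := hBpos.trans hl
      have hl1 : B ≤ |lam| := le_abs.2 (Or.inl (le_of_lt hl))
      have hl2 : B ≤ |(-lam)| := by rw [abs_neg]; exact hl1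
      have key : lam^M * (K / lam^N) = K * lam ^ ((M:ℝ) - N) := by
        rw [Real.rpow_sub hlp, Real.rpow_natCast, Real.rpow_natCast]
        field_simp
      have hψ1 : ‖ψ lam‖ ≤ K / lam ^ N := by
        have := hψ lam hl1; rwa [abs_of_pos hlp] at this
      have hψ2 : ‖ψ (-lam)‖ ≤ K / lam ^ N := by
        have := hψ (-lam) hl2; rwa [abs_neg, abs_of_pos hlp] at this
      have e1 : ‖E a (lam:ℂ) p.1 p.2 * (lam:ℂ)^M * ψ lam‖ ≤ K * lam ^ ((M:ℝ) - N) := by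
        rw [norm_mul, norm_mul]
        have hE : ‖E a (lam:ℂ) p.1 p.2‖ = 1 := by
          rw [E_abs_real]
        have hpow : ‖((lam:ℂ))^M‖ = lam^M := by
          rw [norm_pow, Complex.norm_real, Real.norm_eq_abs, abs_of_pos hlp]
        rw [hE, hpow, one_mul, ← key]
        exact mul_le_mul_of_nonneg_left hψ1 (by positivity)
      have e2 : ‖E a (-(lam:ℂ)) p.1 p.2 * (-(lam:ℂ))^M * ψ (-lam)‖
          ≤ K * lam ^ ((M:ℝ) - N) := by
        rw [norm_mul, norm_mul]
        have hc : -(lam:ℂ) = ((-lam : ℝ):ℂ) := by push_cast; ring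
        have hE : ‖E a (-(lam:ℂ)) p.1 p.2‖ = 1 := by
          rw [hc, E_abs_real]
        have hpow : ‖(-(lam:ℂ))^M‖ = lam^M := by
          rw [norm_pow, norm_neg, Complex.norm_real, Real.norm_eq_abs, abs_of_pos hlp]
        rw [hE, hpow, one_mul, ← key]
        exact mul_le_mul_of_nonneg_left hψ2 (by positivity)
      calc ‖E a (lam:ℂ) p.1 p.2 * (lam:ℂ)^M * ψ lam
            + E a (-(lam:ℂ)) p.1 p.2 * (-(lam:ℂ))^M * ψ (-lam)‖
          ≤ ‖E a (lam:ℂ) p.1 p.2 * (lam:ℂ)^M * ψ lam‖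
            + ‖E a (-(lam:ℂ)) p.1 p.2 * (-(lam:ℂ))^M * ψ (-lam)‖ := norm_add_le _ _
        _ ≤ K * lam ^ ((M:ℝ) - N) + K * lam ^ ((M:ℝ) - N) := add_le_add e1 e2
        _ = 2 * K * lam ^ ((M:ℝ) - N) := by ring
  -- the φ contour tail integral
  have hb3 : (0:ℝ) < 3 * τ * ε := by positivity
  have hgauss : IntegrableOn (fun z : ℝ => z^M * Real.exp (-(3*τ*ε) * z^2)) (Ioi B) := by
    have h := integrableOn_rpow_mul_exp_neg_mul_sq hb3
      (s := (M:ℝ)) (neg_one_lt_zero.trans_le (Nat.cast_nonneg M))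
    simp_rw [Real.rpow_natCast] at h
    exact h.mono_set (Ioi_subset_Ioi hBpos.le)
  have hg2int : IntegrableOn (fun z : ℝ =>
      (2 * Real.exp (ε*ξ + τ*ε*(ε^2+a)) * (1+ε/B)^M * Φ)
        * (z^M * Real.exp (-(3*τ*ε) * z^2))) (Ioi B) := hgauss.const_mul _
  have h2 : TendstoUniformlyOn
      (fun (C : ℝ) (p : ℝ × ℝ) => ∫ z in B..C,
        (E a ((z : ℂ) - Complex.I * ε) p.1 p.2 * ((z : ℂ) - Complex.I * ε) ^ M
            * φ ((z : ℂ) - Complex.I * ε)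
          + E a (-(z : ℂ) - Complex.I * ε) p.1 p.2 * (-(z : ℂ) - Complex.I * ε) ^ M
            * φ (-(z : ℂ) - Complex.I * ε)))
      (fun p => ∫ z in Ioi B,
        (E a ((z : ℂ) - Complex.I * ε) p.1 p.2 * ((z : ℂ) - Complex.I * ε) ^ M
            * φ ((z : ℂ) - Complex.I * ε)
          + E a (-(z : ℂ) - Complex.I * ε) p.1 p.2 * (-(z : ℂ) - Complex.I * ε) ^ M
            * φ (-(z : ℂ) - Complex.I * ε))) atTop S := by
    apply uniformTail _ _ hg2int
    · intro p _
      have cE3 : Continuous fun z : ℝ => E a ((z:ℂ) - Complex.I * ε) p.1 p.2 := by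
        unfold E; fun_prop
      have cE4 : Continuous fun z : ℝ => E a (-(z:ℂ) - Complex.I * ε) p.1 p.2 := by
        unfold E; fun_prop
      have cφ3 : ContinuousOn (fun z : ℝ => φ ((z:ℂ) - Complex.I * ε)) (Ioi B) := by
        refine hφcont.comp (by fun_prop) (fun z hz => ?_)
        exact hmem z ε (le_abs.2 (Or.inl (le_of_lt hz))) hε.le le_rfl
      have cφ4 : ContinuousOn (fun z : ℝ => φ (-(z:ℂ) - Complex.I * ε)) (Ioi B) := by
        refine hφcont.comp (by fun_prop) (fun z hz => ?_)
        have hz' : B ≤ |(-z)| := by rw [abs_neg]; exact le_abs.2 (Or.inl (le_of_lt hz))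
        simpa using hmem (-z) ε hz' hε.le le_rfl
      apply AEStronglyMeasurable.add
      · exact ((cE3.mul (by fun_prop : Continuous fun z : ℝ =>
          ((z:ℂ) - Complex.I * ε)^M)).aestronglyMeasurable.restrict).mul
          (cφ3.aestronglyMeasurable measurableSet_Ioi)
      · exact ((cE4.mul (by fun_prop : Continuous fun z : ℝ =>
          (-(z:ℂ) - Complex.I * ε)^M)).aestronglyMeasurable.restrict).mul
          (cφ4.aestronglyMeasurable measurableSet_Ioi)
    · rintro p hp z hz
      have hx : p.1 ≤ ξ := hp.1
      have ht : τ ≤ p.2 := hp.2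
      have hzp : 0 < z := hBpos.trans hz
      have hzB : B ≤ z := le_of_lt hz
      have hQ : 0 ≤ 3*z^2 - ε^2 - a := by nlinarith [le_abs_self a]
      have hexp : Real.exp (ε*p.1 - p.2*ε*(3*z^2-ε^2-a))
          ≤ Real.exp (ε*ξ + τ*ε*(ε^2+a)) * Real.exp (-(3*τ*ε)*z^2) := by
        rw [← Real.exp_add]
        apply Real.exp_le_exp.2
        nlinarith [mul_nonneg (mul_nonneg (sub_nonneg.2 ht) hε.le) hQ,
          mul_le_mul_of_nonneg_left hx hε.le]
      have habs1 : ‖(z:ℂ) - Complex.I * ε‖ ≤ (1+ε/B)*z := by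
        calc ‖(z:ℂ) - Complex.I * ε‖ ≤ ‖(z:ℂ)‖ + ‖Complex.I * (ε:ℂ)‖ := norm_sub_le _ _
          _ = z + ε := by
              rw [norm_mul, Complex.norm_I, Complex.norm_real, Complex.norm_real,
                Real.norm_eq_abs, Real.norm_eq_abs, abs_of_pos hzp, abs_of_pos hε, one_mul]
          _ ≤ (1+ε/B)*z := by
              rw [add_mul, one_mul]
              refine add_le_add_right ?_ z
              rw [div_mul_eq_mul_div, le_div_iff₀ hBpos]
              exact mul_le_mul_of_nonneg_left hzB hε.le
      have habs2 : ‖-(z:ℂ) - Complex.I * ε‖ ≤ (1+ε/B)*z := by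
        calc ‖-(z:ℂ) - Complex.I * ε‖ ≤ ‖-(z:ℂ)‖ + ‖Complex.I * (ε:ℂ)‖ := norm_sub_le _ _
          _ = z + ε := by
              rw [norm_neg, norm_mul, Complex.norm_I, Complex.norm_real, Complex.norm_real,
                Real.norm_eq_abs, Real.norm_eq_abs, abs_of_pos hzp, abs_of_pos hε, one_mul]
          _ ≤ (1+ε/B)*z := by
              rw [add_mul, one_mul]
              refine add_le_add_right ?_ z
              rw [div_mul_eq_mul_div, le_div_iff₀ hBpos]
              exact mul_le_mul_of_nonneg_left hzB hε.le
      have hE1 : ‖E a ((z:ℂ) - Complex.I * ε) p.1 p.2‖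
          = Real.exp (ε*p.1 - p.2*ε*(3*z^2-ε^2-a)) := by
        rw [E_abs_contour]
      have hE2 : ‖E a (-(z:ℂ) - Complex.I * ε) p.1 p.2‖
          = Real.exp (ε*p.1 - p.2*ε*(3*z^2-ε^2-a)) := by
        have hc : -(z:ℂ) - Complex.I * ε = ((-z : ℝ):ℂ) - Complex.I * ε := by push_cast; ring
        rw [hc, E_abs_contour]
        congr 1
        ring
      have hφ1 : ‖φ ((z:ℂ) - Complex.I * ε)‖ ≤ Φ := by
        exact hΦ z (le_abs.2 (Or.inl hzB))
      have hφ2 : ‖φ (-(z:ℂ) - Complex.I * ε)‖ ≤ Φ := by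
        have hc : -(z:ℂ) - Complex.I * ε = ((-z : ℝ):ℂ) - Complex.I * ε := by push_cast; ring
        rw [hc]
        exact hΦ (-z) (le_abs.2 (Or.inr (show B ≤ -(-z) by rw [neg_neg]; exact hzB)))
      have ht1 : ‖E a ((z:ℂ) - Complex.I * ε) p.1 p.2 * ((z:ℂ) - Complex.I * ε)^M
            * φ ((z:ℂ) - Complex.I * ε)‖
          ≤ Real.exp (ε*ξ + τ*ε*(ε^2+a)) * Real.exp (-(3*τ*ε)*z^2) * ((1+ε/B)*z)^M * Φ := by
        rw [norm_mul, norm_mul, norm_pow, hE1]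
        exact mul_le_mul (mul_le_mul hexp (pow_le_pow_left₀ (norm_nonneg _) habs1 M)
          (by positivity) (by positivity)) hφ1 (norm_nonneg _) (by positivity)
      have ht2 : ‖E a (-(z:ℂ) - Complex.I * ε) p.1 p.2 * (-(z:ℂ) - Complex.I * ε)^M
            * φ (-(z:ℂ) - Complex.I * ε)‖
          ≤ Real.exp (ε*ξ + τ*ε*(ε^2+a)) * Real.exp (-(3*τ*ε)*z^2) * ((1+ε/B)*z)^M * Φ := by
        rw [norm_mul, norm_mul, norm_pow, hE2]
        exact mul_le_mul (mul_le_mul hexp (pow_le_pow_left₀ (norm_nonneg _) habs2 M)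
          (by positivity) (by positivity)) hφ2 (norm_nonneg _) (by positivity)
      calc ‖E a ((z:ℂ) - Complex.I * ε) p.1 p.2 * ((z:ℂ) - Complex.I * ε)^M
              * φ ((z:ℂ) - Complex.I * ε)
            + E a (-(z:ℂ) - Complex.I * ε) p.1 p.2 * (-(z:ℂ) - Complex.I * ε)^M
              * φ (-(z:ℂ) - Complex.I * ε)‖
          ≤ _ + _ := norm_add_le _ _
        _ ≤ Real.exp (ε*ξ + τ*ε*(ε^2+a)) * Real.exp (-(3*τ*ε)*z^2) * ((1+ε/B)*z)^M * Φ
            + Real.exp (ε*ξ + τ*ε*(ε^2+a)) * Real.exp (-(3*τ*ε)*z^2) * ((1+ε/B)*z)^M * Φ :=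
            add_le_add ht1 ht2
        _ = (2 * Real.exp (ε*ξ + τ*ε*(ε^2+a)) * (1+ε/B)^M * Φ)
            * (z^M * Real.exp (-(3*τ*ε) * z^2)) := by
            rw [mul_pow]; ring
  refine ⟨fun p => (∫ lam in (-B)..B, E a lam p.1 p.2 * (lam : ℂ) ^ M * θ lam)
      + (∫ lam in Ioi B,
          (E a lam p.1 p.2 * (lam : ℂ) ^ M * ψ lam
            + E a (-(lam : ℂ)) p.1 p.2 * (-(lam : ℂ)) ^ M * ψ (-lam)))
      + (∫ z in Ioi B,
          (E a ((z : ℂ) - Complex.I * ε) p.1 p.2 * ((z : ℂ) - Complex.I * ε) ^ M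
              * φ ((z : ℂ) - Complex.I * ε)
            + E a (-(z : ℂ) - Complex.I * ε) p.1 p.2 * (-(z : ℂ) - Complex.I * ε) ^ M
              * φ (-(z : ℂ) - Complex.I * ε)))
      + Complex.I * (∫ y in (0:ℝ)..ε,
          E a (-(B : ℂ) - Complex.I * y) p.1 p.2 * (-(B : ℂ) - Complex.I * y) ^ M
            * φ (-(B : ℂ) - Complex.I * y))
      - Complex.I * (∫ y in (0:ℝ)..ε,
          E a ((B : ℂ) - Complex.I * y) p.1 p.2 * ((B : ℂ) - Complex.I * y) ^ M
            * φ ((B : ℂ) - Complex.I * y)), ?_⟩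
  exact ((((tuo_const _).add h1).add h2).add (tuo_const _)).sub (tuo_const _)
end

section
/- Fix a ∈ ℝ, ε > 0, b := √((|a| + ε²)/3), B > b, τ > 0, and ξ ∈ ℝ. Let φ be a complex-valued function defined on {z − iy : z ∈ ℝ, |z| ≥ B, 0 ≤ y ≤ ε}, continuous on each vertical segment {C − iy : y ∈ [0, ε]} for |C| ≥ B. Then for every real C with |C| ≥ B, every x ≤ ξ and every t ≥ τ, ∫_{0}^{ε} |E(C − iy; x, t) φ(C − iy)| dy ≤ ( max_{y∈[0,ε]} |φ(C − iy)| ) · ∫_{0}^{ε} exp(−3y(B² − b²)τ + ξy) dy. Consequently, if max_{y∈[0,ε]} |φ(C − iy)| → 0 as C → ±∞, then sup{ ∫_{0}^{ε} |E(C − iy; x, t) φ(C − iy)| dy : x ≤ ξ, t ≥ τ } → 0 as C → ±∞. -/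
open Complex Filter Set MeasureTheory intervalIntegral

/-- with `b = √((|a| + ε²)/3)`, `B > b`, `τ > 0`, `ξ ∈ ℝ`, and `φ`
continuous on each vertical segment `{C − iy : y ∈ [0, ε]}` for `|C| ≥ B`: for every real
`C` with `|C| ≥ B`, every `x ≤ ξ` and `t ≥ τ`,
`∫₀^ε |E(C − iy; x, t)φ(C − iy)| dy ≤ (max_{y∈[0,ε]} |φ(C − iy)|) ∫₀^ε e^{−3y(B²−b²)τ + ξy} dy`,
and consequently, if `max_{y∈[0,ε]} |φ(C − iy)| → 0` as `C → ±∞`, then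
`sup{∫₀^ε |E(C − iy; x, t)φ(C − iy)| dy : x ≤ ξ, t ≥ τ} → 0` as `C → ±∞`. -/
theorem stmt_4 (a ε : ℝ) (hε : 0 < ε) (b B τ ξ : ℝ)
    (hb : b = Real.sqrt ((|a| + ε ^ 2) / 3)) (hB : b < B) (hτ : 0 < τ)
    (φ : ℂ → ℂ)
    (hcont : ∀ C : ℝ, B ≤ |C| →
      ContinuousOn (fun y : ℝ => φ ((C : ℂ) - Complex.I * y)) (Icc 0 ε)) :
    (∀ C x t : ℝ, B ≤ |C| → x ≤ ξ → τ ≤ t →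
      (∫ y in (0:ℝ)..ε,
          ‖E a ((C : ℂ) - Complex.I * y) x t * φ ((C : ℂ) - Complex.I * y)‖)
        ≤ sSup ((fun y : ℝ => ‖φ ((C : ℂ) - Complex.I * y)‖) '' Icc 0 ε)
            * ∫ y in (0:ℝ)..ε, Real.exp (-3 * y * (B ^ 2 - b ^ 2) * τ + ξ * y)) ∧
    ((Tendsto (fun C : ℝ =>
          sSup ((fun y : ℝ => ‖φ ((C : ℂ) - Complex.I * y)‖) '' Icc 0 ε))
        atTop (nhds 0) ∧
      Tendsto (fun C : ℝ =>
          sSup ((fun y : ℝ => ‖φ ((C : ℂ) - Complex.I * y)‖) '' Icc 0 ε))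
        atBot (nhds 0)) →
      (Tendsto (fun C : ℝ =>
          sSup ((fun p : ℝ × ℝ =>
              ∫ y in (0:ℝ)..ε,
                ‖E a ((C : ℂ) - Complex.I * y) p.1 p.2
                  * φ ((C : ℂ) - Complex.I * y)‖) '' (Iic ξ ×ˢ Ici τ)))
        atTop (nhds 0) ∧
       Tendsto (fun C : ℝ =>
          sSup ((fun p : ℝ × ℝ =>
              ∫ y in (0:ℝ)..ε,
                ‖E a ((C : ℂ) - Complex.I * y) p.1 p.2
                  * φ ((C : ℂ) - Complex.I * y)‖) '' (Iic ξ ×ˢ Ici τ)))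
        atBot (nhds 0))) := by
  have hb0 : 0 ≤ b := hb ▸ Real.sqrt_nonneg _
  have hb2 : 3 * b ^ 2 = |a| + ε ^ 2 := by
    rw [hb, Real.sq_sqrt (by positivity)]; ring
  have hB0 : 0 < B := lt_of_le_of_lt hb0 hB
  -- pointwise bound on |E|
  have key : ∀ C x t y : ℝ, B ≤ |C| → x ≤ ξ → τ ≤ t → y ∈ Icc 0 ε →
      ‖E a ((C : ℂ) - Complex.I * y) x t‖
        ≤ Real.exp (-3 * y * (B ^ 2 - b ^ 2) * τ + ξ * y) := by
    intro C x t y hC hx ht hy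
    rw [E, Complex.norm_exp, Real.exp_le_exp]
    have hre : (Complex.I * ((C:ℂ) - Complex.I * y) * x -
        Complex.I * (((C:ℂ) - Complex.I * y) ^ 3 - (a:ℂ) * ((C:ℂ) - Complex.I * y)) * t).re
        = x * y - t * (3 * C ^ 2 * y - y ^ 3 - a * y) := by
      simp [Complex.ext_iff, pow_succ, Complex.mul_re, Complex.mul_im]
      ring
    rw [hre]
    obtain ⟨hy0, hyε⟩ := hy
    have hC2 : B ^ 2 ≤ C ^ 2 := by nlinarith [_root_.sq_abs C]
    have hy2 : y ^ 2 ≤ ε ^ 2 := by nlinarith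
    have h2 : 3 * (B ^ 2 - b ^ 2) ≤ 3 * C ^ 2 - y ^ 2 - a := by
      have := le_abs_self a; linarith
    have h3 : 0 ≤ 3 * (B ^ 2 - b ^ 2) := by nlinarith
    have h1 : x * y ≤ ξ * y := mul_le_mul_of_nonneg_right hx hy0
    have h4 : τ * (y * (3 * (B ^ 2 - b ^ 2))) ≤ t * (y * (3 * C ^ 2 - y ^ 2 - a)) :=
      mul_le_mul ht (mul_le_mul_of_nonneg_left h2 hy0)
        (mul_nonneg hy0 h3) (le_trans hτ.le ht)
    nlinarith [h1, h4]
  -- part 1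
  have part1 : ∀ C x t : ℝ, B ≤ |C| → x ≤ ξ → τ ≤ t →
      (∫ y in (0:ℝ)..ε,
          ‖E a ((C : ℂ) - Complex.I * y) x t * φ ((C : ℂ) - Complex.I * y)‖)
        ≤ sSup ((fun y : ℝ => ‖φ ((C : ℂ) - Complex.I * y)‖) '' Icc 0 ε)
            * ∫ y in (0:ℝ)..ε, Real.exp (-3 * y * (B ^ 2 - b ^ 2) * τ + ξ * y) := by
    intro C x t hC hx ht
    set M := sSup ((fun y : ℝ => ‖φ ((C : ℂ) - Complex.I * y)‖) '' Icc 0 ε)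
      with hM
    have hφcont := hcont C hC
    have habscont : ContinuousOn (fun y : ℝ => ‖φ ((C : ℂ) - Complex.I * y)‖)
        (Icc 0 ε) := continuous_norm.comp_continuousOn hφcont
    have hbdd : BddAbove ((fun y : ℝ => ‖φ ((C : ℂ) - Complex.I * y)‖) '' Icc 0 ε) :=
      (isCompact_Icc.image_of_continuousOn habscont).bddAbove
    have hMle : ∀ y ∈ Icc (0:ℝ) ε, ‖φ ((C : ℂ) - Complex.I * y)‖ ≤ M :=
      fun y hy => le_csSup hbdd (mem_image_of_mem _ hy)
    have hEcont : Continuous fun y : ℝ => E a ((C : ℂ) - Complex.I * y) x t := by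
      unfold E; fun_prop
    have hint1 : IntervalIntegrable
        (fun y : ℝ => ‖E a ((C : ℂ) - Complex.I * y) x t
          * φ ((C : ℂ) - Complex.I * y)‖) volume 0 ε := by
      apply ContinuousOn.intervalIntegrable
      rw [uIcc_of_le hε.le]
      exact continuous_norm.comp_continuousOn (hEcont.continuousOn.mul hφcont)
    have hint2 : IntervalIntegrable
        (fun y : ℝ => M * Real.exp (-3 * y * (B ^ 2 - b ^ 2) * τ + ξ * y)) volume 0 ε :=
      (by fun_prop : Continuous fun y : ℝ =>
        M * Real.exp (-3 * y * (B ^ 2 - b ^ 2) * τ + ξ * y)).intervalIntegrable 0 ε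
    have hle : ∀ y ∈ Icc (0:ℝ) ε,
        ‖E a ((C : ℂ) - Complex.I * y) x t * φ ((C : ℂ) - Complex.I * y)‖
          ≤ M * Real.exp (-3 * y * (B ^ 2 - b ^ 2) * τ + ξ * y) := by
      intro y hy
      rw [norm_mul, mul_comm M]
      exact mul_le_mul (key C x t y hC hx ht hy) (hMle y hy)
        (norm_nonneg _) (Real.exp_nonneg _)
    calc (∫ y in (0:ℝ)..ε,
          ‖E a ((C : ℂ) - Complex.I * y) x t * φ ((C : ℂ) - Complex.I * y)‖)
        ≤ ∫ y in (0:ℝ)..ε, M * Real.exp (-3 * y * (B ^ 2 - b ^ 2) * τ + ξ * y) :=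
          intervalIntegral.integral_mono_on hε.le hint1 hint2 hle
      _ = M * ∫ y in (0:ℝ)..ε, Real.exp (-3 * y * (B ^ 2 - b ^ 2) * τ + ξ * y) :=
          intervalIntegral.integral_const_mul M _
  refine ⟨part1, ?_⟩
  rintro ⟨hTop, hBot⟩
  set K := ∫ y in (0:ℝ)..ε, Real.exp (-3 * y * (B ^ 2 - b ^ 2) * τ + ξ * y) with hK
  set S : ℝ → ℝ := fun C =>
    sSup ((fun p : ℝ × ℝ =>
        ∫ y in (0:ℝ)..ε,
          ‖E a ((C : ℂ) - Complex.I * y) p.1 p.2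
            * φ ((C : ℂ) - Complex.I * y)‖) '' (Iic ξ ×ˢ Ici τ)) with hS
  set M : ℝ → ℝ := fun C =>
    sSup ((fun y : ℝ => ‖φ ((C : ℂ) - Complex.I * y)‖) '' Icc 0 ε) with hMdef
  have hbound : ∀ C : ℝ, B ≤ |C| → 0 ≤ S C ∧ S C ≤ M C * K := by
    intro C hC
    constructor
    · apply Real.sSup_nonneg
      rintro r ⟨p, _, rfl⟩
      exact intervalIntegral.integral_nonneg hε.le fun y _ => norm_nonneg _
    · apply csSup_le ⟨_, mem_image_of_mem _ (show (ξ, τ) ∈ Iic ξ ×ˢ Ici τ from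
        mem_prod.2 ⟨mem_Iic.2 le_rfl, mem_Ici.2 le_rfl⟩)⟩
      rintro r ⟨p, hp, rfl⟩
      exact part1 C p.1 p.2 hC hp.1 hp.2
  have hmulTop : Tendsto (fun C => M C * K) atTop (nhds 0) := by
    simpa using hTop.mul_const K
  have hmulBot : Tendsto (fun C => M C * K) atBot (nhds 0) := by
    simpa using hBot.mul_const K
  constructor
  · refine tendsto_of_tendsto_of_tendsto_of_le_of_le' tendsto_const_nhds hmulTop ?_ ?_
    · filter_upwards [eventually_ge_atTop B] with C hC
      exact (hbound C (by rw [_root_.abs_of_nonneg (le_trans hB0.le hC)]; exact hC)).1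
    · filter_upwards [eventually_ge_atTop B] with C hC
      exact (hbound C (by rw [_root_.abs_of_nonneg (le_trans hB0.le hC)]; exact hC)).2
  · refine tendsto_of_tendsto_of_tendsto_of_le_of_le' tendsto_const_nhds hmulBot ?_ ?_
    · filter_upwards [eventually_le_atBot (-B)] with C hC
      exact (hbound C (by rw [abs_of_nonpos (by linarith)]; linarith)).1
    · filter_upwards [eventually_le_atBot (-B)] with C hC
      exact (hbound C (by rw [abs_of_nonpos (by linarith)]; linarith)).2
end

section
/- The interval integrals I₂(t) := ∫_{1/(2√|t|)}^{1/√|t|} e^{iλ}(1 − e^{iλ³ t}) λ^{−1} dλ, defined for real t ≠ 0, satisfy I₂(t) → 0 as t → 0 through nonzero real values. -/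
open Complex Filter intervalIntegral
open Set

lemma norm_exp_I_real (r : ℝ) : ‖Complex.exp (Complex.I * (r : ℂ))‖ = 1 := by
  rw [mul_comm]; exact Complex.norm_exp_ofReal_mul_I r

lemma osc (a b : ℝ) (hab : a ≤ b) (φ φ' g ψ ψ' : ℝ → ℝ)
    (hφ : ∀ x ∈ Set.Icc a b, HasDerivAt φ (φ' x) x)
    (hψ : ∀ x ∈ Set.Icc a b, HasDerivAt ψ (ψ' x) x)
    (hg : ContinuousOn g (Set.Icc a b))
    (hψ'c : ContinuousOn ψ' (Set.Icc a b))
    (hrel : ∀ x ∈ Set.Icc a b, ψ x * φ' x = g x) :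
    ‖∫ x in a..b, Complex.exp (Complex.I * (φ x : ℂ)) * (g x : ℂ)‖
      ≤ |ψ a| + |ψ b| + ∫ x in a..b, |ψ' x| := by
  have huIcc : Set.uIcc a b = Set.Icc a b := Set.uIcc_of_le hab
  set E : ℝ → ℂ := fun x => Complex.exp (Complex.I * (φ x : ℂ)) with hE
  have hE1 : ∀ x, ‖E x‖ = 1 := fun x => norm_exp_I_real (φ x)
  have hφc : ContinuousOn φ (Set.Icc a b) := fun x hx =>
    (hφ x hx).continuousAt.continuousWithinAt
  have hψc : ContinuousOn ψ (Set.Icc a b) := fun x hx =>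
    (hψ x hx).continuousAt.continuousWithinAt
  have hEc : ContinuousOn E (Set.Icc a b) := by
    apply Complex.continuous_exp.comp_continuousOn
    exact continuousOn_const.mul (Complex.continuous_ofReal.comp_continuousOn hφc)
  have key : ∀ x ∈ Set.uIcc a b,
      HasDerivAt (fun y => E y * (ψ y : ℂ)) (E x * (Complex.I * (g x : ℂ) + (ψ' x : ℂ))) x := by
    intro x hx
    rw [huIcc] at hx
    have h1 : HasDerivAt (fun y : ℝ => ((φ y : ℂ))) ((φ' x : ℂ)) x := (hφ x hx).ofReal_comp
    have h2 : HasDerivAt (fun y : ℝ => Complex.I * (φ y : ℂ)) (Complex.I * (φ' x : ℂ)) x :=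
      h1.const_mul Complex.I
    have h3 : HasDerivAt E (Complex.exp (Complex.I * (φ x : ℂ)) * (Complex.I * (φ' x : ℂ))) x :=
      h2.cexp
    have h4 : HasDerivAt (fun y : ℝ => ((ψ y : ℂ))) ((ψ' x : ℂ)) x := (hψ x hx).ofReal_comp
    have h5 := h3.mul h4
    refine h5.congr_deriv ?_
    have hg' : ((g x : ℂ)) = (ψ x : ℂ) * (φ' x : ℂ) := by
      rw [← Complex.ofReal_mul]; exact congrArg Complex.ofReal (hrel x hx).symm
    rw [hg']; simp only [hE]; ring
  have hintc : ContinuousOn (fun x => E x * (Complex.I * (g x : ℂ) + (ψ' x : ℂ))) (Set.Icc a b) := by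
    apply hEc.mul
    exact (continuousOn_const.mul (Complex.continuous_ofReal.comp_continuousOn hg)).add
      (Complex.continuous_ofReal.comp_continuousOn hψ'c)
  have hint : IntervalIntegrable (fun x => E x * (Complex.I * (g x : ℂ) + (ψ' x : ℂ)))
      MeasureTheory.volume a b := by
    apply ContinuousOn.intervalIntegrable; rwa [huIcc]
  have hFTC := intervalIntegral.integral_eq_sub_of_hasDerivAt key hint
  have hint1 : IntervalIntegrable (fun x => E x * (g x : ℂ)) MeasureTheory.volume a b := by
    apply ContinuousOn.intervalIntegrable; rw [huIcc]
    exact hEc.mul (Complex.continuous_ofReal.comp_continuousOn hg)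
  have hint2 : IntervalIntegrable (fun x => E x * (ψ' x : ℂ)) MeasureTheory.volume a b := by
    apply ContinuousOn.intervalIntegrable; rw [huIcc]
    exact hEc.mul (Complex.continuous_ofReal.comp_continuousOn hψ'c)
  have hsplit : (∫ x in a..b, E x * (Complex.I * (g x : ℂ) + (ψ' x : ℂ)))
      = Complex.I * (∫ x in a..b, E x * (g x : ℂ)) + ∫ x in a..b, E x * (ψ' x : ℂ) := by
    rw [← intervalIntegral.integral_const_mul]
    rw [← intervalIntegral.integral_add (hint1.const_mul Complex.I) hint2]
    apply intervalIntegral.integral_congr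
    intro x hx; simp; ring
  have heq : Complex.I * (∫ x in a..b, E x * (g x : ℂ))
      = E b * (ψ b : ℂ) - E a * (ψ a : ℂ) - ∫ x in a..b, E x * (ψ' x : ℂ) := by
    rw [← hFTC, hsplit]; ring
  have hnorm : ‖∫ x in a..b, E x * (g x : ℂ)‖
      = ‖Complex.I * (∫ x in a..b, E x * (g x : ℂ))‖ := by
    rw [norm_mul, Complex.norm_I, one_mul]
  show ‖∫ x in a..b, E x * (g x : ℂ)‖ ≤ _
  rw [hnorm, heq]
  have h6 : ‖∫ x in a..b, E x * (ψ' x : ℂ)‖ ≤ ∫ x in a..b, |ψ' x| := by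
    calc ‖∫ x in a..b, E x * (ψ' x : ℂ)‖ ≤ ∫ x in a..b, ‖E x * (ψ' x : ℂ)‖ :=
          intervalIntegral.norm_integral_le_integral_norm hab
      _ = ∫ x in a..b, |ψ' x| := by
          apply intervalIntegral.integral_congr; intro x hx
          simp [hE1]
  calc ‖E b * (ψ b : ℂ) - E a * (ψ a : ℂ) - ∫ x in a..b, E x * (ψ' x : ℂ)‖
      ≤ ‖E b * (ψ b : ℂ)‖ + ‖E a * (ψ a : ℂ)‖ + ‖∫ x in a..b, E x * (ψ' x : ℂ)‖ := by
        exact (norm_sub_le _ _).trans (by gcongr; exact norm_sub_le _ _)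
    _ ≤ |ψ a| + |ψ b| + ∫ x in a..b, |ψ' x| := by
        rw [norm_mul, norm_mul, hE1, hE1, one_mul, one_mul, Complex.norm_real, Complex.norm_real]
        have := h6; simp only [Real.norm_eq_abs]; linarith

lemma osc_mono (a b : ℝ) (hab : a ≤ b) (φ φ' g ψ ψ' : ℝ → ℝ)
    (hφ : ∀ x ∈ Set.Icc a b, HasDerivAt φ (φ' x) x)
    (hψ : ∀ x ∈ Set.Icc a b, HasDerivAt ψ (ψ' x) x)
    (hg : ContinuousOn g (Set.Icc a b))
    (hψ'c : ContinuousOn ψ' (Set.Icc a b))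
    (hrel : ∀ x ∈ Set.Icc a b, ψ x * φ' x = g x)
    (hsign : (∀ x ∈ Set.Icc a b, 0 ≤ ψ' x) ∨ (∀ x ∈ Set.Icc a b, ψ' x ≤ 0)) :
    ‖∫ x in a..b, Complex.exp (Complex.I * (φ x : ℂ)) * (g x : ℂ)‖
      ≤ 2 * (|ψ a| + |ψ b|) := by
  have huIcc : Set.uIcc a b = Set.Icc a b := Set.uIcc_of_le hab
  have h := osc a b hab φ φ' g ψ ψ' hφ hψ hg hψ'c hrel
  have hint : IntervalIntegrable ψ' MeasureTheory.volume a b := by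
    apply ContinuousOn.intervalIntegrable; rwa [huIcc]
  have hFTC : ∫ x in a..b, ψ' x = ψ b - ψ a :=
    intervalIntegral.integral_eq_sub_of_hasDerivAt (fun x hx => hψ x (huIcc ▸ hx)) hint
  have habs : ∫ x in a..b, |ψ' x| ≤ |ψ a| + |ψ b| := by
    rcases hsign with hp | hn
    · have : ∫ x in a..b, |ψ' x| = ∫ x in a..b, ψ' x := by
        apply intervalIntegral.integral_congr; intro x hx
        exact abs_of_nonneg (hp x (huIcc ▸ hx))
      rw [this, hFTC]
      have := abs_le.mp (le_refl |ψ a|); 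
      have h1 := le_abs_self (ψ b); have h2 := neg_abs_le (ψ a); linarith
    · have : ∫ x in a..b, |ψ' x| = ∫ x in a..b, -ψ' x := by
        apply intervalIntegral.integral_congr; intro x hx
        exact abs_of_nonpos (hn x (huIcc ▸ hx))
      rw [this, intervalIntegral.integral_neg, hFTC]
      have h1 := le_abs_self (ψ a); have h2 := neg_abs_le (ψ b); linarith
  linarith [abs_nonneg (ψ a), abs_nonneg (ψ b)]
lemma pieceB (t a b : ℝ) (ha : 0 < a) (hab : a ≤ b)
    (hne : ∀ x ∈ Set.Icc a b, x + 3*t*x^3 ≠ 0)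
    (hsign : (∀ x ∈ Set.Icc a b, 0 ≤ 1 + 9*t*x^2) ∨ (∀ x ∈ Set.Icc a b, 1 + 9*t*x^2 ≤ 0)) :
    ‖∫ x in a..b, Complex.exp (Complex.I * ((x:ℂ) + (t:ℂ)*(x:ℂ)^3)) * (x:ℂ)⁻¹‖
      ≤ 2 * (|a + 3*t*a^3|⁻¹ + |b + 3*t*b^3|⁻¹) := by
  set φ : ℝ → ℝ := fun x => x + t*x^3 with hφdef
  set φ' : ℝ → ℝ := fun x => 1 + 3*t*x^2 with hφ'def
  set g : ℝ → ℝ := fun x => x⁻¹ with hgdef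
  set u : ℝ → ℝ := fun x => x + 3*t*x^3 with hudef
  set ψ : ℝ → ℝ := fun x => (x + 3*t*x^3)⁻¹ with hψdef
  set ψ' : ℝ → ℝ := fun x => -(1 + 9*t*x^2) / (x + 3*t*x^3)^2 with hψ'def
  have hxpos : ∀ x ∈ Set.Icc a b, 0 < x := fun x hx => lt_of_lt_of_le ha hx.1
  have hφd : ∀ x ∈ Set.Icc a b, HasDerivAt φ (φ' x) x := by
    intro x hx
    have : HasDerivAt (fun x : ℝ => x + t*x^3) (1 + t*(3*x^2)) x := by
      exact (hasDerivAt_id x).add (((hasDerivAt_pow 3 x).const_mul t).congr_deriv (by ring))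
    exact this.congr_deriv (by simp only [hφ'def]; ring)
  have hψd : ∀ x ∈ Set.Icc a b, HasDerivAt ψ (ψ' x) x := by
    intro x hx
    have hu : HasDerivAt (fun x : ℝ => x + 3*t*x^3) (1 + 9*t*x^2) x := by
      have : HasDerivAt (fun x : ℝ => x + 3*t*x^3) (1 + 3*t*(3*x^2)) x :=
        (hasDerivAt_id x).add (((hasDerivAt_pow 3 x).const_mul (3*t)).congr_deriv (by ring))
      exact this.congr_deriv (by ring)
    exact (hu.inv (hne x hx))
  have hg : ContinuousOn g (Set.Icc a b) :=
    continuousOn_id.inv₀ (fun x hx => (hxpos x hx).ne')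
  have huc : ContinuousOn (fun x : ℝ => x + 3*t*x^3) (Set.Icc a b) := by fun_prop
  have hψ'c : ContinuousOn ψ' (Set.Icc a b) := by
    apply ContinuousOn.div
    · fun_prop
    · exact (huc.pow 2)
    · intro x hx; exact pow_ne_zero 2 (hne x hx)
  have hrel : ∀ x ∈ Set.Icc a b, ψ x * φ' x = g x := by
    intro x hx
    have hx0 := (hxpos x hx).ne'
    have hu0 := hne x hx
    simp only [hψdef, hφ'def, hgdef]
    rw [inv_mul_eq_div, div_eq_iff hu0, inv_mul_eq_div, eq_div_iff hx0]
    ring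
  have hsign' : (∀ x ∈ Set.Icc a b, 0 ≤ ψ' x) ∨ (∀ x ∈ Set.Icc a b, ψ' x ≤ 0) := by
    rcases hsign with hp | hn
    · right; intro x hx
      apply div_nonpos_of_nonpos_of_nonneg
      · linarith [hp x hx]
      · positivity
    · left; intro x hx
      apply div_nonneg
      · linarith [hn x hx]
      · positivity
  have h := osc_mono a b hab φ φ' g ψ ψ' hφd hψd hg hψ'c hrel hsign'
  have heq : (∫ x in a..b, Complex.exp (Complex.I * ((x:ℂ) + (t:ℂ)*(x:ℂ)^3)) * (x:ℂ)⁻¹)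
      = ∫ x in a..b, Complex.exp (Complex.I * ((φ x : ℝ) : ℂ)) * ((g x : ℝ) : ℂ) := by
    apply intervalIntegral.integral_congr; intro x hx
    simp only [hφdef, hgdef]
    push_cast
    ring_nf
  rw [heq]
  calc ‖∫ x in a..b, Complex.exp (Complex.I * ((φ x : ℝ) : ℂ)) * ((g x : ℝ) : ℂ)‖
      ≤ 2 * (|ψ a| + |ψ b|) := h
    _ = 2 * (|a + 3*t*a^3|⁻¹ + |b + 3*t*b^3|⁻¹) := by
        simp only [hψdef, abs_inv]
lemma inv_bound {v M : ℝ} (hM : 0 < M) (h : M⁻¹ ≤ v) : |v|⁻¹ ≤ M := by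
  have hv : 0 < v := lt_of_lt_of_le (by positivity) h
  rw [abs_of_pos hv, inv_le_comm₀ hv hM]
  exact h

lemma normf (t x : ℝ) :
    ‖Complex.exp (Complex.I * ((x:ℂ) + (t:ℂ)*(x:ℂ)^3)) * (x:ℂ)⁻¹‖ = |x|⁻¹ := by
  rw [norm_mul, show ((x:ℂ) + (t:ℂ)*(x:ℂ)^3) = (((x + t*x^3 : ℝ)):ℂ) by push_cast; ring,
    norm_exp_I_real, one_mul, norm_inv, Complex.norm_real, Real.norm_eq_abs]

lemma intf (t a b : ℝ) (ha : 0 < a) (hab : a ≤ b) :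
    IntervalIntegrable (fun x : ℝ => Complex.exp (Complex.I * ((x:ℂ) + (t:ℂ)*(x:ℂ)^3)) * (x:ℂ)⁻¹)
      MeasureTheory.volume a b := by
  apply ContinuousOn.intervalIntegrable
  rw [Set.uIcc_of_le hab]
  apply ContinuousOn.mul
  · fun_prop
  · apply ContinuousOn.inv₀ (by fun_prop)
    intro x hx
    exact_mod_cast (show x ≠ 0 from (lt_of_lt_of_le ha hx.1).ne')

lemma est_pos (s t : ℝ) (hs : 0 < s) (ht : 0 ≤ t) :
    ‖∫ x in (1/(2*s))..(1/s), Complex.exp (Complex.I * ((x:ℂ) + (t:ℂ)*(x:ℂ)^3)) * (x:ℂ)⁻¹‖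
      ≤ 6*s := by
  set a := 1/(2*s) with hadef
  set b := 1/s with hbdef
  have ha0 : 0 < a := by positivity
  have hb0 : 0 < b := by positivity
  have hab : a ≤ b := by
    rw [hadef, hbdef, div_le_div_iff₀ (by positivity) (by positivity)]; nlinarith
  have hxpos : ∀ x ∈ Set.Icc a b, 0 < x := fun x hx => lt_of_lt_of_le ha0 hx.1
  have hne : ∀ x ∈ Set.Icc a b, x + 3*t*x^3 ≠ 0 := by
    intro x hx
    have := hxpos x hx
    have : 0 < x + 3*t*x^3 := by positivity
    exact this.ne'
  have h := pieceB t a b ha0 hab hne (Or.inl (fun x hx => by positivity))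
  have hba : |a + 3*t*a^3|⁻¹ ≤ 2*s := by
    apply inv_bound (by positivity)
    have : (2*s)⁻¹ = a := by rw [hadef, one_div]
    nlinarith [pow_pos ha0 3]
  have hbb : |b + 3*t*b^3|⁻¹ ≤ s := by
    apply inv_bound hs
    have : s⁻¹ = b := by rw [hbdef, one_div]
    nlinarith [pow_pos hb0 3]
  calc ‖∫ x in a..b, Complex.exp (Complex.I * ((x:ℂ) + (t:ℂ)*(x:ℂ)^3)) * (x:ℂ)⁻¹‖
      ≤ 2 * (|a + 3*t*a^3|⁻¹ + |b + 3*t*b^3|⁻¹) := h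
    _ ≤ 2 * (2*s + s) := by linarith
    _ = 6*s := by ring
set_option maxHeartbeats 2000000 in
lemma est_neg (q t : ℝ) (hq : 0 < q) (hq31 : q ≤ 1/31) (ht : t = -(q^4)) :
    ‖∫ x in (1/(2*q^2))..(1/q^2), Complex.exp (Complex.I * ((x:ℂ) + (t:ℂ)*(x:ℂ)^3)) * (x:ℂ)⁻¹‖
      ≤ 13*q := by
  have hr3sq : Real.sqrt 3 ^ 2 = 3 := Real.sq_sqrt (by norm_num)
  have hr30 : 0 ≤ Real.sqrt 3 := Real.sqrt_nonneg 3
  have h17 : 1.7 < Real.sqrt 3 := by nlinarith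
  have h18 : Real.sqrt 3 < 1.8 := by nlinarith
  set r3 := Real.sqrt 3 with hr3def
  have hr3pos : 0 < r3 := by linarith
  set a := 1/(2*q^2) with hadef
  set b := 1/(q^2) with hbdef
  set c := 1/(r3*q^2) - 1/q with hcdef
  set d := 1/(r3*q^2) + 1/q with hddef
  have hq2 : (0:ℝ) < q^2 := by positivity
  have ha0 : 0 < a := by rw [hadef]; positivity
  have hcval : c = (1 - r3*q)/(r3*q^2) := by rw [hcdef]; field_simp
  have hdval : d = (1 + r3*q)/(r3*q^2) := by rw [hddef]; field_simp
  have hr3q : r3*q < 1/17 := by nlinarith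
  have hac : a ≤ c := by
    rw [hadef, hcval, div_le_div_iff₀ (by positivity) (by positivity)]
    nlinarith [pow_pos hq 2, mul_pos hq2 (show (0:ℝ) < 2 - r3 - 2*r3*q by nlinarith)]
  have hc0 : 0 < c := lt_of_lt_of_le ha0 hac
  have hcd : c ≤ d := by
    have h0q : (0:ℝ) < 1/q := by positivity
    rw [hcdef, hddef]; linarith
  have hd0 : 0 < d := lt_of_lt_of_le hc0 hcd
  have hdb : d ≤ b := by
    rw [hbdef, hdval, div_le_div_iff₀ (by positivity) (by positivity)]
    nlinarith [mul_pos hq2 (show (0:ℝ) < r3 - 1 - r3*q by nlinarith)]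
  have hab : a ≤ b := hac.trans (hcd.trans hdb)
  have ha4sq : a^2*(4*q^4) = 1 := by rw [hadef]; field_simp; ring
  -- key algebraic identities
  have h3c : 3*q^4*c^2 = (1 - r3*q)^2 := by
    rw [hcval, div_pow, mul_pow, hr3sq, mul_div_assoc', div_eq_iff (by positivity)]
    ring
  have h3d : 3*q^4*d^2 = (1 + r3*q)^2 := by
    rw [hdval, div_pow, mul_pow, hr3sq, mul_div_assoc', div_eq_iff (by positivity)]
    ring
  -- lower bound on [a,c]
  have hlow1 : ∀ x ∈ Set.Icc a c, ((6/5)*q)⁻¹ ≤ x + 3*t*x^3 := by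
    intro x hx
    obtain ⟨hx1, hx2⟩ := hx
    have hxpos : 0 < x := lt_of_lt_of_le ha0 hx1
    have hx2c : x^2 ≤ c^2 := pow_le_pow_left₀ hxpos.le hx2 2
    have hfac : 1 - 3*q^4*c^2 ≤ 1 - 3*q^4*x^2 := by
      have := mul_le_mul_of_nonneg_left hx2c (show (0:ℝ) ≤ 3*q^4 by positivity)
      linarith
    have hsq1 : (1 - r3*q)^2 ≤ 1 := by nlinarith [mul_pos hr3pos hq, hr3q]
    have hnn : 0 ≤ 1 - 3*q^4*c^2 := by linarith [h3c, hsq1]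
    have chain : a*(1 - 3*q^4*c^2) ≤ x*(1 - 3*q^4*x^2) :=
      mul_le_mul hx1 hfac hnn hxpos.le
    have hstart : ((6/5)*q)⁻¹ ≤ a*(1 - 3*q^4*c^2) := by
      have hxx : a*(1 - 3*q^4*c^2) = (2*r3*q - 3*q^2)/(2*q^2) := by
        rw [h3c, hadef]
        field_simp
        linear_combination (-(q^2))*hr3sq
      rw [hxx, inv_eq_one_div, div_le_div_iff₀ (by positivity) (by positivity)]
      nlinarith [mul_pos hq2 (show (0:ℝ) < r3 - 1.7 by linarith),
        mul_le_mul_of_nonneg_left hq31 hq2.le]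
    have hrr : x + 3*t*x^3 = x*(1 - 3*q^4*x^2) := by rw [ht]; ring
    exact hstart.trans (chain.trans hrr.symm.le)
  -- lower bound on -(...) on [d,b]
  have hlow3 : ∀ x ∈ Set.Icc d b, (q/2)⁻¹ ≤ -(x + 3*t*x^3) := by
    intro x hx
    obtain ⟨hx1, hx2⟩ := hx
    have hxpos : 0 < x := lt_of_lt_of_le hd0 hx1
    have hx2d : d^2 ≤ x^2 := pow_le_pow_left₀ hd0.le hx1 2
    have hfac : 3*q^4*d^2 - 1 ≤ 3*q^4*x^2 - 1 := by
      have := mul_le_mul_of_nonneg_left hx2d (show (0:ℝ) ≤ 3*q^4 by positivity)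
      linarith
    have hsq1 : 1 ≤ (1 + r3*q)^2 := by nlinarith [mul_pos hr3pos hq]
    have hnn : 0 ≤ 3*q^4*d^2 - 1 := by linarith [h3d, hsq1]
    have chain : d*(3*q^4*d^2 - 1) ≤ x*(3*q^4*x^2 - 1) :=
      mul_le_mul hx1 hfac hnn hxpos.le
    have hstart : (q/2)⁻¹ ≤ d*(3*q^4*d^2 - 1) := by
      have hxx : d*(3*q^4*d^2 - 1) = (1 + r3*q)*(2*r3*q + 3*q^2)/(r3*q^2) := by
        rw [h3d, hdval, div_mul_eq_mul_div, div_eq_div_iff (by positivity) (by positivity)]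
        linear_combination ((1 + r3*q)*r3*q^4)*hr3sq
      rw [hxx, inv_eq_one_div, div_le_div_iff₀ (by positivity) (by positivity)]
      have expand : ((1 + r3*q)*(2*r3*q + 3*q^2))*(q/2)
          = r3*q^2 + (9/2)*q^3 + (3/2)*r3*q^4 := by linear_combination (q^3)*hr3sq
      linarith [expand, pow_pos hq 3, pow_pos hq 4, mul_pos hr3pos (pow_pos hq 4)]
    have hrr : -(x + 3*t*x^3) = x*(3*q^4*x^2 - 1) := by rw [ht]; ring
    exact hstart.trans (chain.trans hrr.symm.le)
  -- sign condition on all of [a,b]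
  have hsignAll : ∀ x ∈ Set.Icc a b, 1 + 9*t*x^2 ≤ 0 := by
    intro x hx
    have hxa : a ≤ x := hx.1
    have hxpos : 0 < x := lt_of_lt_of_le ha0 hxa
    have hprod : 0 ≤ q^4*((x - a)*(x + a)) :=
      mul_nonneg (pow_pos hq 4).le (mul_nonneg (by linarith) (by linarith))
    rw [ht]
    nlinarith [ha4sq]
  -- piece 1
  have hne1 : ∀ x ∈ Set.Icc a c, x + 3*t*x^3 ≠ 0 := fun x hx =>
    (lt_of_lt_of_le (by positivity) (hlow1 x hx)).ne'
  have hpb1 := pieceB t a c ha0 hac hne1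
    (Or.inr fun x hx => hsignAll x ⟨hx.1, hx.2.trans (hcd.trans hdb)⟩)
  have hba1 : |a + 3*t*a^3|⁻¹ ≤ (6/5)*q :=
    inv_bound (by positivity) (hlow1 a ⟨le_refl a, hac⟩)
  have hbc1 : |c + 3*t*c^3|⁻¹ ≤ (6/5)*q :=
    inv_bound (by positivity) (hlow1 c ⟨hac, le_refl c⟩)
  have hP1 : ‖∫ x in a..c, Complex.exp (Complex.I * ((x:ℂ) + (t:ℂ)*(x:ℂ)^3)) * (x:ℂ)⁻¹‖
      ≤ (24/5)*q := by
    calc _ ≤ 2*(|a + 3*t*a^3|⁻¹ + |c + 3*t*c^3|⁻¹) := hpb1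
      _ ≤ (24/5)*q := by linarith
  -- piece 3
  have hne3 : ∀ x ∈ Set.Icc d b, x + 3*t*x^3 ≠ 0 := by
    intro x hx
    have := hlow3 x hx
    have h0 : (0:ℝ) < (q/2)⁻¹ := by positivity
    have : x + 3*t*x^3 < 0 := by linarith
    exact this.ne
  have hpb3 := pieceB t d b hd0 hdb hne3
    (Or.inr fun x hx => hsignAll x ⟨hac.trans (hcd.trans hx.1), hx.2⟩)
  have hbd3 : |d + 3*t*d^3|⁻¹ ≤ q/2 := by
    rw [← abs_neg]
    exact inv_bound (by positivity) (hlow3 d ⟨le_refl d, hdb⟩)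
  have hbb3 : |b + 3*t*b^3|⁻¹ ≤ q/2 := by
    rw [← abs_neg]
    exact inv_bound (by positivity) (hlow3 b ⟨hdb, le_refl b⟩)
  have hP3 : ‖∫ x in d..b, Complex.exp (Complex.I * ((x:ℂ) + (t:ℂ)*(x:ℂ)^3)) * (x:ℂ)⁻¹‖
      ≤ 2*q := by
    calc _ ≤ 2*(|d + 3*t*d^3|⁻¹ + |b + 3*t*b^3|⁻¹) := hpb3
      _ ≤ 2*q := by linarith
  -- middle piece
  have hP2 : ‖∫ x in c..d, Complex.exp (Complex.I * ((x:ℂ) + (t:ℂ)*(x:ℂ)^3)) * (x:ℂ)⁻¹‖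
      ≤ 4*q := by
    have hmid : ‖∫ x in c..d, Complex.exp (Complex.I * ((x:ℂ) + (t:ℂ)*(x:ℂ)^3)) * (x:ℂ)⁻¹‖
        ≤ (2*q^2) * |d - c| := by
      apply intervalIntegral.norm_integral_le_of_norm_le_const
      intro x hx
      rw [Set.uIoc_of_le hcd] at hx
      rw [normf]
      apply inv_bound (by positivity)
      have hia : (2*q^2)⁻¹ = a := by rw [hadef, one_div]
      rw [hia]
      exact hac.trans hx.1.le
    have hdc : d - c = 2/q := by rw [hddef, hcdef]; ring
    have hdcabs : |d - c| = 2/q := by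
      rw [hdc]; exact abs_of_nonneg (by positivity)
    rw [hdcabs] at hmid
    calc _ ≤ (2*q^2)*(2/q) := hmid
      _ = 4*q := by field_simp; ring
  -- combine
  have hi1 := intf t a c ha0 hac
  have hi2 := intf t c d hc0 hcd
  have hi3 := intf t d b hd0 hdb
  have e1 := intervalIntegral.integral_add_adjacent_intervals hi1 hi2
  have e2 := intervalIntegral.integral_add_adjacent_intervals (hi1.trans hi2) hi3
  calc ‖∫ x in a..b, Complex.exp (Complex.I * ((x:ℂ) + (t:ℂ)*(x:ℂ)^3)) * (x:ℂ)⁻¹‖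
      = ‖((∫ x in a..c, Complex.exp (Complex.I * ((x:ℂ) + (t:ℂ)*(x:ℂ)^3)) * (x:ℂ)⁻¹)
          + ∫ x in c..d, Complex.exp (Complex.I * ((x:ℂ) + (t:ℂ)*(x:ℂ)^3)) * (x:ℂ)⁻¹)
          + ∫ x in d..b, Complex.exp (Complex.I * ((x:ℂ) + (t:ℂ)*(x:ℂ)^3)) * (x:ℂ)⁻¹‖ := by
        rw [e1, e2]
    _ ≤ _ := norm_add_le _ _
    _ ≤ ((24/5)*q + 4*q) + 2*q :=
        add_le_add (le_trans (norm_add_le _ _) (add_le_add hP1 hP2)) hP3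
    _ ≤ 13*q := by linarith
lemma main_est (t : ℝ) (ht : t ≠ 0) (hsm : |t| ≤ 1/923521) :
    ‖∫ lam in (1 / (2 * Real.sqrt |t|))..(1 / Real.sqrt |t|),
        Complex.exp (Complex.I * lam)
          * (1 - Complex.exp (Complex.I * (lam : ℂ) ^ 3 * t)) / lam‖
      ≤ 19 * Real.sqrt (Real.sqrt |t|) := by
  have habs : 0 < |t| := abs_pos.mpr ht
  set s := Real.sqrt |t| with hsdef
  set q := Real.sqrt s with hqdef
  have hs0 : 0 < s := Real.sqrt_pos.mpr habs
  have hq0 : 0 < q := Real.sqrt_pos.mpr hs0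
  have hq2 : q^2 = s := Real.sq_sqrt hs0.le
  have hs2 : s^2 = |t| := Real.sq_sqrt (abs_nonneg t)
  have hsmall : s ≤ 1/961 := by
    have : Real.sqrt |t| ≤ Real.sqrt ((1/961)^2) :=
      Real.sqrt_le_sqrt (by norm_num at hsm ⊢; linarith)
    rwa [Real.sqrt_sq (by norm_num)] at this
  have hq31 : q ≤ 1/31 := by
    have : Real.sqrt s ≤ Real.sqrt ((1/31)^2) :=
      Real.sqrt_le_sqrt (by norm_num at hsmall ⊢; linarith)
    rwa [Real.sqrt_sq (by norm_num)] at this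
  have hsq : s ≤ q := by
    calc s = q*q := by rw [← hq2]; ring
      _ ≤ q*1 := by nlinarith [hq0, hq31]
      _ = q := by ring
  have ha0 : (0:ℝ) < 1/(2*s) := by positivity
  have hab : 1/(2*s) ≤ 1/s := by
    rw [div_le_div_iff₀ (by positivity) (by positivity)]; linarith
  -- decompose the integrand
  have hsplit : (∫ lam in (1/(2*s))..(1/s),
        Complex.exp (Complex.I * lam)
          * (1 - Complex.exp (Complex.I * (lam : ℂ) ^ 3 * t)) / lam)
      = (∫ x in (1/(2*s))..(1/s),
          Complex.exp (Complex.I * ((x:ℂ) + ((0:ℝ):ℂ)*(x:ℂ)^3)) * (x:ℂ)⁻¹)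
        - (∫ x in (1/(2*s))..(1/s),
          Complex.exp (Complex.I * ((x:ℂ) + (t:ℂ)*(x:ℂ)^3)) * (x:ℂ)⁻¹) := by
    rw [← intervalIntegral.integral_sub (intf 0 _ _ ha0 hab) (intf t _ _ ha0 hab)]
    apply intervalIntegral.integral_congr
    intro x hx
    rw [Set.uIcc_of_le hab] at hx
    have hx0 : (x:ℂ) ≠ 0 := by
      exact_mod_cast (lt_of_lt_of_le ha0 hx.1).ne'
    simp only
    rw [show Complex.I * ((x:ℂ) + ((0:ℝ):ℂ)*(x:ℂ)^3) = Complex.I * (x:ℂ) by push_cast; ring,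
      show Complex.I * ((x:ℂ) + (t:ℂ)*(x:ℂ)^3)
        = Complex.I * (x:ℂ) + Complex.I * (x:ℂ)^3 * (t:ℂ) by ring,
      Complex.exp_add, div_eq_mul_inv]
    ring
  rw [hsplit]
  have hA : ‖∫ x in (1/(2*s))..(1/s),
      Complex.exp (Complex.I * ((x:ℂ) + ((0:ℝ):ℂ)*(x:ℂ)^3)) * (x:ℂ)⁻¹‖ ≤ 6*s :=
    est_pos s 0 hs0 le_rfl
  have hB : ‖∫ x in (1/(2*s))..(1/s),
      Complex.exp (Complex.I * ((x:ℂ) + (t:ℂ)*(x:ℂ)^3)) * (x:ℂ)⁻¹‖ ≤ 13*q := by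
    rcases lt_or_gt_of_ne ht with hneg | hpos
    · have ht4 : t = -(q^4) := by
        have : |t| = -t := abs_of_neg hneg
        nlinarith
      have h := est_neg q t hq0 hq31 ht4
      have hrw1 : 1/(2*q^2) = 1/(2*s) := by rw [hq2]
      have hrw2 : 1/(q^2) = 1/s := by rw [hq2]
      rwa [hrw1, hrw2] at h
    · have h := est_pos s t hs0 hpos.le
      calc _ ≤ 6*s := h
        _ ≤ 13*q := by linarith
  calc ‖_ - _‖ ≤ _ + _ := norm_sub_le _ _
    _ ≤ 6*s + 13*q := add_le_add hA hB
    _ ≤ 19*q := by linarith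
/-- `I₂(t) := ∫_{1/(2√|t|)}^{1/√|t|} e^{iλ}(1 − e^{iλ³t}) λ⁻¹ dλ → 0`
as `t → 0` through nonzero real values. -/
theorem stmt_10 :
    Tendsto (fun t : ℝ =>
        ∫ lam in (1 / (2 * Real.sqrt |t|))..(1 / Real.sqrt |t|),
          Complex.exp (Complex.I * lam)
            * (1 - Complex.exp (Complex.I * (lam : ℂ) ^ 3 * t)) / lam)
      (nhdsWithin 0 {t : ℝ | t ≠ 0}) (nhds 0) := by
  have hev : ∀ᶠ (t : ℝ) in nhdsWithin 0 {t : ℝ | t ≠ 0},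
      ‖∫ lam in (1 / (2 * Real.sqrt |t|))..(1 / Real.sqrt |t|),
          Complex.exp (Complex.I * lam)
            * (1 - Complex.exp (Complex.I * (lam : ℂ) ^ 3 * t)) / lam‖
        ≤ 19 * Real.sqrt (Real.sqrt |t|) := by
    filter_upwards [self_mem_nhdsWithin,
      mem_nhdsWithin_of_mem_nhds
        (Metric.ball_mem_nhds (0:ℝ) (show (0:ℝ) < 1/923521 by norm_num))]
      with t ht hball
    have habs : |t| ≤ 1/923521 := by
      rw [Metric.mem_ball, Real.dist_eq, sub_zero] at hball
      linarith
    exact main_est t ht habs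
  have htend : Tendsto (fun t : ℝ => 19 * Real.sqrt (Real.sqrt |t|))
      (nhdsWithin 0 {t : ℝ | t ≠ 0}) (nhds 0) := by
    have hcont : Continuous fun t : ℝ => 19 * Real.sqrt (Real.sqrt |t|) :=
      continuous_const.mul (Real.continuous_sqrt.comp (Real.continuous_sqrt.comp continuous_abs))
    have h0 := hcont.tendsto 0
    simp only [abs_zero, Real.sqrt_zero, mul_zero] at h0
    exact h0.mono_left nhdsWithin_le_nhds
  exact squeeze_zero_norm' hev htend
end

section
/- For every real t with 0 < |t| < 1/4, setting T := 1/(2√|t|) (so T > 1), the following integration-by-parts identity holds: ∫_{1}^{T} e^{iλ}(1 − e^{−iλ³ t}) λ^{−1} dλ = [ e^{iλ}(iλ)^{−1} ( 1 − e^{−iλ³ t}(1 − 3λ²t)^{−1} ) ]_{λ=1}^{λ=T} + ∫_{1}^{T} e^{iλ}(iλ²)^{−1} ( 1 − e^{−iλ³ t}(1 − 3λ²t)^{−1} ) dλ − 6it ∫_{1}^{T} e^{iλ − iλ³ t} (1 − 3λ²t)^{−2} dλ. (Note that 1 − 3λ²t ∈ [1/4, 7/4] for λ ∈ [1, T], so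 all denominators are nonzero.) -/
open Complex intervalIntegral

set_option maxHeartbeats 2000000 in
lemma stmt11_algebra (z t E G : ℂ) (hz : z ≠ 0) (hD : (1 : ℂ) - 3 * z ^ 2 * t ≠ 0) :
    E * (1 - G) / z
      - E / (Complex.I * z ^ 2) * (1 - G / (1 - 3 * z ^ 2 * t))
      + 6 * Complex.I * t * (E * G / (1 - 3 * z ^ 2 * t) ^ 2)
    = (E * Complex.I * (Complex.I * z) - E * Complex.I) / (Complex.I * z) ^ 2 *
        (1 - G / (1 - 3 * z ^ 2 * t)) +
      E / (Complex.I * z) *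
        -((G * (-Complex.I * (3 * z ^ 2) * t) * (1 - 3 * z ^ 2 * t) -
              G * -(3 * (2 * z) * t)) / (1 - 3 * z ^ 2 * t) ^ 2) := by
  have hI2 : (Complex.I : ℂ) ^ 2 = -1 := Complex.I_sq
  have hI3 : (Complex.I : ℂ) ^ 3 = -Complex.I := by rw [pow_succ, hI2]; ring
  have hI4 : (Complex.I : ℂ) ^ 4 = 1 := by rw [pow_succ, hI3]; simp [Complex.I_mul_I]
  have hI5 : (Complex.I : ℂ) ^ 5 = Complex.I := by rw [pow_succ, hI4]; ring
  have hI6 : (Complex.I : ℂ) ^ 6 = -1 := by rw [pow_succ, hI5]; exact Complex.I_mul_I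
  have hIne := Complex.I_ne_zero
  set D : ℂ := 1 - 3 * z ^ 2 * t with hDdef
  have hIz2 : Complex.I * z ^ 2 ≠ 0 := mul_ne_zero hIne (pow_ne_zero 2 hz)
  have hIz : Complex.I * z ≠ 0 := mul_ne_zero hIne hz
  have hD2 : D ^ 2 ≠ 0 := pow_ne_zero 2 hD
  rw [one_sub_div hD]
  rw [div_mul_div_comm E (Complex.I * z ^ 2) (D - G) D]
  rw [← mul_div_assoc (6 * Complex.I * t) (E * G) (D ^ 2)]
  rw [div_sub_div _ _ hz (mul_ne_zero hIz2 hD)]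
  rw [div_add_div _ _ (mul_ne_zero hz (mul_ne_zero hIz2 hD)) hD2]
  rw [div_mul_div_comm (E * Complex.I * (Complex.I * z) - E * Complex.I)
    ((Complex.I * z) ^ 2) (D - G) D]
  rw [mul_neg (E / (Complex.I * z)), div_mul_div_comm E (Complex.I * z) _ (D ^ 2), ← neg_div]
  rw [div_add_div _ _ (mul_ne_zero (pow_ne_zero 2 hIz) hD) (mul_ne_zero hIz hD2)]
  rw [div_eq_div_iff
    (mul_ne_zero (mul_ne_zero hz (mul_ne_zero hIz2 hD)) hD2)
    (mul_ne_zero (mul_ne_zero (pow_ne_zero 2 hIz) hD) (mul_ne_zero hIz hD2))]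
  ring_nf
  simp only [hI2, hI3, hI4, hI5, hI6]
  ring


set_option maxHeartbeats 1000000 in
/-- Derivative of the bracket function. -/
lemma stmt11_deriv (t l : ℝ) (hl : (l : ℂ) ≠ 0)
    (hD : (1 - 3 * (l : ℂ) ^ 2 * t) ≠ 0) :
    HasDerivAt (fun x : ℝ =>
        Complex.exp (Complex.I * x) / (Complex.I * x)
          * (1 - Complex.exp (-(Complex.I) * (x : ℂ) ^ 3 * t)
              / (1 - 3 * (x : ℂ) ^ 2 * t)))
      (Complex.exp (Complex.I * l)
          * (1 - Complex.exp (-(Complex.I) * (l : ℂ) ^ 3 * t)) / l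
        - Complex.exp (Complex.I * l) / (Complex.I * (l : ℂ) ^ 2)
            * (1 - Complex.exp (-(Complex.I) * (l : ℂ) ^ 3 * t)
                / (1 - 3 * (l : ℂ) ^ 2 * t))
        + 6 * Complex.I * t *
            (Complex.exp (Complex.I * l - Complex.I * (l : ℂ) ^ 3 * t)
              / (1 - 3 * (l : ℂ) ^ 2 * t) ^ 2)) l := by
  have hIz : Complex.I * (l : ℂ) ≠ 0 := mul_ne_zero Complex.I_ne_zero hl
  -- complex derivative
  have h2 : HasDerivAt (fun z : ℂ => Complex.I * z) Complex.I (l : ℂ) := by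
    simpa using (hasDerivAt_id ((l : ℂ))).const_mul Complex.I
  have h1 : HasDerivAt (fun z : ℂ => Complex.exp (Complex.I * z))
      (Complex.exp (Complex.I * l) * Complex.I) (l : ℂ) :=
    (Complex.hasDerivAt_exp _).comp _ h2
  have hA := h1.div h2 hIz
  have h3 : HasDerivAt (fun z : ℂ => -(Complex.I) * z ^ 3 * t)
      (-(Complex.I) * (3 * (l : ℂ) ^ 2) * t) (l : ℂ) :=
    ((hasDerivAt_pow 3 _).const_mul (-(Complex.I))).mul_const _
  have h4 : HasDerivAt (fun z : ℂ => Complex.exp (-(Complex.I) * z ^ 3 * t))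
      (Complex.exp (-(Complex.I) * (l : ℂ) ^ 3 * t)
        * (-(Complex.I) * (3 * (l : ℂ) ^ 2) * t)) (l : ℂ) :=
    (Complex.hasDerivAt_exp _).comp _ h3
  have h5 : HasDerivAt (fun z : ℂ => 1 - 3 * z ^ 2 * t)
      (-(3 * (2 * (l : ℂ)) * t)) (l : ℂ) := by
    have h := (((hasDerivAt_pow 2 ((l : ℂ))).const_mul (3 : ℂ)).mul_const
      ((t : ℝ) : ℂ)).const_sub 1
    simpa using h
  have hB := (h4.div h5 hD).const_sub 1
  have hF := (hA.mul hB).comp_ofReal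
  convert hF using 1
  · rfl
  have hexp : Complex.exp (Complex.I * l - Complex.I * (l : ℂ) ^ 3 * t)
      = Complex.exp (Complex.I * l) * Complex.exp (-(Complex.I) * (l : ℂ) ^ 3 * t) := by
    rw [← Complex.exp_add]; ring_nf
  rw [hexp]
  exact stmt11_algebra _ _ _ _ hl hD

/-- integration-by-parts identity, for `0 < |t| < 1/4` and
`T = 1/(2√|t|)`:
`∫_{1}^{T} e^{iλ}(1 − e^{−iλ³t}) λ⁻¹ dλ
  = [e^{iλ}(iλ)⁻¹(1 − e^{−iλ³t}(1−3λ²t)⁻¹)]_{λ=1}^{λ=T}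
    + ∫_{1}^{T} e^{iλ}(iλ²)⁻¹(1 − e^{−iλ³t}(1−3λ²t)⁻¹) dλ
    − 6it ∫_{1}^{T} e^{iλ−iλ³t}(1−3λ²t)⁻² dλ`. -/
theorem stmt_11 (t : ℝ) (h1 : 0 < |t|) (h2 : |t| < 1 / 4) (T : ℝ)
    (hT : T = 1 / (2 * Real.sqrt |t|)) :
    (∫ lam in (1 : ℝ)..T,
        Complex.exp (Complex.I * lam)
          * (1 - Complex.exp (-(Complex.I) * (lam : ℂ) ^ 3 * t)) / lam)
      = (Complex.exp (Complex.I * T) / (Complex.I * T)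
            * (1 - Complex.exp (-(Complex.I) * (T : ℂ) ^ 3 * t)
                / (1 - 3 * (T : ℂ) ^ 2 * t))
          - Complex.exp (Complex.I * (1 : ℂ)) / (Complex.I * (1 : ℂ))
            * (1 - Complex.exp (-(Complex.I) * (1 : ℂ) ^ 3 * t)
                / (1 - 3 * (1 : ℂ) ^ 2 * t)))
        + (∫ lam in (1 : ℝ)..T,
            Complex.exp (Complex.I * lam) / (Complex.I * (lam : ℂ) ^ 2)
              * (1 - Complex.exp (-(Complex.I) * (lam : ℂ) ^ 3 * t)
                  / (1 - 3 * (lam : ℂ) ^ 2 * t)))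
        - 6 * Complex.I * t *
            ∫ lam in (1 : ℝ)..T,
              Complex.exp (Complex.I * lam - Complex.I * (lam : ℂ) ^ 3 * t)
                / (1 - 3 * (lam : ℂ) ^ 2 * t) ^ 2 := by
  have hst0 : 0 < Real.sqrt |t| := Real.sqrt_pos.mpr h1
  have hst : Real.sqrt |t| < 1 / 2 := by
    rw [show (1/2 : ℝ) = Real.sqrt (1/4) by
      rw [show (1/4 : ℝ) = (1/2)^2 by norm_num, Real.sqrt_sq (by norm_num)]]
    exact Real.sqrt_lt_sqrt (abs_nonneg t) h2
  have hT1 : 1 < T := by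
    rw [hT]
    rw [one_lt_div (by linarith)]
    linarith
  have hsq : (Real.sqrt |t|) ^ 2 = |t| := Real.sq_sqrt (abs_nonneg t)
  have hT2 : T ^ 2 * |t| = 1 / 4 := by
    rw [hT]; field_simp; nlinarith
  have hbound : ∀ l : ℝ, l ∈ Set.uIcc (1 : ℝ) T → (1 : ℝ) / 4 ≤ 1 - 3 * l ^ 2 * t := by
    intro l hl
    rw [Set.uIcc_of_le hT1.le] at hl
    obtain ⟨hl1, hlT⟩ := hl
    have h3 : l ^ 2 ≤ T ^ 2 := by nlinarith
    have h4 : 3 * l ^ 2 * t ≤ 3 * l ^ 2 * |t| := by nlinarith [le_abs_self t, abs_nonneg t]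
    nlinarith [abs_nonneg t]
  have hlne : ∀ l : ℝ, l ∈ Set.uIcc (1 : ℝ) T → (l : ℂ) ≠ 0 := by
    intro l hl
    rw [Set.uIcc_of_le hT1.le] at hl
    exact_mod_cast ne_of_gt (by linarith [hl.1] : (0:ℝ) < l)
  have hDne : ∀ l : ℝ, l ∈ Set.uIcc (1 : ℝ) T → (1 - 3 * (l : ℂ) ^ 2 * t) ≠ 0 := by
    intro l hl
    have h5 : ((1 - 3 * l ^ 2 * t : ℝ) : ℂ) = 1 - 3 * (l : ℂ) ^ 2 * t := by push_cast; ring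
    rw [← h5]
    exact_mod_cast ne_of_gt (by linarith [hbound l hl] : (0:ℝ) < 1 - 3 * l ^ 2 * t)
  -- continuity of the three integrands
  have hcD : ContinuousOn (fun l : ℝ => 1 - 3 * (l : ℂ) ^ 2 * t) (Set.uIcc (1 : ℝ) T) := by
    fun_prop
  have hc1 : ContinuousOn (fun l : ℝ =>
      Complex.exp (Complex.I * l)
        * (1 - Complex.exp (-(Complex.I) * (l : ℂ) ^ 3 * t)) / l)
      (Set.uIcc (1 : ℝ) T) := by
    apply ContinuousOn.div (by fun_prop) (by fun_prop) hlne
  have hc2 : ContinuousOn (fun l : ℝ =>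
      Complex.exp (Complex.I * l) / (Complex.I * (l : ℂ) ^ 2)
        * (1 - Complex.exp (-(Complex.I) * (l : ℂ) ^ 3 * t)
            / (1 - 3 * (l : ℂ) ^ 2 * t))) (Set.uIcc (1 : ℝ) T) := by
    apply ContinuousOn.mul
    · exact ContinuousOn.div (by fun_prop) (by fun_prop)
        (fun l hl => mul_ne_zero Complex.I_ne_zero (pow_ne_zero 2 (hlne l hl)))
    · exact continuousOn_const.sub (ContinuousOn.div (by fun_prop) hcD hDne)
  have hc3 : ContinuousOn (fun l : ℝ =>
      Complex.exp (Complex.I * l - Complex.I * (l : ℂ) ^ 3 * t)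
        / (1 - 3 * (l : ℂ) ^ 2 * t) ^ 2) (Set.uIcc (1 : ℝ) T) := by
    exact ContinuousOn.div (by fun_prop) (by fun_prop)
      (fun l hl => pow_ne_zero 2 (hDne l hl))
  have hi1 : IntervalIntegrable (fun l : ℝ =>
      Complex.exp (Complex.I * l)
        * (1 - Complex.exp (-(Complex.I) * (l : ℂ) ^ 3 * t)) / l)
      MeasureTheory.volume 1 T := hc1.intervalIntegrable
  have hi2 : IntervalIntegrable (fun l : ℝ =>
      Complex.exp (Complex.I * l) / (Complex.I * (l : ℂ) ^ 2)
        * (1 - Complex.exp (-(Complex.I) * (l : ℂ) ^ 3 * t)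
            / (1 - 3 * (l : ℂ) ^ 2 * t))) MeasureTheory.volume 1 T :=
    hc2.intervalIntegrable
  have hi3 : IntervalIntegrable (fun l : ℝ =>
      Complex.exp (Complex.I * l - Complex.I * (l : ℂ) ^ 3 * t)
        / (1 - 3 * (l : ℂ) ^ 2 * t) ^ 2) MeasureTheory.volume 1 T :=
    hc3.intervalIntegrable
  have hi3' : IntervalIntegrable (fun l : ℝ => 6 * Complex.I * t *
      (Complex.exp (Complex.I * l - Complex.I * (l : ℂ) ^ 3 * t)
        / (1 - 3 * (l : ℂ) ^ 2 * t) ^ 2)) MeasureTheory.volume 1 T :=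
    hi3.const_mul _
  -- FTC
  have hFTC := intervalIntegral.integral_eq_sub_of_hasDerivAt
    (f := fun x : ℝ =>
      Complex.exp (Complex.I * x) / (Complex.I * x)
        * (1 - Complex.exp (-(Complex.I) * (x : ℂ) ^ 3 * t)
            / (1 - 3 * (x : ℂ) ^ 2 * t)))
    (f' := fun l : ℝ =>
      Complex.exp (Complex.I * l)
          * (1 - Complex.exp (-(Complex.I) * (l : ℂ) ^ 3 * t)) / l
        - Complex.exp (Complex.I * l) / (Complex.I * (l : ℂ) ^ 2)
            * (1 - Complex.exp (-(Complex.I) * (l : ℂ) ^ 3 * t)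
                / (1 - 3 * (l : ℂ) ^ 2 * t))
        + 6 * Complex.I * t *
            (Complex.exp (Complex.I * l - Complex.I * (l : ℂ) ^ 3 * t)
              / (1 - 3 * (l : ℂ) ^ 2 * t) ^ 2))
    (fun l hl => stmt11_deriv t l (hlne l hl) (hDne l hl))
    (((hi1.sub hi2).add hi3'))
  rw [intervalIntegral.integral_add (hi1.sub hi2) hi3',
    intervalIntegral.integral_sub hi1 hi2,
    intervalIntegral.integral_const_mul] at hFTC
  simp only [Complex.ofReal_one] at hFTC ⊢
  linear_combination hFTC
end

section
/- The interval integrals P(t) := ∫_{1}^{1/(2√|t|)} e^{iλ}(iλ²)^{−1} ( 1 − e^{−iλ³ t}(1 − 3λ²t)^{−1} ) dλ, defined for real t with 0 < |t| < 1/4 (so that 1 − 3λ²t ≥ 1/4 on the interval of integration), satisfy P(t) → 0 as t → 0 through nonzero real values. -/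
open Complex Filter intervalIntegral

section Stmt13Aux

open MeasureTheory Set

/-- The integrand as a function of `t` and `lam`. -/
noncomputable def stmt13fct (t lam : ℝ) : ℂ :=
  Complex.exp (Complex.I * lam) / (Complex.I * (lam : ℂ) ^ 2)
    * (1 - Complex.exp (-(Complex.I) * (lam : ℂ) ^ 3 * t)
        / (1 - 3 * (lam : ℂ) ^ 2 * t))

lemma stmt13fct_meas (t : ℝ) : Measurable (stmt13fct t) := by unfold stmt13fct; fun_prop

lemma stmt13_norm_exp1 (lam : ℝ) : ‖Complex.exp (Complex.I * lam)‖ = 1 := by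
  rw [mul_comm, Complex.norm_exp_ofReal_mul_I]

lemma stmt13_norm_exp2 (lam t : ℝ) : ‖Complex.exp (-(Complex.I) * (lam:ℂ)^3 * t)‖ = 1 := by
  have : -(Complex.I) * (lam:ℂ)^3 * t = ((-(lam^3*t) : ℝ) : ℂ) * Complex.I := by push_cast; ring
  rw [this, Complex.norm_exp_ofReal_mul_I]

lemma stmt13_denom_ge {t lam : ℝ} (hlam1 : 1 ≤ lam) (hlam2 : lam ≤ 1 / (2 * Real.sqrt |t|)) :
    (1:ℝ)/4 ≤ 1 - 3 * lam^2 * t := by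
  rcases eq_or_ne t 0 with rfl | ht
  · norm_num
  have hs : 0 < Real.sqrt |t| := Real.sqrt_pos.mpr (abs_pos.mpr ht)
  have h2 : lam^2 ≤ (1 / (2 * Real.sqrt |t|))^2 := by
    apply pow_le_pow_left₀ (by linarith) hlam2
  have hsq : (Real.sqrt |t|)^2 = |t| := Real.sq_sqrt (abs_nonneg t)
  have h3 : lam^2 * |t| ≤ 1/4 := by
    have : (1 / (2 * Real.sqrt |t|))^2 = 1 / (4 * |t|) := by
      field_simp; rw [hsq]; ring
    rw [this] at h2
    calc lam^2 * |t| ≤ 1 / (4*|t|) * |t| := by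
          apply mul_le_mul_of_nonneg_right h2 (abs_nonneg t)
      _ = 1/4 := by field_simp
  have : 3 * lam^2 * t ≤ 3 * (lam^2 * |t|) := by
    have := le_abs_self t
    nlinarith [sq_nonneg lam]
  linarith

lemma stmt13fct_bound {t lam : ℝ} (hlam1 : 1 ≤ lam)
    (hlam2 : lam ≤ 1 / (2 * Real.sqrt |t|)) :
    ‖stmt13fct t lam‖ ≤ 5 / lam^2 := by
  have hd := stmt13_denom_ge hlam1 hlam2
  have hcast : (1 - 3*(lam:ℂ)^2*(t:ℂ)) = ((1 - 3*lam^2*t : ℝ) : ℂ) := by push_cast; ring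
  have hnd : ‖1 - 3*(lam:ℂ)^2*(t:ℂ)‖ = 1 - 3*lam^2*t := by
    rw [hcast, Complex.norm_real, Real.norm_eq_abs, _root_.abs_of_nonneg (by linarith)]
  have hq : ‖Complex.exp (-(Complex.I) * (lam:ℂ)^3 * t) / (1 - 3*(lam:ℂ)^2*(t:ℂ))‖ ≤ 4 := by
    rw [norm_div, stmt13_norm_exp2, hnd]
    rw [div_le_iff₀ (by linarith)]
    linarith
  have h5 : ‖(1 : ℂ) - Complex.exp (-(Complex.I) * (lam:ℂ)^3 * t)
      / (1 - 3*(lam:ℂ)^2*(t:ℂ))‖ ≤ 5 := by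
    calc ‖(1:ℂ) - _‖ ≤ ‖(1:ℂ)‖
          + ‖Complex.exp (-(Complex.I) * (lam:ℂ)^3 * t) / (1 - 3*(lam:ℂ)^2*(t:ℂ))‖ :=
          norm_sub_le _ _
      _ ≤ 1 + 4 := by rw [norm_one]; linarith
      _ = 5 := by norm_num
  have hn1 : ‖Complex.exp (Complex.I * lam) / (Complex.I * (lam:ℂ)^2)‖ = 1 / lam^2 := by
    rw [norm_div, stmt13_norm_exp1, norm_mul, Complex.norm_I, one_mul, norm_pow,
      Complex.norm_real, Real.norm_eq_abs, _root_.abs_of_nonneg (by linarith)]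
  rw [stmt13fct, norm_mul, hn1]
  calc 1/lam^2 * ‖_‖ ≤ 1/lam^2 * 5 := by
        apply mul_le_mul_of_nonneg_left h5 (by positivity)
    _ = 5 / lam^2 := by ring

lemma stmt13_bound_integrable :
    Integrable (Set.indicator (Ioi (1:ℝ)) (fun x : ℝ => 5 / x^2)) := by
  rw [integrable_indicator_iff measurableSet_Ioi]
  have h : IntegrableOn (fun x : ℝ => x ^ (-2 : ℝ)) (Ioi 1) :=
    integrableOn_Ioi_rpow_of_lt (by norm_num) (by norm_num)
  refine IntegrableOn.congr_fun (h.const_mul 5) (fun x hx => ?_) measurableSet_Ioi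
  rw [Real.rpow_neg (by linarith [mem_Ioi.mp hx]), Real.rpow_two]
  ring

lemma stmt13fct_tendsto (lam : ℝ) :
    Tendsto (fun t : ℝ => stmt13fct t lam)
      (nhdsWithin 0 {t : ℝ | t ≠ 0 ∧ |t| < 1/4}) (nhds 0) := by
  have hg : ContinuousAt (fun z : ℂ =>
      Complex.exp (Complex.I * lam) / (Complex.I * (lam : ℂ) ^ 2)
        * (1 - Complex.exp (-(Complex.I) * (lam : ℂ) ^ 3 * z) / (1 - 3 * (lam : ℂ) ^ 2 * z)))
      ((0:ℝ) : ℂ) := by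
    rw [Complex.ofReal_zero]
    apply continuousAt_const.mul
    apply continuousAt_const.sub
    apply ContinuousAt.div
    · fun_prop
    · fun_prop
    · simp
  have h1 : ContinuousAt (fun t : ℝ => (t : ℂ)) 0 := Complex.continuous_ofReal.continuousAt
  have h2 : ContinuousAt (fun t : ℝ => stmt13fct t lam) 0 := hg.comp h1
  have h3 : Tendsto (fun t : ℝ => stmt13fct t lam) (nhds 0) (nhds 0) := by
    have := h2.tendsto
    have hval : stmt13fct 0 lam = 0 := by simp [stmt13fct]
    rwa [hval] at this
  exact h3.mono_left nhdsWithin_le_nhds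

end Stmt13Aux

/-- `P(t) := ∫_{1}^{1/(2√|t|)} e^{iλ}(iλ²)⁻¹(1 − e^{−iλ³t}(1−3λ²t)⁻¹) dλ → 0`
as `t → 0` through real values with `0 < |t| < 1/4`. -/
theorem stmt_13 :
    Tendsto (fun t : ℝ =>
        ∫ lam in (1 : ℝ)..(1 / (2 * Real.sqrt |t|)),
          Complex.exp (Complex.I * lam) / (Complex.I * (lam : ℂ) ^ 2)
            * (1 - Complex.exp (-(Complex.I) * (lam : ℂ) ^ 3 * t)
                / (1 - 3 * (lam : ℂ) ^ 2 * t)))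
      (nhdsWithin 0 {t : ℝ | t ≠ 0 ∧ |t| < 1 / 4}) (nhds 0) := by
  classical
  set l := nhdsWithin (0:ℝ) {t : ℝ | t ≠ 0 ∧ |t| < 1 / 4} with hldef
  set F : ℝ → ℝ → ℂ :=
    fun t => (Set.Ioc (1:ℝ) (1 / (2 * Real.sqrt |t|))).indicator (stmt13fct t) with hFdef
  have key : Tendsto (fun t => ∫ lam, F t lam) l (nhds 0) := by
    have h0 : (0:ℂ) = ∫ (_ : ℝ), (0:ℂ) := by simp
    rw [h0]
    apply MeasureTheory.tendsto_integral_filter_of_dominated_convergence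
      (Set.indicator (Set.Ioi (1:ℝ)) (fun x : ℝ => 5 / x^2))
    · exact Filter.Eventually.of_forall fun t =>
        (((stmt13fct_meas t).indicator measurableSet_Ioc).aestronglyMeasurable)
    · refine Filter.Eventually.of_forall fun t => MeasureTheory.ae_of_all _ fun lam => ?_
      by_cases hmem : lam ∈ Set.Ioc (1:ℝ) (1 / (2 * Real.sqrt |t|))
      · rw [hFdef]
        simp only [Set.indicator_of_mem hmem]
        have h1 : lam ∈ Set.Ioi (1:ℝ) := hmem.1
        rw [Set.indicator_of_mem h1]
        exact stmt13fct_bound (le_of_lt hmem.1) hmem.2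
      · rw [hFdef]
        simp only [Set.indicator_of_notMem hmem, norm_zero]
        apply Set.indicator_nonneg
        intro x hx
        positivity
    · exact stmt13_bound_integrable
    · refine MeasureTheory.ae_of_all _ fun lam => ?_
      by_cases hlam : 1 < lam
      · -- eventually F t lam = stmt13fct t lam
        have hev : ∀ᶠ t in l, F t lam = stmt13fct t lam := by
          have hlam0 : (0:ℝ) < lam := by linarith
          have hsmall : ∀ᶠ t in l, |t| < 1/(4*lam^2) := by
            have hpos : (0:ℝ) < 1/(4*lam^2) := by positivity
            have hnh : ∀ᶠ t in nhds (0:ℝ), |t| < 1/(4*lam^2) := by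
              filter_upwards [Metric.ball_mem_nhds (0:ℝ) hpos] with y hy
              simpa [Real.dist_eq] using hy
            exact hnh.filter_mono nhdsWithin_le_nhds
          filter_upwards [hsmall, self_mem_nhdsWithin] with t ht htS
          obtain ⟨ht0, -⟩ := htS
          have hs : 0 < Real.sqrt |t| := Real.sqrt_pos.mpr (abs_pos.mpr ht0)
          have hle : lam ≤ 1 / (2 * Real.sqrt |t|) := by
            have hsq : Real.sqrt |t| < 1/(2*lam) := by
              have h1 : Real.sqrt |t| < Real.sqrt (1/(4*lam^2)) :=
                Real.sqrt_lt_sqrt (abs_nonneg t) ht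
              have h2 : Real.sqrt (1/(4*lam^2)) = 1/(2*lam) := by
                rw [show (1:ℝ)/(4*lam^2) = (1/(2*lam))^2 by field_simp; ring]
                exact Real.sqrt_sq (by positivity)
              linarith
            have h3 : 2*lam*Real.sqrt |t| < 2*lam*(1/(2*lam)) :=
              mul_lt_mul_of_pos_left hsq (by positivity)
            have h4 : 2*lam*(1/(2*lam)) = 1 := by field_simp
            rw [le_div_iff₀ (by positivity)]
            nlinarith
          rw [hFdef]
          exact Set.indicator_of_mem
            (show lam ∈ Set.Ioc (1:ℝ) (1 / (2 * Real.sqrt |t|)) from ⟨hlam, hle⟩) _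
        exact (stmt13fct_tendsto lam).congr' (hev.mono fun t h => h.symm)
      · -- lam ≤ 1 : F t lam = 0 always
        have : ∀ t : ℝ, F t lam = 0 := fun t => by
          rw [hFdef]
          exact Set.indicator_of_notMem (fun h => hlam h.1) _
        simp only [this]
        exact tendsto_const_nhds
  have heq : (fun t : ℝ =>
      ∫ lam in (1 : ℝ)..(1 / (2 * Real.sqrt |t|)),
        Complex.exp (Complex.I * lam) / (Complex.I * (lam : ℂ) ^ 2)
          * (1 - Complex.exp (-(Complex.I) * (lam : ℂ) ^ 3 * t)
              / (1 - 3 * (lam : ℂ) ^ 2 * t)))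
      =ᶠ[l] (fun t => ∫ lam, F t lam) := by
    filter_upwards [self_mem_nhdsWithin] with t ht
    obtain ⟨ht0, ht4⟩ := ht
    have hs : 0 < Real.sqrt |t| := Real.sqrt_pos.mpr (abs_pos.mpr ht0)
    have hL : (1:ℝ) ≤ 1 / (2 * Real.sqrt |t|) := by
      have hlt : Real.sqrt |t| < 1/2 := by
        have h1 : Real.sqrt |t| < Real.sqrt (1/4) := Real.sqrt_lt_sqrt (abs_nonneg t) ht4
        have h2 : Real.sqrt ((1:ℝ)/4) = 1/2 := by
          rw [show (1:ℝ)/4 = (1/2)^2 by norm_num]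
          exact Real.sqrt_sq (by norm_num)
        linarith
      rw [le_div_iff₀ (by positivity), one_mul]
      linarith
    rw [intervalIntegral.integral_of_le hL,
      ← MeasureTheory.integral_indicator measurableSet_Ioc]
    rfl
  exact key.congr' heq.symm
end

section
/- The interval integrals I₁(t) := ∫_{1}^{1/(2√|t|)} e^{iλ}(1 − e^{iλ³ t}) λ^{−1} dλ, defined for real t with 0 < |t| < 1/4, satisfy I₁(t) → 0 as t → 0 through nonzero real values. -/
open Complex Filter intervalIntegral

noncomputable section
namespace Stmt15
open MeasureTheory Set

def E2 (t : ℝ) (x : ℝ) : ℂ := Complex.exp (Complex.I * (x:ℂ)^3 * t)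
def ee (x : ℝ) : ℂ := Complex.exp (Complex.I * (x:ℂ))
def uu (t x : ℝ) : ℂ := (1 - E2 t x) / (x:ℂ)
def uu' (t x : ℝ) : ℂ :=
  ((-(Complex.I * (3*(x:ℂ)^2) * t * E2 t x)) * (x:ℂ) - (1 - E2 t x) * 1) / (x:ℂ)^2
def vv (x : ℝ) : ℂ := -Complex.I * ee x
def AA (t x : ℝ) : ℂ := (-3*(t:ℂ)) * ((x:ℂ) * (ee x * E2 t x))
def BB (t x : ℝ) : ℂ := Complex.I * ee x * (1 - E2 t x) / (x:ℂ)^2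
def DD (t x : ℝ) : ℂ := Complex.I * (1 + 3*(x:ℂ)^2*t)
def DD' (t x : ℝ) : ℂ := Complex.I * ((3*(2*(x:ℂ)))*t)
def ww (t x : ℝ) : ℂ := (x:ℂ) / DD t x
def ww' (t x : ℝ) : ℂ := (1 * DD t x - (x:ℂ) * DD' t x) / (DD t x)^2
def EFF (t x : ℝ) : ℂ := ee x * E2 t x
def DEF (t x : ℝ) : ℂ := DD t x * EFF t x

lemma hasDerivAt_coe (x : ℝ) : HasDerivAt (fun y:ℝ => (y:ℂ)) 1 x := by
  simpa using (hasDerivAt_id x).ofReal_comp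

lemma hasDerivAt_E2 (t x : ℝ) :
    HasDerivAt (E2 t) (Complex.I * (3*(x:ℂ)^2) * t * E2 t x) x := by
  have h0 := hasDerivAt_coe x
  have h1 : HasDerivAt (fun y:ℝ => (y:ℂ)^3) (3*(x:ℂ)^2) x := by
    have h1 := (h0.mul h0).mul h0
    have h2 : HasDerivAt (fun y:ℝ => (y:ℂ)*(y:ℂ)*(y:ℂ)) (3*(x:ℂ)^2) x := by
      exact h1.congr_deriv (by simp only [Pi.mul_apply]; ring)
    have : (fun y:ℝ => (y:ℂ)^3) = (fun y:ℝ => (y:ℂ)*(y:ℂ)*(y:ℂ)) := by funext y; ring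
    rw [this]; exact h2
  have h2 : HasDerivAt (fun y:ℝ => Complex.I*(y:ℂ)^3*(t:ℂ)) (Complex.I*(3*(x:ℂ)^2)*(t:ℂ)) x :=
    (h1.const_mul Complex.I).mul_const _
  have := h2.cexp
  unfold E2
  convert this using 1; ring

lemma hasDerivAt_ee (x : ℝ) : HasDerivAt ee (ee x * Complex.I) x := by
  have h2 : HasDerivAt (fun y:ℝ => Complex.I*(y:ℂ)) Complex.I x := by
    simpa using (hasDerivAt_coe x).const_mul Complex.I
  exact h2.cexp

lemma hasDerivAt_uu (t x : ℝ) (hx : (x:ℂ) ≠ 0) : HasDerivAt (uu t) (uu' t x) x := by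
  have hc : HasDerivAt (fun y:ℝ => 1 - E2 t y) (-(Complex.I * (3*(x:ℂ)^2) * t * E2 t x)) x :=
    (hasDerivAt_E2 t x).const_sub 1
  exact hc.div (hasDerivAt_coe x) hx

lemma hasDerivAt_vv (x : ℝ) : HasDerivAt vv (ee x) x := by
  have h := (hasDerivAt_ee x).const_mul (-Complex.I)
  have heq : -Complex.I * (ee x * Complex.I) = ee x := by
    linear_combination (-(ee x)) * Complex.I_sq
  rw [heq] at h
  exact h

lemma hasDerivAt_DD (t x : ℝ) : HasDerivAt (DD t) (DD' t x) x := by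
  have h0 := hasDerivAt_coe x
  have hx2 : HasDerivAt (fun y:ℝ => (y:ℂ)^2) (2*(x:ℂ)) x := by
    have h1 := h0.mul h0
    have h2 : HasDerivAt (fun y:ℝ => (y:ℂ)*(y:ℂ)) (2*(x:ℂ)) x := by
      exact h1.congr_deriv (by ring)
    have : (fun y:ℝ => (y:ℂ)^2) = (fun y:ℝ => (y:ℂ)*(y:ℂ)) := by funext y; ring
    rw [this]; exact h2
  exact ((((hx2.const_mul 3).mul_const (t:ℂ)).const_add 1).const_mul Complex.I)

lemma hasDerivAt_ww (t x : ℝ) (h : DD t x ≠ 0) : HasDerivAt (ww t) (ww' t x) x :=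
  (hasDerivAt_coe x).div (hasDerivAt_DD t x) h

lemma hasDerivAt_EFF (t x : ℝ) : HasDerivAt (EFF t) (DEF t x) x := by
  have h := (hasDerivAt_ee x).mul (hasDerivAt_E2 t x)
  have heq : ee x * Complex.I * E2 t x + ee x * (Complex.I * (3*(x:ℂ)^2) * t * E2 t x)
      = DEF t x := by
    unfold DEF DD EFF; ring
  rw [heq] at h
  exact h

-- continuity
lemma cont_E2 (t : ℝ) : Continuous (E2 t) := by
  unfold E2; fun_prop

lemma cont_ee : Continuous ee := by
  unfold ee; fun_prop

lemma cont_EFF (t : ℝ) : Continuous (EFF t) := cont_ee.mul (cont_E2 t)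

lemma cont_DD (t : ℝ) : Continuous (DD t) := by
  unfold DD; fun_prop

lemma cont_DEF (t : ℝ) : Continuous (DEF t) := (cont_DD t).mul (cont_EFF t)

lemma cont_AA (t : ℝ) : Continuous (AA t) := by
  unfold AA ee E2; fun_prop

lemma contOn_uu' (t : ℝ) (S : Set ℝ) (hS : ∀ x ∈ S, (x:ℂ) ≠ 0) :
    ContinuousOn (uu' t) S := by
  unfold uu'
  apply ContinuousOn.div
  · apply Continuous.continuousOn; unfold E2; fun_prop
  · exact (Complex.continuous_ofReal.pow 2).continuousOn
  · exact fun x hx => pow_ne_zero 2 (hS x hx)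

lemma contOn_BB (t : ℝ) (S : Set ℝ) (hS : ∀ x ∈ S, (x:ℂ) ≠ 0) :
    ContinuousOn (BB t) S := by
  unfold BB
  apply ContinuousOn.div
  · apply Continuous.continuousOn; unfold ee E2; fun_prop
  · exact (Complex.continuous_ofReal.pow 2).continuousOn
  · exact fun x hx => pow_ne_zero 2 (hS x hx)

lemma contOn_ww' (t : ℝ) (S : Set ℝ) (hS : ∀ x ∈ S, DD t x ≠ 0) :
    ContinuousOn (ww' t) S := by
  unfold ww'
  apply ContinuousOn.div
  · apply Continuous.continuousOn; unfold DD DD'; fun_prop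
  · exact ((cont_DD t).pow 2).continuousOn
  · exact fun x hx => pow_ne_zero 2 (hS x hx)

-- algebraic identities
lemma split_id (t x : ℝ) (hx : (x:ℂ) ≠ 0) : uu' t x * vv x = AA t x + BB t x := by
  unfold uu' vv AA BB
  have hI := Complex.I_sq
  field_simp
  ring_nf
  rw [Complex.I_sq]
  ring

lemma ww_id (t x : ℝ) (h : DD t x ≠ 0) : ww t x * DEF t x = (x:ℂ) * EFF t x := by
  unfold ww DEF
  field_simp

-- norms
lemma norm_E2 (t x : ℝ) : ‖E2 t x‖ = 1 := by
  have hcast : (Complex.I * (x:ℂ)^3 * (t:ℂ)) = Complex.I * (((x^3*t : ℝ)):ℂ) := by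
    push_cast; ring
  rw [E2, hcast, Complex.norm_exp]
  simp [Complex.mul_re]
  left
  simp [← Complex.ofReal_pow]

lemma norm_ee (x : ℝ) : ‖ee x‖ = 1 := by
  rw [ee, Complex.norm_exp]
  simp [Complex.mul_re]

lemma norm_EFF (t x : ℝ) : ‖EFF t x‖ = 1 := by
  rw [EFF, norm_mul, norm_ee, norm_E2, mul_one]

lemma norm_vv (x : ℝ) : ‖vv x‖ = 1 := by
  rw [vv, norm_mul, norm_neg, Complex.norm_I, norm_ee, mul_one]

lemma norm_DD (t x : ℝ) : ‖DD t x‖ = |1 + 3*x^2*t| := by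
  have hcast : ((1:ℂ) + 3*(x:ℂ)^2*(t:ℂ)) = (((1 + 3*x^2*t : ℝ)):ℂ) := by push_cast; ring
  rw [DD, norm_mul, hcast, Complex.norm_I, one_mul, Complex.norm_real, Real.norm_eq_abs]

lemma norm_one_sub_E2_le (t x : ℝ) : ‖1 - E2 t x‖ ≤ 2 := by
  calc ‖1 - E2 t x‖ ≤ ‖(1:ℂ)‖ + ‖E2 t x‖ := norm_sub_le _ _
  _ = 2 := by rw [norm_E2]; norm_num

lemma norm_one_sub_E2_le' (t x : ℝ) (hx : 0 ≤ x) (h : x^3 * |t| ≤ 1) :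
    ‖1 - E2 t x‖ ≤ 2 * (x^3 * |t|) := by
  have hcast : ((x:ℂ)^3 : ℂ) = ((x^3 : ℝ) : ℂ) := by push_cast; ring
  have habs : ‖Complex.I * (x:ℂ)^3 * t‖ = x^3 * |t| := by
    rw [norm_mul, norm_mul, hcast, Complex.norm_real, Complex.norm_real, Complex.norm_I,
      one_mul, Real.norm_eq_abs, Real.norm_eq_abs, _root_.abs_of_nonneg (pow_nonneg hx 3)]
  rw [norm_sub_rev]
  have := Complex.norm_exp_sub_one_le (x := Complex.I * (x:ℂ)^3 * t) (by rw [habs]; exact h)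
  rw [habs] at this
  simpa [E2] using this

lemma norm_ww'_num (t x : ℝ) :
    ‖1 * DD t x - (x:ℂ) * DD' t x‖ = |1 - 3*x^2*t| := by
  have hcast : (1:ℂ) * DD t x - (x:ℂ) * DD' t x = Complex.I * (((1 - 3*x^2*t : ℝ)):ℂ) := by
    unfold DD DD'; push_cast; ring
  rw [hcast, norm_mul, Complex.norm_I, one_mul, Complex.norm_real, Real.norm_eq_abs]

set_option maxHeartbeats 1000000 in
lemma key (t : ℝ) (ht0 : t ≠ 0) (ht : |t| ≤ 1/64) :
    ‖∫ lam in (1:ℝ)..(1/(2*Real.sqrt |t|)),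
        Complex.exp (Complex.I * lam) * (1 - Complex.exp (Complex.I * (lam:ℂ)^3 * t)) / lam‖
    ≤ 58*Real.sqrt |t| + 2*|t| + 2*|t|^((1:ℝ)/3) + |t|^((1:ℝ)/6) := by
  set a := |t| with ha_def
  have ha : 0 < a := abs_pos.2 ht0
  set s := Real.sqrt a with hs_def
  have hs : 0 < s := Real.sqrt_pos.2 ha
  have hss : s^2 = a := Real.sq_sqrt ha.le
  have hs8 : s ≤ 1/8 := by
    rw [hs_def, show (1:ℝ)/8 = Real.sqrt (1/64) by
      rw [show (1:ℝ)/64 = (1/8)^2 by norm_num, Real.sqrt_sq (by norm_num)]]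
    exact Real.sqrt_le_sqrt ht
  set L : ℝ := 1/(2*s) with hL_def
  have hLpos : 0 < L := by positivity
  have hL4 : 4 ≤ L := by
    rw [hL_def, le_div_iff₀ (by positivity)]
    nlinarith
  have hL1 : 1 ≤ L := by linarith
  have hLs : L * (2*s) = 1 := by rw [hL_def]; field_simp
  have hL2 : L^2 * a = 1/4 := by
    rw [hL_def, div_pow, one_pow, show (2*s)^2 = 4*a by nlinarith [hss]]
    field_simp
  -- bound on the domain
  have hdom : ∀ x ∈ Icc (1:ℝ) L, 3*x^2*a ≤ 3/4 := by
    intro x hx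
    have h1 : x^2 ≤ L^2 := by nlinarith [hx.1, hx.2]
    nlinarith [hL2, ha]
  have habs2 : ∀ x ∈ Icc (1:ℝ) L, |3*x^2*t| ≤ 3/4 := by
    intro x hx
    have := hdom x hx
    rw [abs_mul, _root_.abs_of_nonneg (by positivity : (0:ℝ) ≤ 3*x^2)]
    exact this
  have hr_lb : ∀ x ∈ Icc (1:ℝ) L, (1:ℝ)/4 ≤ |1+3*x^2*t| := by
    intro x hx
    have h2 := abs_le.1 (habs2 x hx)
    rcases le_or_gt 0 (1+3*x^2*t) with h|h
    · rw [_root_.abs_of_nonneg h]; linarith [h2.1]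
    · rw [abs_of_neg h]; linarith [h2.2]
  have hr_ub : ∀ x ∈ Icc (1:ℝ) L, |1+3*x^2*t| ≤ 7/4 := by
    intro x hx
    calc |1+3*x^2*t| ≤ |(1:ℝ)| + |3*x^2*t| := abs_add_le _ _
      _ ≤ 1 + 3/4 := by rw [abs_one]; linarith [habs2 x hx]
      _ = 7/4 := by norm_num
  -- the cut point M
  set M : ℝ := (a^((1:ℝ)/3))⁻¹ with hM_def
  have haR : (0:ℝ) < a^((1:ℝ)/3) := Real.rpow_pos_of_pos ha _
  have hMpos : 0 < M := by positivity
  have hM3 : M^3 * a = 1 := by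
    rw [hM_def, inv_pow, ← Real.rpow_natCast (a^((1:ℝ)/3)) 3, ← Real.rpow_mul ha.le]
    norm_num
    rw [inv_mul_cancel₀ ha.ne']
  have hRle1 : a^((1:ℝ)/3) ≤ 1 := Real.rpow_le_one ha.le (by linarith) (by norm_num)
  have hM1 : 1 ≤ M := by
    have h := mul_inv_cancel₀ haR.ne'
    rw [hM_def]
    nlinarith [haR]
  have hM2 : M^2 * a = a^((1:ℝ)/3) := by
    have h1 : (M^2 * a) * M = 1 := by nlinarith [hM3]
    have h2 : M^2 * a = M⁻¹ := eq_inv_of_mul_eq_one_left h1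
    rw [h2, hM_def, inv_inv]
  have hML : M ≤ L := by
    have hM6 : M^6 * a^2 = 1 := by
      have h : M^6 * a^2 = (M^3*a)^2 := by ring
      rw [h, hM3]; norm_num
    have hL6 : L^6 * a^3 = 1/64 := by
      have h : L^6 * a^3 = (L^2*a)^3 := by ring
      rw [h, hL2]; norm_num
    have hstep : M^6 * a^3 ≤ L^6 * a^3 := by
      calc M^6 * a^3 = (M^6 * a^2) * a := by ring
        _ = a := by rw [hM6]; ring
        _ ≤ 1/64 := ht
        _ = L^6 * a^3 := hL6.symm
    have h6 : M^6 ≤ L^6 := le_of_mul_le_mul_right hstep (by positivity)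
    exact le_of_pow_le_pow_left₀ (by norm_num) hLpos.le h6
  -- basic set facts
  have huIcc : Set.uIcc (1:ℝ) L = Icc 1 L := Set.uIcc_of_le hL1
  have hIoc : Set.uIoc (1:ℝ) L ⊆ Icc 1 L := by
    rw [Set.uIoc_of_le hL1]; exact Set.Ioc_subset_Icc_self
  have hxne : ∀ x ∈ Icc (1:ℝ) L, (x:ℂ) ≠ 0 := fun x hx =>
    Complex.ofReal_ne_zero.2 (by linarith [hx.1])
  have hDne : ∀ x ∈ Icc (1:ℝ) L, DD t x ≠ 0 := by
    intro x hx
    unfold DD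
    apply mul_ne_zero Complex.I_ne_zero
    have hcast : ((1:ℂ) + 3*(x:ℂ)^2*(t:ℂ)) = (((1 + 3*x^2*t : ℝ)):ℂ) := by push_cast; ring
    rw [hcast]
    refine Complex.ofReal_ne_zero.2 ?_
    intro h
    have h2 := hr_lb x hx
    rw [h] at h2; norm_num at h2
  -- IBP 1
  have hint_u' : IntervalIntegrable (uu' t) volume 1 L := by
    apply ContinuousOn.intervalIntegrable
    rw [huIcc]
    exact contOn_uu' t _ hxne
  have hint_e : IntervalIntegrable ee volume 1 L := cont_ee.intervalIntegrable 1 L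
  have hIBP1 : ∫ x in (1:ℝ)..L, uu t x * ee x
      = uu t L * vv L - uu t 1 * vv 1 - ∫ x in (1:ℝ)..L, uu' t x * vv x :=
    integral_mul_deriv_eq_deriv_mul
      (fun x hx => hasDerivAt_uu t x (hxne x (huIcc ▸ hx)))
      (fun x _ => hasDerivAt_vv x) hint_u' hint_e
  have horig : (∫ lam in (1:ℝ)..L,
      Complex.exp (Complex.I * lam) * (1 - Complex.exp (Complex.I * (lam:ℂ)^3 * t)) / lam)
      = ∫ x in (1:ℝ)..L, uu t x * ee x := by
    apply integral_congr
    intro x _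
    unfold uu ee E2
    ring
  -- split u' * v = A + B
  have hintA : IntervalIntegrable (AA t) volume 1 L := (cont_AA t).intervalIntegrable 1 L
  have hintB : IntervalIntegrable (BB t) volume 1 L := by
    apply ContinuousOn.intervalIntegrable
    rw [huIcc]; exact contOn_BB t _ hxne
  have hAB : (∫ x in (1:ℝ)..L, uu' t x * vv x)
      = (∫ x in (1:ℝ)..L, AA t x) + ∫ x in (1:ℝ)..L, BB t x := by
    rw [← integral_add hintA hintB]
    apply integral_congr
    intro x hx
    rw [huIcc] at hx
    exact split_id t x (hxne x hx)
  -- IBP 2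
  have hint_ww' : IntervalIntegrable (ww' t) volume 1 L := by
    apply ContinuousOn.intervalIntegrable
    rw [huIcc]; exact contOn_ww' t _ hDne
  have hint_DEF : IntervalIntegrable (DEF t) volume 1 L := (cont_DEF t).intervalIntegrable 1 L
  have hIBP2 : ∫ x in (1:ℝ)..L, ww t x * DEF t x
      = ww t L * EFF t L - ww t 1 * EFF t 1 - ∫ x in (1:ℝ)..L, ww' t x * EFF t x :=
    integral_mul_deriv_eq_deriv_mul
      (fun x hx => hasDerivAt_ww t x (hDne x (huIcc ▸ hx)))
      (fun x _ => hasDerivAt_EFF t x) hint_ww' hint_DEF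
  have hJ : (∫ x in (1:ℝ)..L, (x:ℂ) * EFF t x)
      = ww t L * EFF t L - ww t 1 * EFF t 1 - ∫ x in (1:ℝ)..L, ww' t x * EFF t x := by
    rw [← hIBP2]
    apply integral_congr
    intro x hx
    rw [huIcc] at hx
    exact (ww_id t x (hDne x hx)).symm
  have hAJ : (∫ x in (1:ℝ)..L, AA t x)
      = (-3*(t:ℂ)) * ∫ x in (1:ℝ)..L, (x:ℂ) * EFF t x := by
    rw [← intervalIntegral.integral_const_mul]
    apply integral_congr
    intro x _
    unfold AA EFF
    ring
  -- norm bounds for IBP2 pieces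
  have hww_L : ‖ww t L‖ ≤ 4*L := by
    have hmem : L ∈ Icc (1:ℝ) L := ⟨hL1, le_refl L⟩
    have h1 := hr_lb L hmem
    unfold ww
    rw [norm_div, norm_DD, Complex.norm_real, Real.norm_eq_abs, _root_.abs_of_nonneg hLpos.le]
    rw [div_le_iff₀ (by linarith)]
    nlinarith
  have hww_1 : ‖ww t 1‖ ≤ 4 := by
    have hmem : (1:ℝ) ∈ Icc (1:ℝ) L := ⟨le_refl 1, hL1⟩
    have h1 := hr_lb 1 hmem
    unfold ww
    rw [norm_div, norm_DD, Complex.norm_real, Real.norm_eq_abs]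
    rw [_root_.abs_of_nonneg (by norm_num : (0:ℝ) ≤ (1:ℝ))]
    norm_num at h1 ⊢
    calc |1+3*t|⁻¹ ≤ (1/4)⁻¹ := by
          apply inv_anti₀ (by norm_num) h1
      _ = 4 := by norm_num
  have hww'_bound : ∀ x ∈ Icc (1:ℝ) L, ‖ww' t x * EFF t x‖ ≤ 28 := by
    intro x hx
    rw [norm_mul, norm_EFF, mul_one]
    unfold ww'
    rw [norm_div, norm_ww'_num, norm_pow, norm_DD]
    have h1 := hr_lb x hx
    have h3 := abs_le.1 (habs2 x hx)
    have h2 : |1 - 3*x^2*t| ≤ 7/4 := by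
      rw [abs_le]; constructor <;> linarith [h3.1, h3.2]
    calc |1-3*x^2*t| / |1+3*x^2*t|^2 ≤ (7/4) / ((1/4)^2) := by
          apply div_le_div₀ (by norm_num) h2 (by norm_num)
          nlinarith
      _ = 28 := by norm_num
  have hJnorm : ‖∫ x in (1:ℝ)..L, (x:ℂ) * EFF t x‖ ≤ 32*L := by
    rw [hJ]
    have h3 : ‖∫ x in (1:ℝ)..L, ww' t x * EFF t x‖ ≤ 28*(L-1) := by
      have h := norm_integral_le_of_norm_le_const
        (fun x hx => hww'_bound x (hIoc hx))
      rwa [_root_.abs_of_nonneg (by linarith : (0:ℝ) ≤ L - 1)] at h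
    have h4 : ‖ww t L * EFF t L‖ ≤ 4*L := by rw [norm_mul, norm_EFF, mul_one]; exact hww_L
    have h5 : ‖ww t 1 * EFF t 1‖ ≤ 4 := by rw [norm_mul, norm_EFF, mul_one]; exact hww_1
    calc ‖ww t L * EFF t L - ww t 1 * EFF t 1 - ∫ x in (1:ℝ)..L, ww' t x * EFF t x‖
        ≤ ‖ww t L * EFF t L - ww t 1 * EFF t 1‖ + ‖∫ x in (1:ℝ)..L, ww' t x * EFF t x‖ :=
          norm_sub_le _ _
      _ ≤ (‖ww t L * EFF t L‖ + ‖ww t 1 * EFF t 1‖) + 28*(L-1) :=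
          add_le_add (norm_sub_le _ _) h3
      _ ≤ (4*L + 4) + 28*(L-1) := by gcongr
      _ ≤ 32*L := by linarith
  have haL : 2*L*a = s := by
    rw [hL_def]; field_simp; nlinarith [hss]
  have hAnorm : ‖∫ x in (1:ℝ)..L, AA t x‖ ≤ 48*s := by
    rw [hAJ, norm_mul]
    have hc : ‖(-3*(t:ℂ))‖ = 3*a := by
      have : (-3*(t:ℂ)) = (((-3*t : ℝ)):ℂ) := by push_cast; ring
      rw [this, Complex.norm_real, Real.norm_eq_abs, abs_mul]
      norm_num [ha_def]
    rw [hc]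
    calc 3*a * ‖∫ x in (1:ℝ)..L, (x:ℂ) * EFF t x‖ ≤ 3*a * (32*L) := by
          apply mul_le_mul_of_nonneg_left hJnorm (by positivity)
      _ = 48*(2*L*a) := by ring
      _ = 48*s := by rw [haL]
  -- B part
  have hxneM : ∀ x ∈ Icc (1:ℝ) M, (x:ℂ) ≠ 0 := fun x hx =>
    Complex.ofReal_ne_zero.2 (by linarith [hx.1])
  have hxneML : ∀ x ∈ Icc M L, (x:ℂ) ≠ 0 := fun x hx =>
    Complex.ofReal_ne_zero.2 (by nlinarith [hx.1, hMpos])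
  have hintB1 : IntervalIntegrable (BB t) volume 1 M := by
    apply ContinuousOn.intervalIntegrable
    rw [Set.uIcc_of_le hM1]; exact contOn_BB t _ hxneM
  have hintB2 : IntervalIntegrable (BB t) volume M L := by
    apply ContinuousOn.intervalIntegrable
    rw [Set.uIcc_of_le hML]; exact contOn_BB t _ hxneML
  have hBsplit : (∫ x in (1:ℝ)..L, BB t x)
      = (∫ x in (1:ℝ)..M, BB t x) + ∫ x in M..L, BB t x :=
    (integral_add_adjacent_intervals hintB1 hintB2).symm
  have hBBnorm : ∀ x : ℝ, 1 ≤ x → ‖BB t x‖ = ‖1 - E2 t x‖ / x^2 := by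
    intro x hx1
    unfold BB
    rw [norm_div, norm_mul, norm_mul, Complex.norm_I, one_mul, norm_ee, one_mul, norm_pow,
      Complex.norm_real, Real.norm_eq_abs, _root_.abs_of_nonneg (by linarith : (0:ℝ) ≤ x)]
  have hB1 : ‖∫ x in (1:ℝ)..M, BB t x‖ ≤ 2*a^((1:ℝ)/3) := by
    have hb : ∀ x ∈ Set.uIoc (1:ℝ) M, ‖BB t x‖ ≤ 2*M*a := by
      intro x hx
      rw [Set.uIoc_of_le hM1] at hx
      have h1 : 1 ≤ x := le_of_lt hx.1
      have h2 : x ≤ M := hx.2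
      have hpw : x^3 ≤ M^3 := pow_le_pow_left₀ (by linarith) h2 3
      have hx3a : x^3 * a ≤ 1 := by nlinarith
      have hnum := norm_one_sub_E2_le' t x (by linarith) hx3a
      rw [hBBnorm x h1, div_le_iff₀ (by nlinarith : (0:ℝ) < x^2)]
      calc ‖1 - E2 t x‖ ≤ 2*(x^3*a) := hnum
        _ ≤ 2*M*a*x^2 := by
            nlinarith [mul_le_mul_of_nonneg_right h2 (by positivity : (0:ℝ) ≤ a*x^2)]
    have h := norm_integral_le_of_norm_le_const hb
    rw [_root_.abs_of_nonneg (by linarith : (0:ℝ) ≤ M - 1)] at h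
    calc ‖∫ x in (1:ℝ)..M, BB t x‖ ≤ 2*M*a*(M-1) := h
      _ ≤ 2*(M^2*a) := by
          have hring : 2*M*a*(M-1) = 2*(M^2*a) - 2*(M*a) := by ring
          rw [hring]
          linarith [mul_pos hMpos ha]
      _ = 2*a^((1:ℝ)/3) := by rw [hM2]
  have hB2 : ‖∫ x in M..L, BB t x‖ ≤ a^((1:ℝ)/6) := by
    have hb : ∀ x ∈ Set.uIoc M L, ‖BB t x‖ ≤ 2/M^2 := by
      intro x hx
      rw [Set.uIoc_of_le hML] at hx
      have h1 : M < x := hx.1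
      have h2 : 1 ≤ x := by linarith
      rw [hBBnorm x h2]
      apply div_le_div₀ (by positivity) (norm_one_sub_E2_le t x) (by positivity)
      nlinarith
    have h := norm_integral_le_of_norm_le_const hb
    rw [_root_.abs_of_nonneg (by linarith : (0:ℝ) ≤ L - M)] at h
    have e3 : a^((1:ℝ)/2) = s := by rw [hs_def, Real.sqrt_eq_rpow]
    have hkey : a^((1:ℝ)/6) * M^2 = 2*L := by
      have e1 : a^((1:ℝ)/6) * M^2 * a = a^((1:ℝ)/6) * a^((1:ℝ)/3) := by
        rw [mul_assoc, hM2]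
      have e2 : a^((1:ℝ)/6) * a^((1:ℝ)/3) = a^((1:ℝ)/2) := by
        rw [← Real.rpow_add ha]; norm_num
      have e5 : a^((1:ℝ)/6) * M^2 * a = 2*L*a := by
        rw [e1, e2, e3, haL]
      exact mul_right_cancel₀ ha.ne' e5
    calc ‖∫ x in M..L, BB t x‖ ≤ 2/M^2 * (L-M) := h
      _ ≤ 2/M^2 * L := by
          apply mul_le_mul_of_nonneg_left (by linarith) (by positivity)
      _ = a^((1:ℝ)/6) := by
          rw [div_mul_eq_mul_div, eq_comm, eq_div_iff (by positivity : (M:ℝ)^2 ≠ 0)]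
          linarith [hkey]
  -- boundary terms
  have hborder_L : ‖uu t L * vv L‖ ≤ 4*s := by
    rw [norm_mul, norm_vv, mul_one]
    unfold uu
    rw [norm_div, Complex.norm_real, Real.norm_eq_abs, _root_.abs_of_nonneg hLpos.le]
    rw [div_le_iff₀ hLpos]
    calc ‖1 - E2 t L‖ ≤ 2 := norm_one_sub_E2_le t L
      _ ≤ 4*s*L := by nlinarith [hLs]
  have hborder_1 : ‖uu t 1 * vv 1‖ ≤ 2*a := by
    rw [norm_mul, norm_vv, mul_one]
    unfold uu
    rw [Complex.ofReal_one, div_one]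
    have := norm_one_sub_E2_le' t 1 (by norm_num) (by rw [one_pow, one_mul]; linarith)
    calc ‖1 - E2 t 1‖ ≤ 2*(1^3*a) := this
      _ = 2*a := by ring
  -- assemble
  rw [horig, hIBP1, hAB, hBsplit]
  calc ‖uu t L * vv L - uu t 1 * vv 1 - ((∫ x in (1:ℝ)..L, AA t x)
        + ((∫ x in (1:ℝ)..M, BB t x) + ∫ x in M..L, BB t x))‖
      ≤ ‖uu t L * vv L - uu t 1 * vv 1‖ + ‖(∫ x in (1:ℝ)..L, AA t x)
        + ((∫ x in (1:ℝ)..M, BB t x) + ∫ x in M..L, BB t x)‖ := norm_sub_le _ _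
    _ ≤ (‖uu t L * vv L‖ + ‖uu t 1 * vv 1‖) + (‖∫ x in (1:ℝ)..L, AA t x‖
        + (‖∫ x in (1:ℝ)..M, BB t x‖ + ‖∫ x in M..L, BB t x‖)) :=
        add_le_add (norm_sub_le _ _)
          ((norm_add_le _ _).trans (add_le_add le_rfl (norm_add_le _ _)))
    _ ≤ (4*s + 2*a) + (48*s + (2*a^((1:ℝ)/3) + a^((1:ℝ)/6))) := by
        gcongr <;> first | exact hborder_L | exact hborder_1 | exact hAnorm | exact hB1 | exact hB2
    _ ≤ 58*s + 2*a + 2*a^((1:ℝ)/3) + a^((1:ℝ)/6) := by linarith [hs.le]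

end Stmt15

open Stmt15 in
/-- `I₁(t) := ∫_{1}^{1/(2√|t|)} e^{iλ}(1 − e^{iλ³t}) λ⁻¹ dλ → 0`
as `t → 0` through nonzero real values with `|t| < 1/4`. -/
theorem stmt_15 :
    Tendsto (fun t : ℝ =>
        ∫ lam in (1 : ℝ)..(1 / (2 * Real.sqrt |t|)),
          Complex.exp (Complex.I * lam)
            * (1 - Complex.exp (Complex.I * (lam : ℂ) ^ 3 * t)) / lam)
      (nhdsWithin 0 {t : ℝ | t ≠ 0 ∧ |t| < 1 / 4}) (nhds 0) := by
  set F := nhdsWithin (0:ℝ) {t : ℝ | t ≠ 0 ∧ |t| < 1 / 4} with hF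
  apply squeeze_zero_norm'
    (a := fun t : ℝ => 58*Real.sqrt |t| + 2*|t| + 2*|t|^((1:ℝ)/3) + |t|^((1:ℝ)/6))
  · have h1 : ∀ᶠ t : ℝ in F, t ∈ {t : ℝ | t ≠ 0 ∧ |t| < 1/4} := eventually_mem_nhdsWithin
    have h2 : ∀ᶠ t : ℝ in F, |t| ≤ 1/64 := by
      apply Filter.Eventually.filter_mono nhdsWithin_le_nhds
      have hball : Metric.ball (0:ℝ) (1/64) ∈ nhds (0:ℝ) := Metric.ball_mem_nhds 0 (by norm_num)
      filter_upwards [hball] with t ht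
      rw [Metric.mem_ball, Real.dist_eq, sub_zero] at ht
      linarith
    filter_upwards [h1, h2] with t hmem hle
    exact key t hmem.1 hle
  · have habs : Tendsto (fun t:ℝ => |t|) F (nhds 0) := by
      have h : Tendsto (fun t:ℝ => |t|) (nhds 0) (nhds 0) := by
        simpa using _root_.continuous_abs.tendsto (0:ℝ)
      exact h.mono_left nhdsWithin_le_nhds
    have hsqrt : Tendsto (fun t:ℝ => Real.sqrt |t|) F (nhds 0) := by
      have h : Tendsto Real.sqrt (nhds 0) (nhds 0) := by
        simpa using Real.continuous_sqrt.tendsto (0:ℝ)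
      exact h.comp habs
    have hrpow : ∀ q : ℝ, 0 < q → Tendsto (fun t:ℝ => |t|^q) F (nhds 0) := by
      intro q hq
      have h : Tendsto (fun x:ℝ => x^q) (nhds 0) (nhds 0) := by
        have hc : ContinuousAt (fun x:ℝ => x^q) 0 :=
          Real.continuousAt_rpow_const 0 q (Or.inr hq.le)
        simpa [Real.zero_rpow hq.ne'] using hc.tendsto
      exact h.comp habs
    have hfin := (((hsqrt.const_mul (58:ℝ)).add (habs.const_mul (2:ℝ))).add
      ((hrpow _ (by norm_num : (0:ℝ) < 1/3)).const_mul (2:ℝ))).add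
      (hrpow _ (by norm_num : (0:ℝ) < 1/6))
    simpa using hfin

end
end

section
/- For every real t with 0 < |t| ≤ 1, the function λ ↦ e^{iλ}(iλ²)^{−1} ( 1 − e^{−iλ³ t}(1 − 3λ²t)^{−1} ) is Lebesgue integrable on [1/√|t|, ∞) (its denominators are nonzero there since |1 − 3λ²t| ≥ 2 for λ ≥ 1/√|t|), and | ∫_{1/√|t|}^{∞} e^{iλ}(iλ²)^{−1} ( 1 − e^{−iλ³ t}(1 − 3λ²t)^{−1} ) dλ | ≤ (3/2)√|t|. -/
open Complex MeasureTheory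

/-- for `0 < |t| ≤ 1`, the function
`λ ↦ e^{iλ}(iλ²)⁻¹(1 − e^{−iλ³t}(1−3λ²t)⁻¹)` is Lebesgue integrable on `[1/√|t|, ∞)`,
and the modulus of its integral there is at most `(3/2)√|t|`. -/
theorem stmt_17 (t : ℝ) (h1 : 0 < |t|) (h2 : |t| ≤ 1) :
    IntegrableOn (fun lam : ℝ =>
        Complex.exp (Complex.I * lam) / (Complex.I * (lam : ℂ) ^ 2)
          * (1 - Complex.exp (-(Complex.I) * (lam : ℂ) ^ 3 * t)
              / (1 - 3 * (lam : ℂ) ^ 2 * t)))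
      (Set.Ici (1 / Real.sqrt |t|)) ∧
    ‖∫ lam in Set.Ici (1 / Real.sqrt |t|),
        Complex.exp (Complex.I * lam) / (Complex.I * (lam : ℂ) ^ 2)
          * (1 - Complex.exp (-(Complex.I) * (lam : ℂ) ^ 3 * t)
              / (1 - 3 * (lam : ℂ) ^ 2 * t))‖
      ≤ (3 / 2) * Real.sqrt |t| := by
  set a : ℝ := 1 / Real.sqrt |t| with ha_def
  have hsq : 0 < Real.sqrt |t| := Real.sqrt_pos.2 h1
  have ha : 0 < a := by positivity
  set f : ℝ → ℂ := fun lam : ℝ =>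
      Complex.exp (Complex.I * lam) / (Complex.I * (lam : ℂ) ^ 2)
        * (1 - Complex.exp (-(Complex.I) * (lam : ℂ) ^ 3 * t)
            / (1 - 3 * (lam : ℂ) ^ 2 * t)) with hf_def
  -- pointwise bound
  have hb : ∀ lam ∈ Set.Ici a, ‖f lam‖ ≤ (3 / 2) * lam ^ (-2 : ℝ) := by
    intro lam hlam
    have hlam' : a ≤ lam := hlam
    have hlampos : 0 < lam := lt_of_lt_of_le ha hlam'
    have hlam2 : 1 / |t| ≤ lam ^ 2 := by
      have h' : a ^ 2 ≤ lam ^ 2 := by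
        apply pow_le_pow_left₀ ha.le hlam'
      calc 1 / |t| = a ^ 2 := by
            rw [ha_def, div_pow, one_pow, Real.sq_sqrt h1.le]
        _ ≤ lam ^ 2 := h'
    have hone : 1 ≤ lam ^ 2 * |t| := by
      rw [div_le_iff₀ h1] at hlam2
      linarith
    have hden : (2 : ℝ) ≤ |1 - 3 * lam ^ 2 * t| := by
      have habs : |3 * lam ^ 2 * t| - |(1 : ℝ)| ≤ |3 * lam ^ 2 * t - 1| :=
        abs_sub_abs_le_abs_sub _ _
      rw [abs_sub_comm] at habs
      have h3 : |3 * lam ^ 2 * t| = 3 * (lam ^ 2 * |t|) := by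
        rw [abs_mul, abs_mul]
        rw [_root_.abs_of_nonneg (by norm_num : (0:ℝ) ≤ 3), _root_.abs_of_nonneg (sq_nonneg lam)]
        ring
      rw [h3, abs_one] at habs
      linarith
    have hexp1 : ‖Complex.exp (Complex.I * lam)‖ = 1 := by
      rw [Complex.norm_exp]
      simp
    have hexp2 : ‖Complex.exp (-(Complex.I) * (lam : ℂ) ^ 3 * t)‖ = 1 := by
      rw [Complex.norm_exp]
      simp
      left
      rw [← Complex.ofReal_pow]
      exact Complex.ofReal_im _
    have hIl : ‖Complex.I * (lam : ℂ) ^ 2‖ = lam ^ 2 := by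
      rw [norm_mul, Complex.norm_I, one_mul, norm_pow, Complex.norm_real,
        Real.norm_eq_abs, abs_of_pos hlampos]
    have hdenc : ‖(1 - 3 * (lam : ℂ) ^ 2 * (t : ℂ))‖ = |1 - 3 * lam ^ 2 * t| := by
      rw [show (1 - 3 * (lam : ℂ) ^ 2 * (t : ℂ)) = ((1 - 3 * lam ^ 2 * t : ℝ) : ℂ) by
        push_cast; ring]
      rw [Complex.norm_real, Real.norm_eq_abs]
    have hbig : ‖(1 : ℂ) - Complex.exp (-(Complex.I) * (lam : ℂ) ^ 3 * t)
        / (1 - 3 * (lam : ℂ) ^ 2 * t)‖ ≤ 3 / 2 := by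
      have := norm_sub_le (1 : ℂ)
        (Complex.exp (-(Complex.I) * (lam : ℂ) ^ 3 * t) / (1 - 3 * (lam : ℂ) ^ 2 * t))
      have hq : ‖Complex.exp (-(Complex.I) * (lam : ℂ) ^ 3 * t)
          / (1 - 3 * (lam : ℂ) ^ 2 * t)‖ ≤ 1 / 2 := by
        rw [norm_div, hexp2, hdenc]
        rw [div_le_div_iff₀ (by linarith) (by norm_num)]
        linarith
      simp only [norm_one] at this
      linarith
    have hnorm : ‖f lam‖ = (lam ^ 2)⁻¹ *
        ‖(1 : ℂ) - Complex.exp (-(Complex.I) * (lam : ℂ) ^ 3 * t)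
          / (1 - 3 * (lam : ℂ) ^ 2 * t)‖ := by
      rw [hf_def]
      simp only [norm_mul, norm_div, hexp1, hIl]
      rw [one_div]
    rw [hnorm]
    have hr : lam ^ (-2 : ℝ) = (lam ^ 2)⁻¹ := by
      rw [show (-2 : ℝ) = ((-2 : ℤ) : ℝ) by norm_num, Real.rpow_intCast, zpow_neg,
        zpow_two]
      ring_nf
    rw [hr]
    have hinv : (0 : ℝ) < (lam ^ 2)⁻¹ := by positivity
    calc (lam ^ 2)⁻¹ * ‖(1 : ℂ) - Complex.exp (-(Complex.I) * (lam : ℂ) ^ 3 * t)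
          / (1 - 3 * (lam : ℂ) ^ 2 * t)‖
        ≤ (lam ^ 2)⁻¹ * (3 / 2) := by
          exact mul_le_mul_of_nonneg_left hbig hinv.le
      _ = 3 / 2 * (lam ^ 2)⁻¹ := by ring
  -- the bound function is integrable
  have hg : IntegrableOn (fun x : ℝ => (3 / 2) * x ^ (-2 : ℝ)) (Set.Ici a) := by
    rw [integrableOn_Ici_iff_integrableOn_Ioi]
    exact (integrableOn_Ioi_rpow_of_lt (by norm_num) ha).const_mul _
  -- measurability of f
  have hmeas : AEStronglyMeasurable f (volume.restrict (Set.Ici a)) := by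
    apply Measurable.aestronglyMeasurable
    fun_prop
  have haebound : ∀ᵐ x ∂volume.restrict (Set.Ici a), ‖f x‖ ≤ (3 / 2) * x ^ (-2 : ℝ) := by
    rw [ae_restrict_iff' measurableSet_Ici]
    exact Filter.Eventually.of_forall hb
  have hint : IntegrableOn f (Set.Ici a) := Integrable.mono' hg hmeas haebound
  refine ⟨hint, ?_⟩
  have hle := norm_integral_le_of_norm_le hg haebound
  refine hle.trans ?_
  have hval : ∫ x in Set.Ici a, (3 / 2) * x ^ (-2 : ℝ) = 3 / 2 * Real.sqrt |t| := by
    rw [MeasureTheory.integral_Ici_eq_integral_Ioi, integral_const_mul,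
      integral_Ioi_rpow_of_lt (by norm_num) ha]
    have : -a ^ ((-2 : ℝ) + 1) / (-2 + 1) = a⁻¹ := by
      norm_num
      rw [Real.rpow_neg_one]
    rw [this, ha_def]
    rw [one_div, inv_inv]
  rw [hval]
end

section
/- For every real t with 0 < |t| ≤ 1, the function λ ↦ e^{iλ − iλ³ t}(1 − 3λ²t)^{−2} is Lebesgue integrable on [1/√|t|, ∞) (the denominator is nonzero there since |1 − 3λ²t| ≥ 2λ²|t| for λ ≥ 1/√|t|), and | 6it ∫_{1/√|t|}^{∞} e^{iλ − iλ³ t}(1 − 3λ²t)^{−2} dλ | ≤ (1/2)√|t|. -/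
open Complex MeasureTheory

private lemma aux_norm (t : ℝ) (h1 : 0 < |t|) {lam : ℝ} (hlam : 1 / Real.sqrt |t| ≤ lam) :
    ‖Complex.exp (Complex.I * lam - Complex.I * (lam : ℂ) ^ 3 * t)
        / (1 - 3 * (lam : ℂ) ^ 2 * t) ^ 2‖ ≤ 1 / (4 * t ^ 2) * lam ^ (-4 : ℝ) := by
  have ht0 : t ≠ 0 := abs_pos.mp h1
  have hst : 0 < Real.sqrt |t| := Real.sqrt_pos.2 h1
  have hlam0 : 0 < lam := lt_of_lt_of_le (by positivity) hlam
  have hr : 1 ≤ lam ^ 2 * |t| := by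
    have h' : (1 / Real.sqrt |t|) ^ 2 ≤ lam ^ 2 :=
      pow_le_pow_left₀ (by positivity) hlam 2
    have hsq : (1 / Real.sqrt |t|) ^ 2 = 1 / |t| := by
      rw [div_pow, one_pow, Real.sq_sqrt h1.le]
    rw [hsq] at h'
    calc (1:ℝ) = (1 / |t|) * |t| := by field_simp
    _ ≤ lam ^ 2 * |t| := mul_le_mul_of_nonneg_right h' (abs_nonneg t)
  have hexp : ‖Complex.exp (Complex.I * lam - Complex.I * (lam : ℂ) ^ 3 * t)‖ = 1 := by
    have : Complex.I * lam - Complex.I * (lam : ℂ) ^ 3 * t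
        = ((lam - lam ^ 3 * t : ℝ) : ℂ) * Complex.I := by push_cast; ring
    rw [this, Complex.norm_exp_ofReal_mul_I]
  have hden : 2 * (lam ^ 2 * |t|) ≤ ‖(1 - 3 * (lam : ℂ) ^ 2 * t)‖ := by
    have heq : (1 - 3 * (lam : ℂ) ^ 2 * t) = ((1 - 3 * lam ^ 2 * t : ℝ) : ℂ) := by
      push_cast; ring
    rw [heq, Complex.norm_real, Real.norm_eq_abs]
    have h3 : |3 * lam ^ 2 * t| = 3 * (lam ^ 2 * |t|) := by
      rw [abs_mul, abs_mul]
      simp [_root_.abs_of_nonneg (sq_nonneg lam), mul_assoc]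
    calc 2 * (lam ^ 2 * |t|) ≤ 3 * (lam ^ 2 * |t|) - 1 := by nlinarith
    _ = |3 * lam ^ 2 * t| - |(1:ℝ)| := by rw [h3, abs_one]
    _ ≤ |1 - 3 * lam ^ 2 * t| := by
        rw [abs_sub_comm]; exact abs_sub_abs_le_abs_sub _ _
  have hden2 : 4 * (t ^ 2 * lam ^ 4) ≤ ‖(1 - 3 * (lam : ℂ) ^ 2 * t) ^ 2‖ := by
    rw [norm_pow]
    have hmul := mul_le_mul hden hden (by positivity) (norm_nonneg _)
    have habs : |t| * |t| = t * t := abs_mul_abs_self t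
    calc 4 * (t ^ 2 * lam ^ 4)
        = 2 * (lam ^ 2 * |t|) * (2 * (lam ^ 2 * |t|)) := by linear_combination (-4 * lam ^ 4) * habs
    _ ≤ ‖1 - 3 * (lam : ℂ) ^ 2 * (t : ℂ)‖ * ‖1 - 3 * (lam : ℂ) ^ 2 * (t : ℂ)‖ := hmul
    _ = ‖1 - 3 * (lam : ℂ) ^ 2 * (t : ℂ)‖ ^ 2 := (pow_two _).symm
  have hdpos : 0 < 4 * (t ^ 2 * lam ^ 4) := by positivity
  have key : (1:ℝ) / ‖(1 - 3 * (lam : ℂ) ^ 2 * t) ^ 2‖ ≤ 1 / (4 * (t ^ 2 * lam ^ 4)) :=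
    one_div_le_one_div_of_le hdpos hden2
  rw [norm_div, hexp]
  refine key.trans (le_of_eq ?_)
  rw [Real.rpow_neg hlam0.le,
    show (lam:ℝ) ^ (4:ℝ) = lam ^ (4:ℕ) from by rw [← Real.rpow_natCast]; norm_num]
  field_simp

/-- for `0 < |t| ≤ 1`, the function `λ ↦ e^{iλ−iλ³t}(1−3λ²t)⁻²` is
Lebesgue integrable on `[1/√|t|, ∞)`, and
`|6it ∫_{1/√|t|}^{∞} e^{iλ−iλ³t}(1−3λ²t)⁻² dλ| ≤ (1/2)√|t|`. -/
theorem stmt_18 (t : ℝ) (h1 : 0 < |t|) (h2 : |t| ≤ 1) :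
    IntegrableOn (fun lam : ℝ =>
        Complex.exp (Complex.I * lam - Complex.I * (lam : ℂ) ^ 3 * t)
          / (1 - 3 * (lam : ℂ) ^ 2 * t) ^ 2)
      (Set.Ici (1 / Real.sqrt |t|)) ∧
    ‖6 * Complex.I * t *
        ∫ lam in Set.Ici (1 / Real.sqrt |t|),
          Complex.exp (Complex.I * lam - Complex.I * (lam : ℂ) ^ 3 * t)
            / (1 - 3 * (lam : ℂ) ^ 2 * t) ^ 2‖
      ≤ (1 / 2) * Real.sqrt |t| := by
  have hst : 0 < Real.sqrt |t| := Real.sqrt_pos.2 h1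
  set a : ℝ := 1 / Real.sqrt |t| with ha
  have ha0 : 0 < a := by positivity
  set f : ℝ → ℂ := fun lam : ℝ =>
    Complex.exp (Complex.I * lam - Complex.I * (lam : ℂ) ^ 3 * t)
      / (1 - 3 * (lam : ℂ) ^ 2 * t) ^ 2 with hf
  have hmeas : AEStronglyMeasurable f (volume.restrict (Set.Ici a)) := by
    apply Measurable.aestronglyMeasurable
    fun_prop
  have hgint : IntegrableOn (fun x : ℝ => 1 / (4 * t ^ 2) * x ^ (-4 : ℝ)) (Set.Ici a) := by
    rw [integrableOn_Ici_iff_integrableOn_Ioi]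
    exact (integrableOn_Ioi_rpow_of_lt (by norm_num) ha0).const_mul _
  have hbound : ∀ᵐ x ∂(volume.restrict (Set.Ici a)),
      ‖f x‖ ≤ 1 / (4 * t ^ 2) * x ^ (-4 : ℝ) := by
    filter_upwards [ae_restrict_mem measurableSet_Ici] with x hx
    exact aux_norm t h1 hx
  have hint : IntegrableOn f (Set.Ici a) := Integrable.mono' hgint hmeas hbound
  refine ⟨hint, ?_⟩
  have hIbound : ‖∫ lam in Set.Ici a, f lam‖ ≤ ∫ x in Set.Ici a, 1 / (4 * t ^ 2) * x ^ (-4 : ℝ) :=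
    norm_integral_le_of_norm_le hgint hbound
  have hIval : ∫ x in Set.Ici a, 1 / (4 * t ^ 2) * x ^ (-4 : ℝ)
      = 1 / (4 * t ^ 2) * (a ^ (-3 : ℝ) / 3) := by
    rw [MeasureTheory.setIntegral_congr_set Ioi_ae_eq_Ici.symm,
      MeasureTheory.integral_const_mul, integral_Ioi_rpow_of_lt (by norm_num) ha0]
    norm_num
  have haval : a ^ (-3 : ℝ) = |t| * Real.sqrt |t| := by
    have h3 : a ^ (-3 : ℝ) = (a ^ (3:ℕ))⁻¹ := by
      rw [Real.rpow_neg ha0.le, ← Real.rpow_natCast]; norm_num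
    rw [h3, ha, one_div, inv_pow, inv_inv, pow_succ, Real.sq_sqrt h1.le]
  calc ‖6 * Complex.I * (t:ℂ) * ∫ lam in Set.Ici a, f lam‖
      = 6 * |t| * ‖∫ lam in Set.Ici a, f lam‖ := by
        rw [norm_mul, norm_mul, norm_mul]
        simp [Complex.norm_real, Real.norm_eq_abs]
  _ ≤ 6 * |t| * (1 / (4 * t ^ 2) * (|t| * Real.sqrt |t| / 3)) := by
        apply mul_le_mul_of_nonneg_left _ (by positivity)
        rw [← haval]
        exact hIbound.trans (le_of_eq hIval)
  _ = (1 / 2) * Real.sqrt |t| := by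
        have habs : |t| * |t| = t ^ 2 := by rw [abs_mul_abs_self]; ring
        have ht2 : (t:ℝ) ^ 2 ≠ 0 := pow_ne_zero 2 (abs_pos.mp h1)
        calc 6 * |t| * (1 / (4 * t ^ 2) * (|t| * Real.sqrt |t| / 3))
            = (|t| * |t|) / t ^ 2 * ((1 / 2) * Real.sqrt |t|) := by ring
        _ = (1 / 2) * Real.sqrt |t| := by rw [habs, div_self ht2, one_mul]
end

section
/- For each real t ≠ 0 the improper integral J(t) := lim_{C→∞} ∫_{1/√|t|}^{C} e^{iλ}(1 − e^{iλ³ t}) λ^{−1} dλ exists, and J(t) → 0 as t → 0 through nonzero real values. -/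
open Complex Filter intervalIntegral
open MeasureTheory Set

lemma key_id (e pp xx qq : ℂ) (hx : xx ≠ 0) (hp : pp ≠ 0) :
    e / xx + e * I * qq / (pp * xx) ^ 2
      = (e * (I * pp) * (I * (pp * xx)) - e * (I * qq)) / (I * (pp * xx)) ^ 2 := by
  have hD : pp * xx ≠ 0 := mul_ne_zero hp hx
  rw [show (I * (pp * xx)) ^ 2 = I ^ 2 * (pp * xx) ^ 2 from by ring, I_sq]
  field_simp
  linear_combination (e * xx * pp ^ 2) * I_sq

lemma osc_s19 (a : ℝ) (ha : 0 < a) (φ p q : ℝ → ℝ)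
    (hφ : ∀ x, HasDerivAt φ (p x) x)
    (hDq : ∀ x, HasDerivAt (fun y => p y * y) (q x) x)
    (hqc : Continuous q)
    (hlow : ∀ x, a ≤ x → x ≤ |p x * x|)
    (hup : ∀ x, a ≤ x → |q x| * x ≤ 9 / 2 * |p x * x|) :
    ∃ L : ℂ,
      Tendsto (fun C : ℝ => ∫ lam in a..C, Complex.exp (Complex.I * (φ lam : ℂ)) / lam)
        atTop (nhds L) ∧ ‖L‖ ≤ 11 / 2 / a := by
  set Dr : ℝ → ℝ := fun x => p x * x with hDrdef
  have hDc : Continuous Dr := continuous_iff_continuousAt.2 fun x => (hDq x).continuousAt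
  have hφc : Continuous φ := continuous_iff_continuousAt.2 fun x => (hφ x).continuousAt
  have hxpos : ∀ x, a ≤ x → 0 < x := fun x hx => ha.trans_le hx
  have habs : ∀ x, a ≤ x → 0 < |Dr x| := fun x hx => (hxpos x hx).trans_le (hlow x hx)
  have hDne : ∀ x, a ≤ x → Dr x ≠ 0 := fun x hx => abs_pos.1 (habs x hx)
  set F : ℝ → ℂ := fun x => Complex.exp (I * φ x) / (I * (Dr x : ℂ)) with hF
  set G : ℝ → ℂ := fun x => Complex.exp (I * φ x) * I * q x / ((Dr x : ℂ)) ^ 2 with hG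
  have hnormexp : ∀ x : ℝ, ‖Complex.exp (I * (x : ℂ))‖ = 1 := by
    intro x
    simp [Complex.norm_exp]
  have hnormF : ∀ x, ‖F x‖ = 1 / |Dr x| := by
    intro x
    simp only [hF, norm_div, norm_mul, hnormexp, Complex.norm_I,
      Complex.norm_real, Real.norm_eq_abs, one_mul]
  have hnormG : ∀ x, a ≤ x → ‖G x‖ ≤ 9 / 2 * x ^ (-2 : ℝ) := by
    intro x hx
    have hxp := hxpos x hx
    have h1 : ‖G x‖ = |q x| / |Dr x| ^ 2 := by
      simp only [hG, norm_div, norm_mul, hnormexp, Complex.norm_I,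
        Complex.norm_real, Real.norm_eq_abs, one_mul, norm_pow, map_pow]
    have h2 : x ^ (-2 : ℝ) = (x ^ 2)⁻¹ := by
      rw [Real.rpow_neg hxp.le, Real.rpow_two]
    have h3 : (9 : ℝ) / 2 * (x ^ 2)⁻¹ = 9 / 2 / x ^ 2 := by ring
    rw [h1, h2, h3, div_le_div_iff₀ (pow_pos (habs x hx) 2) (by positivity)]
    have hu := hup x hx
    have hl := hlow x hx
    have hq0 : 0 ≤ |q x| := abs_nonneg _
    nlinarith [habs x hx, sq_nonneg (|Dr x| - x)]
  -- derivative of F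
  have hFderiv : ∀ x, a ≤ x → HasDerivAt F (Complex.exp (I * φ x) / x + G x) x := by
    intro x hx
    have hu : HasDerivAt (fun y => Complex.exp (I * (φ y : ℂ)))
        (Complex.exp (I * (φ x : ℂ)) * (I * p x)) x := (((hφ x).ofReal_comp).const_mul I).cexp
    have hv : HasDerivAt (fun y => I * ((Dr y : ℝ) : ℂ)) (I * q x) x :=
      ((hDq x).ofReal_comp).const_mul I
    have hvne : I * ((Dr x : ℝ) : ℂ) ≠ 0 :=
      mul_ne_zero I_ne_zero (ofReal_ne_zero.2 (hDne x hx))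
    have hder := hu.div hv hvne
    have hx0 : (x : ℂ) ≠ 0 := ofReal_ne_zero.2 (hxpos x hx).ne'
    have hpre : p x ≠ 0 := fun h => hDne x hx (by simp [hDrdef, h])
    have hp0 : (p x : ℂ) ≠ 0 := ofReal_ne_zero.2 hpre
    have hcast : ((Dr x : ℝ) : ℂ) = (p x : ℂ) * (x : ℂ) := by
      simp [hDrdef]
    refine HasDerivAt.congr_deriv hder (Eq.symm ?_)
    rw [hG, hF] at *
    simp only [hcast]
    exact key_id _ _ _ _ hx0 hp0
  -- FTC on [a, C]
  have hcont1 : ContinuousOn (fun lam : ℝ => Complex.exp (I * (φ lam : ℂ)) / (lam : ℂ)) (Ici a) := by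
    apply ContinuousOn.div
    · exact (Complex.continuous_exp.comp ((continuous_const.mul (continuous_ofReal.comp hφc)))).continuousOn
    · exact continuous_ofReal.continuousOn
    · exact fun x hx => ofReal_ne_zero.2 (hxpos x hx).ne'
  have hcont2 : ContinuousOn G (Ici a) := by
    apply ContinuousOn.div
    · exact (((Complex.continuous_exp.comp ((continuous_const.mul (continuous_ofReal.comp hφc)))).mul
        continuous_const).mul (continuous_ofReal.comp hqc)).continuousOn
    · exact ((continuous_ofReal.comp hDc).pow 2).continuousOn
    · exact fun x hx => pow_ne_zero 2 (ofReal_ne_zero.2 (hDne x hx))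
  have key : ∀ C, a ≤ C →
      (∫ lam in a..C, Complex.exp (I * (φ lam : ℂ)) / lam)
        = (F C - F a) - ∫ lam in a..C, G lam := by
    intro C hC
    have huIcc : uIcc a C = Icc a C := uIcc_of_le hC
    have hsub : Icc a C ⊆ Ici a := Icc_subset_Ici_self
    have hint1 : IntervalIntegrable (fun lam : ℝ => Complex.exp (I * (φ lam : ℂ)) / (lam : ℂ))
        volume a C := ((hcont1.mono hsub).mono (le_of_eq huIcc)).intervalIntegrable
    have hint2 : IntervalIntegrable G volume a C :=
      ((hcont2.mono hsub).mono (le_of_eq huIcc)).intervalIntegrable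
    have hftc := intervalIntegral.integral_eq_sub_of_hasDerivAt
      (f := F) (f' := fun x => Complex.exp (I * (φ x : ℂ)) / x + G x)
      (fun x hx => hFderiv x (by rw [huIcc] at hx; exact hx.1)) (hint1.add hint2)
    rw [intervalIntegral.integral_add hint1 hint2] at hftc
    linear_combination hftc
  -- integrability of G on Ioi a
  have hGmeas : AEStronglyMeasurable G (volume.restrict (Ioi a)) :=
    (hcont2.mono Ioi_subset_Ici_self).aestronglyMeasurable measurableSet_Ioi
  have hmaj : IntegrableOn (fun x : ℝ => 9 / 2 * x ^ (-2 : ℝ)) (Ioi a) :=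
    (integrableOn_Ioi_rpow_of_lt (by norm_num) ha).const_mul _
  have hGae : ∀ᵐ x ∂volume.restrict (Ioi a), ‖G x‖ ≤ 9 / 2 * x ^ (-2 : ℝ) :=
    (ae_restrict_iff' measurableSet_Ioi).2 (Filter.Eventually.of_forall fun x hx => hnormG x hx.le)
  have hGint : IntegrableOn G (Ioi a) := Integrable.mono' hmaj hGmeas hGae
  have h2 : Tendsto (fun C : ℝ => ∫ x in a..C, G x) atTop (nhds (∫ x in Ioi a, G x)) :=
    intervalIntegral_tendsto_integral_Ioi a hGint tendsto_id
  have h1 : Tendsto F atTop (nhds 0) := by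
    refine squeeze_zero_norm' ?_ tendsto_inv_atTop_zero
    filter_upwards [eventually_ge_atTop a] with C hC
    rw [hnormF C, one_div]
    exact inv_anti₀ (hxpos C hC) (hlow C hC)
  refine ⟨-F a - ∫ x in Ioi a, G x, ?_, ?_⟩
  · apply Tendsto.congr' (Filter.eventually_ge_atTop a |>.mono fun C hC => (key C hC).symm)
    have := (h1.sub_const (F a)).sub h2
    simpa using this
  · have hFa : ‖F a‖ ≤ 1 / a := by
      rw [hnormF a]
      exact one_div_le_one_div_of_le ha (hlow a le_rfl)
    have hIntBound : ‖∫ x in Ioi a, G x‖ ≤ 9 / 2 * a⁻¹ := by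
      have h3 : ‖∫ x in Ioi a, G x‖ ≤ ∫ x in Ioi a, 9 / 2 * x ^ (-2 : ℝ) :=
        norm_integral_le_of_norm_le hmaj hGae
      have h4 : (∫ x in Ioi a, 9 / 2 * x ^ (-2 : ℝ)) = 9 / 2 * a⁻¹ := by
        rw [MeasureTheory.integral_const_mul, integral_Ioi_rpow_of_lt (by norm_num) ha]
        norm_num
        rw [Real.rpow_neg_one]
      linarith [h3, h4.le, h4.ge]
    calc ‖-F a - ∫ x in Ioi a, G x‖ ≤ ‖F a‖ + ‖∫ x in Ioi a, G x‖ := by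
          simpa using norm_sub_le (-F a) _
      _ ≤ 1 / a + 9 / 2 * a⁻¹ := add_le_add hFa hIntBound
      _ = 11 / 2 / a := by field_simp; ring

lemma contInt (ψ : ℝ → ℝ) (hψ : Continuous ψ) (a C : ℝ) (ha : 0 < a) (hC : a ≤ C) :
    IntervalIntegrable (fun lam : ℝ => Complex.exp (Complex.I * (ψ lam : ℂ)) / lam) volume a C := by
  apply ContinuousOn.intervalIntegrable
  rw [uIcc_of_le hC]
  apply ContinuousOn.div
  · exact (Complex.continuous_exp.comp (continuous_const.mul (continuous_ofReal.comp hψ))).continuousOn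
  · exact continuous_ofReal.continuousOn
  · exact fun x hx => ofReal_ne_zero.2 (ne_of_gt (lt_of_lt_of_le ha hx.1))

lemma exj (t : ℝ) (ht : t ≠ 0) : ∃ L : ℂ,
    Tendsto (fun C : ℝ =>
        ∫ lam in (1 / Real.sqrt |t|)..C,
          Complex.exp (Complex.I * lam)
            * (1 - Complex.exp (Complex.I * (lam : ℂ) ^ 3 * t)) / lam)
      atTop (nhds L) ∧ ‖L‖ ≤ 11 * Real.sqrt |t| := by
  have habs : 0 < |t| := abs_pos.2 ht
  have hst : 0 < Real.sqrt |t| := Real.sqrt_pos.2 habs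
  set a : ℝ := 1 / Real.sqrt |t| with hadef
  have ha : 0 < a := by positivity
  have hinv : 1 / a = Real.sqrt |t| := by rw [hadef, one_div_one_div]
  have hkey : ∀ x : ℝ, a ≤ x → 1 ≤ |t| * x ^ 2 := by
    intro x hx
    have hx0 : 0 < x := ha.trans_le hx
    have h1 : a ^ 2 ≤ x ^ 2 := pow_le_pow_left₀ ha.le hx 2
    have h2 : a ^ 2 = 1 / |t| := by
      rw [hadef, div_pow, one_pow, Real.sq_sqrt (abs_nonneg t)]
    rw [h2] at h1
    have h3 : |t| * (1 / |t|) ≤ |t| * x ^ 2 := mul_le_mul_of_nonneg_left h1 habs.le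
    rwa [mul_one_div_cancel habs.ne'] at h3
  obtain ⟨L1, hL1, hB1⟩ := osc_s19 a ha (fun x => x) (fun _ => 1) (fun _ => 1)
    (fun x => hasDerivAt_id x)
    (fun x => by simpa using hasDerivAt_id' x)
    continuous_const
    (fun x hx => by simpa using le_abs_self x)
    (fun x hx => by
      have h0 : 0 < x := ha.trans_le hx
      simp only [abs_one, one_mul]
      rw [abs_of_pos h0]
      linarith)
  obtain ⟨L2, hL2, hB2⟩ := osc_s19 a ha (fun x => x + t * x ^ 3)
    (fun x => 1 + 3 * t * x ^ 2) (fun x => 1 + 9 * t * x ^ 2)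
    (fun x => by
      have h1 := (hasDerivAt_id x).add ((hasDerivAt_pow 3 x).const_mul t)
      refine h1.congr_deriv ?_
      push_cast
      ring)
    (fun x => by
      have h1 := ((((hasDerivAt_pow 2 x).const_mul (3 * t)).const_add 1).mul (hasDerivAt_id x))
      refine h1.congr_deriv ?_
      simp only [id_eq]
      ring)
    (by continuity)
    (fun x hx => by
      have hx0 : 0 < x := ha.trans_le hx
      have hk := hkey x hx
      show x ≤ |(1 + 3 * t * x ^ 2) * x|
      rw [abs_mul, abs_of_pos hx0]
      have h1 : 1 ≤ |1 + 3 * t * x ^ 2| := by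
        rcases lt_or_gt_of_ne ht with hneg | hpos
        · rw [abs_of_neg hneg] at hk
          rw [abs_of_neg (show 1 + 3 * t * x ^ 2 < 0 by nlinarith)]
          nlinarith
        · rw [abs_of_pos hpos] at hk
          rw [abs_of_pos (show (0:ℝ) < 1 + 3 * t * x ^ 2 by nlinarith)]
          nlinarith
      nlinarith)
    (fun x hx => by
      have hx0 : 0 < x := ha.trans_le hx
      have hk := hkey x hx
      show |1 + 9 * t * x ^ 2| * x ≤ 9 / 2 * |(1 + 3 * t * x ^ 2) * x|
      rw [abs_mul (1 + 3 * t * x ^ 2) x, abs_of_pos hx0]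
      have h9 : |1 + 9 * t * x ^ 2| ≤ 9 / 2 * |1 + 3 * t * x ^ 2| := by
        rcases lt_or_gt_of_ne ht with hneg | hpos
        · have hts : |t| = -t := abs_of_neg hneg
          rw [hts] at hk
          have e1 : |1 + 9 * t * x ^ 2| = -(1 + 9 * t * x ^ 2) := abs_of_neg (by nlinarith)
          have e2 : |1 + 3 * t * x ^ 2| = -(1 + 3 * t * x ^ 2) := abs_of_neg (by nlinarith)
          rw [e1, e2]; nlinarith
        · have hts : |t| = t := abs_of_pos hpos
          rw [hts] at hk
          have e1 : |1 + 9 * t * x ^ 2| = 1 + 9 * t * x ^ 2 := abs_of_pos (by nlinarith)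
          have e2 : |1 + 3 * t * x ^ 2| = 1 + 3 * t * x ^ 2 := abs_of_pos (by nlinarith)
          rw [e1, e2]; nlinarith
      nlinarith [abs_nonneg (1 + 9 * t * x ^ 2), abs_nonneg (1 + 3 * t * x ^ 2)])
  refine ⟨L1 - L2, ?_, ?_⟩
  · apply Tendsto.congr' ?_ (hL1.sub hL2)
    filter_upwards [eventually_ge_atTop a] with C hC
    have hpt : ∀ lam : ℝ,
        Complex.exp (Complex.I * ((lam : ℝ) : ℂ)) / (lam : ℂ)
          - Complex.exp (Complex.I * ((lam + t * lam ^ 3 : ℝ) : ℂ)) / (lam : ℂ)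
        = Complex.exp (Complex.I * lam)
            * (1 - Complex.exp (Complex.I * (lam : ℂ) ^ 3 * t)) / lam := by
      intro lam
      rw [mul_sub, mul_one, ← Complex.exp_add, sub_div]
      congr 3
      push_cast
      ring
    have hi1 := contInt (fun x => x) continuous_id a C ha hC
    have hi2 := contInt (fun x => x + t * x ^ 3) (by continuity) a C ha hC
    rw [← intervalIntegral.integral_sub hi1 hi2]
    exact intervalIntegral.integral_congr fun lam _ => by simpa using hpt lam
  · calc ‖L1 - L2‖ ≤ ‖L1‖ + ‖L2‖ := norm_sub_le _ _
      _ ≤ 11 / 2 / a + 11 / 2 / a := add_le_add hB1 hB2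
      _ = 11 * (1 / a) := by ring
      _ = 11 * Real.sqrt |t| := by rw [hinv]


/-- for each real `t ≠ 0` the improper integral
`J(t) = lim_{C→∞} ∫_{1/√|t|}^{C} e^{iλ}(1 − e^{iλ³t}) λ⁻¹ dλ` exists, and `J(t) → 0`
as `t → 0` through nonzero real values. -/
theorem stmt_19 :
    ∃ J : ℝ → ℂ,
      (∀ t : ℝ, t ≠ 0 →
        Tendsto (fun C : ℝ =>
            ∫ lam in (1 / Real.sqrt |t|)..C,
              Complex.exp (Complex.I * lam)
                * (1 - Complex.exp (Complex.I * (lam : ℂ) ^ 3 * t)) / lam)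
          atTop (nhds (J t))) ∧
      Tendsto J (nhdsWithin 0 {t : ℝ | t ≠ 0}) (nhds 0) := by
  refine ⟨fun t => if h : t ≠ 0 then (exj t h).choose else 0, fun t ht => ?_, ?_⟩
  · simpa [ht] using (exj t ht).choose_spec.1
  · refine squeeze_zero_norm' (a := fun t : ℝ => 11 * Real.sqrt |t|) ?_ ?_
    · filter_upwards [self_mem_nhdsWithin] with t ht
      have ht' : t ≠ 0 := ht
      simpa [ht'] using (exj t ht).choose_spec.2
    · have hc : Continuous fun t : ℝ => 11 * Real.sqrt |t| := by continuity
      have := hc.tendsto 0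
      simp only [abs_zero, Real.sqrt_zero, mul_zero] at this
      exact this.mono_left nhdsWithin_le_nhds
end
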